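/- arXiv:2303.01246 — 11 statements merged into one kernel-verified Lean document; each statement's English description precedes it below -/
import Mathlib

section
/- Let G = (A ∪ B, E) be a bipartite graph with |A| = |B| = 2m+1 and minimum degree at least m, where m ≥ 1. Then for every subset A₁ ⊆ A with |N(A₁)| < |A₁| (i.e., violating Hall's condition), it must hold that |A₁| = m+1 and |N(A₁)| = m, and moreover setting B₁ = N(A₁), A₂ = A \ A₁, B₂ = B \ B₁, the bipartite graph induced between A₁ and B₂ is empty and the bipartite graphs induced between A₁ and B₁ and between A₂ and B₂ are complete bipartite graphs K_{m+1,m} and K_{m,m+1} respectively. -/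
open Finset

/-- Lemma on near-violations of Hall's condition in a bipartite graph with parts
of size `2m+1` and minimum degree `m`: any violating set `A₁` has `|A₁| = m+1`,
`|N(A₁)| = m`, the graph between `A₁` and `B₂ = B \ N(A₁)` is empty, and the
graphs between `A₁, N(A₁)` and between `A \ A₁, B₂` are complete bipartite. -/
theorem stmt1 {α β : Type*} [Fintype α] [Fintype β] [DecidableEq α] [DecidableEq β]
    (m : ℕ) (hm : 1 ≤ m) (E : α → β → Prop) [∀ a b, Decidable (E a b)]
    (hA : Fintype.card α = 2 * m + 1) (hB : Fintype.card β = 2 * m + 1)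
    (hdegA : ∀ a : α, m ≤ (univ.filter (fun b => E a b)).card)
    (hdegB : ∀ b : β, m ≤ (univ.filter (fun a => E a b)).card)
    (A₁ : Finset α)
    (hviol : (univ.filter (fun b => ∃ a ∈ A₁, E a b)).card < A₁.card) :
    A₁.card = m + 1 ∧
    (univ.filter (fun b => ∃ a ∈ A₁, E a b)).card = m ∧
    (∀ a ∈ A₁, ∀ b ∉ univ.filter (fun b => ∃ a ∈ A₁, E a b), ¬ E a b) ∧
    (∀ a ∈ A₁, ∀ b ∈ univ.filter (fun b => ∃ a ∈ A₁, E a b), E a b) ∧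
    (∀ a ∉ A₁, ∀ b ∉ univ.filter (fun b => ∃ a ∈ A₁, E a b), E a b) := by
  set N := univ.filter (fun b => ∃ a ∈ A₁, E a b) with hN
  -- A₁ is nonempty
  obtain ⟨a₀, ha₀⟩ : A₁.Nonempty := card_pos.mp (lt_of_le_of_lt (Nat.zero_le _) hviol)
  -- neighborhoods of vertices in A₁ are inside N
  have hsubN : ∀ a ∈ A₁, univ.filter (fun b => E a b) ⊆ N := by
    intro a ha b hb
    simp only [hN, mem_filter, mem_univ, true_and] at hb ⊢
    exact ⟨a, ha, hb⟩
  have hNge : m ≤ N.card := le_trans (hdegA a₀) (card_le_card (hsubN a₀ ha₀))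
  -- N ≠ univ, pick b₀ outside N
  have hNlt : N.card < Fintype.card β := by
    have : A₁.card ≤ Fintype.card α := card_le_card (subset_univ _)
    omega
  obtain ⟨b₀, hb₀⟩ : (univ \ N).Nonempty := by
    rw [← card_pos, card_sdiff_of_subset (subset_univ _), card_univ]; omega
  have hb₀N : b₀ ∉ N := (mem_sdiff.mp hb₀).2
  -- neighborhoods of vertices outside N are inside A \ A₁
  have hsubA : ∀ b ∉ N, univ.filter (fun a => E a b) ⊆ univ \ A₁ := by
    intro b hb a ha
    simp only [mem_filter, mem_univ, true_and] at ha
    simp only [mem_sdiff, mem_univ, true_and]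
    intro haA₁
    exact hb (by simp only [hN, mem_filter, mem_univ, true_and]; exact ⟨a, haA₁, ha⟩)
  have hcompl : (univ \ A₁).card = Fintype.card α - A₁.card := by
    rw [card_sdiff_of_subset (subset_univ _), card_univ]
  have hA₂ : m ≤ (univ \ A₁).card :=
    le_trans (hdegB b₀) (card_le_card (hsubA b₀ hb₀N))
  have hA₁le : A₁.card ≤ m + 1 := by
    have : A₁.card ≤ Fintype.card α := card_le_card (subset_univ _)
    omega
  have hA₁card : A₁.card = m + 1 := by omega
  have hNcard : N.card = m := by omega
  refine ⟨hA₁card, hNcard, ?_, ?_, ?_⟩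
  · intro a ha b hb hE
    exact hb (by simp only [hN, mem_filter, mem_univ, true_and]; exact ⟨a, ha, hE⟩)
  · intro a ha b hb
    have heq : univ.filter (fun b => E a b) = N :=
      eq_of_subset_of_card_le (hsubN a ha) (by have := hdegA a; omega)
    have := heq ▸ hb
    simpa using this
  · intro a ha b hb
    have heq : univ.filter (fun a => E a b) = univ \ A₁ :=
      eq_of_subset_of_card_le (hsubA b hb) (by have := hdegB b; omega)
    have : a ∈ univ \ A₁ := by simp [ha]
    rw [← heq] at this
    simpa using this
end

section
/- Let G = (A ∪ B, E) be a bipartite graph with |A| = |B| = 2m and minimum degree at least m−1, for some m ≥ 2. If A₁ ⊆ A satisfies |N(A₁)| < |A₁| then (|A₁|, |N(A₁)|) is one of (m, m−1), (m+1, m−1), or (m+1, m). In each case, letting B₁ = N(A₁), A₂ = A \ A₁, B₂ = B \ B₁, the bipartite graph induced between A₁ and B₂ is empty. -/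
open Finset

/-- Lemma on Hall-condition violations in a bipartite graph with parts of size
`2m` and minimum degree `m-1`: any violating set `A₁` has
`(|A₁|, |N(A₁)|) ∈ {(m, m-1), (m+1, m-1), (m+1, m)}`, and the graph between
`A₁` and `B \ N(A₁)` is empty. -/
theorem stmt2 {α β : Type*} [Fintype α] [Fintype β] [DecidableEq α] [DecidableEq β]
    (m : ℕ) (hm : 2 ≤ m) (E : α → β → Prop) [∀ a b, Decidable (E a b)]
    (hA : Fintype.card α = 2 * m) (hB : Fintype.card β = 2 * m)
    (hdegA : ∀ a : α, m - 1 ≤ (univ.filter (fun b => E a b)).card)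
    (hdegB : ∀ b : β, m - 1 ≤ (univ.filter (fun a => E a b)).card)
    (A₁ : Finset α)
    (hviol : (univ.filter (fun b => ∃ a ∈ A₁, E a b)).card < A₁.card) :
    ((A₁.card = m ∧ (univ.filter (fun b => ∃ a ∈ A₁, E a b)).card = m - 1) ∨
     (A₁.card = m + 1 ∧ (univ.filter (fun b => ∃ a ∈ A₁, E a b)).card = m - 1) ∨
     (A₁.card = m + 1 ∧ (univ.filter (fun b => ∃ a ∈ A₁, E a b)).card = m)) ∧
    (∀ a ∈ A₁, ∀ b ∉ univ.filter (fun b => ∃ a ∈ A₁, E a b), ¬ E a b) := by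
  set N := univ.filter (fun b => ∃ a ∈ A₁, E a b) with hN
  have hempty : ∀ a ∈ A₁, ∀ b ∉ N, ¬ E a b := by
    intro a ha b hb hE
    exact hb (mem_filter.mpr ⟨mem_univ b, a, ha, hE⟩)
  refine ⟨?_, hempty⟩
  -- A₁ is nonempty
  obtain ⟨a₀, ha₀⟩ : A₁.Nonempty := card_pos.mp (Nat.pos_of_ne_zero (by omega))
  -- N has at least m - 1 elements
  have hNlb : m - 1 ≤ N.card := by
    refine le_trans (hdegA a₀) (card_le_card ?_)
    intro b hb
    rw [mem_filter] at hb
    exact mem_filter.mpr ⟨mem_univ b, a₀, ha₀, hb.2⟩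
  -- |A₁| ≤ 2m
  have hA1ub : A₁.card ≤ 2 * m := by
    simpa [hA] using card_le_univ A₁
  -- there is a vertex outside N
  have hNlt : N.card < Fintype.card β := by
    rw [hB]; exact lt_of_lt_of_le hviol hA1ub
  obtain ⟨b₀, hb₀⟩ : ∃ b, b ∉ N := by
    by_contra h
    push_neg at h
    have : N = univ := eq_univ_iff_forall.mpr h
    rw [this, card_univ] at hNlt
    exact lt_irrefl _ hNlt
  -- neighbors of b₀ avoid A₁
  have hsub : univ.filter (fun a => E a b₀) ⊆ univ \ A₁ := by
    intro a ha
    rw [mem_filter] at ha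
    refine mem_sdiff.mpr ⟨mem_univ a, fun haA => ?_⟩
    exact hempty a haA b₀ hb₀ ha.2
  have hdb : m - 1 ≤ 2 * m - A₁.card := by
    calc m - 1 ≤ (univ.filter (fun a => E a b₀)).card := hdegB b₀
    _ ≤ (univ \ A₁).card := card_le_card hsub
    _ = 2 * m - A₁.card := by rw [card_sdiff_of_subset (subset_univ A₁), card_univ, hA]
  omega
end

section
/- Let m ≥ 3 and let G = (A ∪ B, E) be a bipartite graph with |A| = |B| = 2m and minimum degree at least m. Suppose there are partitions A = A₁ ∪ A₂ and B = B₁ ∪ B₂ with |A₁| = m, |B₁| = m−1, such that the induced bipartite graph between A₁ and B₁ is complete (isomorphic to K_{m,m−1}), and the induced bipartite graph between A₁ and B₂ is a matching of size m together with one isolated vertex of B₂. Then for any matching M in G containing at most m−2 edges between A₁ and B₂, the graph G − M satisfies Hall's condition for B (i.e., |N_{G−M}(B')| ≥ |B'| for every B' ⊆ B), and hence G − M has a perfect matching. -/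
open Finset

/-- Bipartite graph with parts of size `2m` (`m ≥ 3`) and minimum degree `m`,
with `G[A₁,B₁] ≅ K_{m,m-1}` complete and `G[A₁,B₂]` a matching of size `m`
plus an isolated vertex of `B₂`. Removing any matching `M` with at most `m-2`
edges between `A₁` and `B₂` leaves a graph satisfying Hall's condition for `B`,
and hence having a perfect matching. -/
theorem stmt3 {α β : Type*} [Fintype α] [Fintype β] [DecidableEq α] [DecidableEq β]
    (m : ℕ) (hm : 3 ≤ m) (E : α → β → Prop) [∀ a b, Decidable (E a b)]
    (hA : Fintype.card α = 2 * m) (hB : Fintype.card β = 2 * m)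
    (hdegA : ∀ a : α, m ≤ (univ.filter (fun b => E a b)).card)
    (hdegB : ∀ b : β, m ≤ (univ.filter (fun a => E a b)).card)
    (A₁ : Finset α) (B₁ : Finset β)
    (hA₁ : A₁.card = m) (hB₁ : B₁.card = m - 1)
    (hcomplete : ∀ a ∈ A₁, ∀ b ∈ B₁, E a b)
    -- the edges between `A₁` and `B₂ = B \ B₁` form a matching `a ↦ f a` of size `m`
    (f : α → β) (hf_maps : ∀ a ∈ A₁, f a ∉ B₁) (hf_inj : Set.InjOn f ↑A₁)
    (hf_match : ∀ a ∈ A₁, ∀ b ∉ B₁, (E a b ↔ b = f a))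
    (M : Finset (α × β)) (hME : ∀ p ∈ M, E p.1 p.2)
    (hMdisj : ∀ p ∈ M, ∀ q ∈ M, p ≠ q → p.1 ≠ q.1 ∧ p.2 ≠ q.2)
    (hMsize : (M.filter (fun p => p.1 ∈ A₁ ∧ p.2 ∉ B₁)).card ≤ m - 2) :
    (∀ B' : Finset β,
        B'.card ≤ (univ.filter (fun a => ∃ b ∈ B', E a b ∧ (a, b) ∉ M)).card) ∧
    ∃ g : β → α, Function.Bijective g ∧ ∀ b : β, E (g b) b ∧ (g b, b) ∉ M := by
  -- matching facts
  have matchA : ∀ a b b', (a, b) ∈ M → (a, b') ∈ M → b = b' := by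
    intro a b b' h h'
    by_contra hne
    exact (hMdisj _ h _ h' (by simp [hne])).1 rfl
  have matchB : ∀ a a' b, (a, b) ∈ M → (a', b) ∈ M → a = a' := by
    intro a a' b h h'
    by_contra hne
    exact (hMdisj _ h _ h' (by simp [hne])).2 rfl
  -- at most one A₁-neighbour for each b ∉ B₁
  have hA1nb : ∀ b ∉ B₁, (univ.filter (fun a => a ∈ A₁ ∧ E a b)).card ≤ 1 := by
    intro b hb
    refine card_le_one.mpr ?_
    intro x hx y hy
    simp only [mem_filter, mem_univ, true_and] at hx hy
    have hx2 := (hf_match x hx.1 b hb).mp hx.2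
    have hy2 := (hf_match y hy.1 b hb).mp hy.2
    exact hf_inj hx.1 hy.1 (by rw [← hx2, ← hy2])
  -- each b∉B₁ has at least m-1 neighbours outside A₁
  have hA2nb : ∀ b ∉ B₁, m ≤ (univ.filter (fun a => a ∉ A₁ ∧ E a b)).card + 1 := by
    intro b hb
    have hsub : univ.filter (fun a => E a b) ⊆
        univ.filter (fun a => a ∉ A₁ ∧ E a b) ∪ univ.filter (fun a => a ∈ A₁ ∧ E a b) := by
      intro a ha
      simp only [mem_filter, mem_univ, true_and, mem_union] at *
      tauto
    calc m ≤ (univ.filter (fun a => E a b)).card := hdegB b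
      _ ≤ _ := card_le_card hsub
      _ ≤ _ + _ := card_union_le _ _
      _ ≤ _ + 1 := by have := hA1nb b hb; omega
  have hcardα : (univ : Finset α).card = 2 * m := by rw [card_univ, hA]
  have hcardβ : (univ : Finset β).card = 2 * m := by rw [card_univ, hB]
  have hA2card : (univ.filter (fun a => a ∉ A₁)).card = m := by
    have h1 : (univ.filter (fun a => a ∈ A₁)).card + (univ.filter (fun a => a ∉ A₁)).card
        = 2 * m := by rw [card_filter_add_card_filter_not, hcardα]
    have h2 : univ.filter (fun a => a ∈ A₁) = A₁ := by ext a; simp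
    rw [h2, hA₁] at h1
    omega
  have hB2card : (univ.filter (fun b => b ∉ B₁)).card = m + 1 := by
    have h1 : (univ.filter (fun b => b ∈ B₁)).card + (univ.filter (fun b => b ∉ B₁)).card
        = 2 * m := by rw [card_filter_add_card_filter_not, hcardβ]
    have h2 : univ.filter (fun b => b ∈ B₁) = B₁ := by ext b; simp
    rw [h2, hB₁] at h1
    omega
  -- degrees in G - M
  have degGMb : ∀ b : β, m ≤ (univ.filter (fun a => E a b ∧ (a, b) ∉ M)).card + 1 := by
    intro b
    have hsub : univ.filter (fun a => E a b) ⊆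
        univ.filter (fun a => E a b ∧ (a, b) ∉ M) ∪ univ.filter (fun a => (a, b) ∈ M) := by
      intro a ha
      simp only [mem_filter, mem_univ, true_and, mem_union] at *
      tauto
    have h1 : (univ.filter (fun a => (a, b) ∈ M)).card ≤ 1 := by
      refine card_le_one.mpr ?_
      intro x hx y hy
      simp only [mem_filter, mem_univ, true_and] at hx hy
      exact matchB x y b hx hy
    calc m ≤ (univ.filter (fun a => E a b)).card := hdegB b
      _ ≤ _ := card_le_card hsub
      _ ≤ _ + _ := card_union_le _ _
      _ ≤ _ + 1 := by omega
  have degGMa : ∀ a : α, m ≤ (univ.filter (fun b => E a b ∧ (a, b) ∉ M)).card + 1 := by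
    intro a
    have hsub : univ.filter (fun b => E a b) ⊆
        univ.filter (fun b => E a b ∧ (a, b) ∉ M) ∪ univ.filter (fun b => (a, b) ∈ M) := by
      intro b hb
      simp only [mem_filter, mem_univ, true_and, mem_union] at *
      tauto
    have h1 : (univ.filter (fun b => (a, b) ∈ M)).card ≤ 1 := by
      refine card_le_one.mpr ?_
      intro x hx y hy
      simp only [mem_filter, mem_univ, true_and] at hx hy
      exact matchA a x y hx hy
    calc m ≤ (univ.filter (fun b => E a b)).card := hdegA a
      _ ≤ _ := card_le_card hsub
      _ ≤ _ + _ := card_union_le _ _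
      _ ≤ _ + 1 := by omega
  have hall : ∀ B' : Finset β,
      B'.card ≤ (univ.filter (fun a => ∃ b ∈ B', E a b ∧ (a, b) ∉ M)).card := by
    intro B'
    set N := univ.filter (fun a => ∃ b ∈ B', E a b ∧ (a, b) ∉ M) with hN
    have hcardB' : B'.card ≤ 2 * m := by
      calc B'.card ≤ (univ : Finset β).card := card_le_univ _
        _ = 2 * m := hcardβ
    rcases Nat.lt_or_ge B'.card m with hsmall | hge
    · -- small case: B'.card ≤ m - 1
      rcases B'.eq_empty_or_nonempty with rfl | ⟨b, hb⟩
      · simp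
      · have hsub : univ.filter (fun a => E a b ∧ (a, b) ∉ M) ⊆ N := by
          intro a ha
          simp only [hN, mem_filter, mem_univ, true_and] at *
          exact ⟨b, hb, ha⟩
        have := degGMb b
        have := card_le_card hsub
        omega
    rcases Nat.lt_or_ge B'.card (m + 2) with hmid | hlarge
    · -- middle case: m ≤ B'.card ≤ m + 1
      set B₁' := B'.filter (fun b => b ∈ B₁) with hB₁'
      set B₂' := B'.filter (fun b => b ∉ B₁) with hB₂'
      have htk : B₁'.card + B₂'.card = B'.card := card_filter_add_card_filter_not (fun b => b ∈ B₁)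
      have ht : B₁'.card ≤ m - 1 := by
        rw [← hB₁]
        exact card_le_card (fun b hb => (mem_filter.mp hb).2)
      have hk1 : 1 ≤ B₂'.card := by omega
      set NA₁ := univ.filter (fun a => a ∈ A₁ ∧ ∃ b ∈ B', E a b ∧ (a, b) ∉ M) with hNA₁
      set NA₂ := univ.filter (fun a => a ∉ A₁ ∧ ∃ b ∈ B', E a b ∧ (a, b) ∉ M) with hNA₂
      have hsplit : NA₁.card + NA₂.card ≤ N.card := by
        have hu : NA₁ ∪ NA₂ ⊆ N := by
          intro a ha
          simp only [hN, hNA₁, hNA₂, mem_union, mem_filter, mem_univ, true_and] at *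
          tauto
        have hdisj : Disjoint NA₁ NA₂ := by
          rw [disjoint_left]
          intro a h1 h2
          simp only [hNA₁, hNA₂, mem_filter] at h1 h2
          exact h2.2.1 h1.2.1
        calc NA₁.card + NA₂.card = (NA₁ ∪ NA₂).card := (card_union_of_disjoint hdisj).symm
          _ ≤ N.card := card_le_card hu
      -- L1 : NA₂ ≥ m - 2 (any b ∈ B₂')
      obtain ⟨b₀, hb₀⟩ := card_pos.mp (by omega : 0 < B₂'.card)
      have hb₀' : b₀ ∈ B' ∧ b₀ ∉ B₁ := mem_filter.mp hb₀
      have hNA₂1 : m ≤ NA₂.card + 2 := by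
        have hsub : univ.filter (fun a => E a b₀) ⊆
            NA₂ ∪ univ.filter (fun a => a ∈ A₁ ∧ E a b₀) ∪ univ.filter (fun a => (a, b₀) ∈ M) := by
          intro a ha
          simp only [hNA₂, mem_filter, mem_univ, true_and, mem_union] at *
          by_cases h1 : (a, b₀) ∈ M
          · tauto
          by_cases h2 : a ∈ A₁
          · tauto
          · exact Or.inl (Or.inl ⟨h2, b₀, hb₀'.1, ha, h1⟩)
        have h1 : (univ.filter (fun a => (a, b₀) ∈ M)).card ≤ 1 := by
          refine card_le_one.mpr ?_
          intro x hx y hy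
          simp only [mem_filter, mem_univ, true_and] at hx hy
          exact matchB x y b₀ hx hy
        have h2 := hA1nb b₀ hb₀'.2
        calc m ≤ (univ.filter (fun a => E a b₀)).card := hdegB b₀
          _ ≤ _ := card_le_card hsub
          _ ≤ (NA₂ ∪ univ.filter (fun a => a ∈ A₁ ∧ E a b₀)).card
              + (univ.filter (fun a => (a, b₀) ∈ M)).card := card_union_le _ _
          _ ≤ NA₂.card + (univ.filter (fun a => a ∈ A₁ ∧ E a b₀)).card
              + (univ.filter (fun a => (a, b₀) ∈ M)).card := by
              have := card_union_le NA₂ (univ.filter (fun a => a ∈ A₁ ∧ E a b₀)); omega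
          _ ≤ NA₂.card + 2 := by omega
      -- L2 : if B₂'.card ≥ 3 then NA₂ ≥ m - 1
      have hNA₂2 : 3 ≤ B₂'.card → m ≤ NA₂.card + 1 := by
        intro hk3
        set bad := univ.filter (fun a => a ∉ A₁ ∧ ¬∃ b ∈ B', E a b ∧ (a, b) ∉ M) with hbad
        have hsum : NA₂.card + bad.card = m := by
          have e1 : NA₂ = (univ.filter (fun a => a ∉ A₁)).filter
              (fun a => ∃ b ∈ B', E a b ∧ (a, b) ∉ M) := by
            ext a
            simp only [hNA₂, mem_filter, mem_univ, true_and]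
          have e2 : bad = (univ.filter (fun a => a ∉ A₁)).filter
              (fun a => ¬∃ b ∈ B', E a b ∧ (a, b) ∉ M) := by
            ext a
            simp only [hbad, mem_filter, mem_univ, true_and]
          rw [e1, e2, card_filter_add_card_filter_not, hA2card]
        have hbad1 : bad.card ≤ 1 := by
          by_contra hb
          push_neg at hb
          obtain ⟨a₁, ha₁, a₂, ha₂, hane⟩ := one_lt_card.mp hb
          simp only [hbad, mem_filter, mem_univ, true_and] at ha₁ ha₂
          -- extract three elements of B₂'
          obtain ⟨b₁, hb₁⟩ := card_pos.mp (by omega : 0 < B₂'.card)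
          have hc1 : 0 < (B₂'.erase b₁).card := by
            have := card_erase_of_mem hb₁; omega
          obtain ⟨b₂, hb₂⟩ := card_pos.mp hc1
          have hc2 : 0 < ((B₂'.erase b₁).erase b₂).card := by
            have := card_erase_of_mem hb₂
            have := card_erase_of_mem hb₁
            omega
          obtain ⟨b₃, hb₃⟩ := card_pos.mp hc2
          have hne12 : b₁ ≠ b₂ := fun h => (mem_erase.mp hb₂).1 h.symm
          have hne13 : b₁ ≠ b₃ := fun h => (mem_erase.mp (mem_erase.mp hb₃).2).1 h.symm
          have hne23 : b₂ ≠ b₃ := fun h => (mem_erase.mp hb₃).1 h.symm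
          have hb₂' : b₂ ∈ B₂' := (mem_erase.mp hb₂).2
          have hb₃' : b₃ ∈ B₂' := (mem_erase.mp (mem_erase.mp hb₃).2).2
          -- for every b in B₂', at least one of a₁, a₂ is matched to it
          have key : ∀ b ∈ B₂', (a₁, b) ∈ M ∨ (a₂, b) ∈ M := by
            intro b hbmem
            have hbB' : b ∈ B' := (mem_filter.mp hbmem).1
            have hbB₁ : b ∉ B₁ := (mem_filter.mp hbmem).2
            -- at most one non-neighbour of b outside A₁
            have hnn : (univ.filter (fun a => a ∉ A₁ ∧ ¬E a b)).card ≤ 1 := by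
              have hs : (univ.filter (fun a => a ∉ A₁)).filter (fun a => E a b) =
                  univ.filter (fun a => a ∉ A₁ ∧ E a b) := by
                ext a; simp only [mem_filter, mem_univ, true_and]
              have hs' : (univ.filter (fun a => a ∉ A₁)).filter (fun a => ¬E a b) =
                  univ.filter (fun a => a ∉ A₁ ∧ ¬E a b) := by
                ext a; simp only [mem_filter, mem_univ, true_and]
              have := card_filter_add_card_filter_not
                (s := univ.filter (fun a => a ∉ A₁)) (p := fun a => E a b)
              rw [hs, hs', hA2card] at this
              have := hA2nb b hbB₁
              omega
            have h1 : E a₁ b ∨ E a₂ b := by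
              by_contra hcon
              push_neg at hcon
              have m1 : a₁ ∈ univ.filter (fun a => a ∉ A₁ ∧ ¬E a b) := by
                simp only [mem_filter, mem_univ, true_and]; exact ⟨ha₁.1, hcon.1⟩
              have m2 : a₂ ∈ univ.filter (fun a => a ∉ A₁ ∧ ¬E a b) := by
                simp only [mem_filter, mem_univ, true_and]; exact ⟨ha₂.1, hcon.2⟩
              exact hane (card_le_one.mp hnn a₁ m1 a₂ m2)
            have g1 : E a₁ b → (a₁, b) ∈ M := by
              intro he
              by_contra hnm
              exact ha₁.2 ⟨b, hbB', he, hnm⟩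
            have g2 : E a₂ b → (a₂, b) ∈ M := by
              intro he
              by_contra hnm
              exact ha₂.2 ⟨b, hbB', he, hnm⟩
            tauto
          have k1 := key b₁ hb₁
          have k2 := key b₂ hb₂'
          have k3 := key b₃ hb₃'
          rcases k1 with k1 | k1 <;> rcases k2 with k2 | k2 <;> rcases k3 with k3 | k3 <;>
            first
              | exact hne12 (matchA _ _ _ k1 k2)
              | exact hne13 (matchA _ _ _ k1 k3)
              | exact hne23 (matchA _ _ _ k2 k3)
        omega
      -- A₁-side estimates
      have hNA₁_t2 : 2 ≤ B₁'.card → m ≤ NA₁.card := by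
        intro ht2
        obtain ⟨c₁, hc₁, c₂, hc₂, hcne⟩ := one_lt_card.mp ht2
        have hc₁' := mem_filter.mp hc₁
        have hc₂' := mem_filter.mp hc₂
        have hsub : A₁ ⊆ NA₁ := by
          intro a ha
          simp only [hNA₁, mem_filter, mem_univ, true_and]
          refine ⟨ha, ?_⟩
          by_cases h1 : (a, c₁) ∈ M
          · refine ⟨c₂, hc₂'.1, hcomplete a ha c₂ hc₂'.2, ?_⟩
            intro h2
            exact hcne (matchA a c₁ c₂ h1 h2)
          · exact ⟨c₁, hc₁'.1, hcomplete a ha c₁ hc₁'.2, h1⟩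
        calc m = A₁.card := hA₁.symm
          _ ≤ NA₁.card := card_le_card hsub
      have hNA₁_t1 : 1 ≤ B₁'.card → m ≤ NA₁.card + 1 := by
        intro ht1
        obtain ⟨c₁, hc₁⟩ := card_pos.mp ht1
        have hc₁' := mem_filter.mp hc₁
        have hsub : A₁ ⊆ NA₁ ∪ univ.filter (fun a => (a, c₁) ∈ M) := by
          intro a ha
          simp only [hNA₁, mem_union, mem_filter, mem_univ, true_and]
          by_cases h1 : (a, c₁) ∈ M
          · exact Or.inr h1
          · exact Or.inl ⟨ha, c₁, hc₁'.1, hcomplete a ha c₁ hc₁'.2, h1⟩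
        have h1 : (univ.filter (fun a => (a, c₁) ∈ M)).card ≤ 1 := by
          refine card_le_one.mpr ?_
          intro x hx y hy
          simp only [mem_filter, mem_univ, true_and] at hx hy
          exact matchB x y c₁ hx hy
        calc m = A₁.card := hA₁.symm
          _ ≤ _ := card_le_card hsub
          _ ≤ _ + _ := card_union_le _ _
          _ ≤ NA₁.card + 1 := by omega
      -- L5 : B₂'.card + 1 ≤ NA₁.card + m
      have hNA₁_t0 : B₂'.card + 1 ≤ NA₁.card + m := by
        set S := A₁.filter (fun a => f a ∈ B') with hS
        have hScard : B₂'.card ≤ S.card + 1 := by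
          set imgA := A₁.image f with himgA
          have himgcard : imgA.card = m := by
            rw [himgA, card_image_of_injOn hf_inj, hA₁]
          have himgsub : imgA ⊆ univ.filter (fun b => b ∉ B₁) := by
            intro b hb
            obtain ⟨a, ha, rfl⟩ := mem_image.mp hb
            simp only [mem_filter, mem_univ, true_and]
            exact hf_maps a ha
          have hsub2 : B₂' ⊆ (S.image f) ∪ (univ.filter (fun b => b ∉ B₁) \ imgA) := by
            intro b hb
            have hb' := mem_filter.mp hb
            by_cases him : b ∈ imgA
            · obtain ⟨a, ha, rfl⟩ := mem_image.mp him
              refine mem_union_left _ (mem_image.mpr ⟨a, ?_, rfl⟩)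
              exact mem_filter.mpr ⟨ha, hb'.1⟩
            · refine mem_union_right _ (mem_sdiff.mpr ⟨?_, him⟩)
              simp only [mem_filter, mem_univ, true_and]
              exact hb'.2
          have hsd : (univ.filter (fun b => b ∉ B₁) \ imgA).card = 1 := by
            rw [card_sdiff_of_subset himgsub, hB2card, himgcard]
            omega
          calc B₂'.card ≤ _ := card_le_card hsub2
            _ ≤ (S.image f).card + (univ.filter (fun b => b ∉ B₁) \ imgA).card := card_union_le _ _
            _ ≤ S.card + 1 := by
                have := card_image_le (s := S) (f := f)
                omega
        have hTcard : S.card ≤ NA₁.card + (m - 2) := by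
          have hsub3 : S ⊆ NA₁ ∪ S.filter (fun a => (a, f a) ∈ M) := by
            intro a ha
            have ha' := mem_filter.mp ha
            by_cases h1 : (a, f a) ∈ M
            · exact mem_union_right _ (mem_filter.mpr ⟨ha, h1⟩)
            · refine mem_union_left _ ?_
              simp only [hNA₁, mem_filter, mem_univ, true_and]
              refine ⟨ha'.1, f a, ha'.2, ?_, h1⟩
              exact (hf_match a ha'.1 (f a) (hf_maps a ha'.1)).mpr rfl
          have himg : (S.filter (fun a => (a, f a) ∈ M)).card ≤ m - 2 := by
            have hinj : ((S.filter (fun a => (a, f a) ∈ M)).image (fun a => (a, f a))).card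
                = (S.filter (fun a => (a, f a) ∈ M)).card := by
              apply card_image_of_injOn
              intro x _ y _ hxy
              exact (Prod.mk.injEq _ _ _ _ ▸ hxy).1
            have hsub4 : (S.filter (fun a => (a, f a) ∈ M)).image (fun a => (a, f a)) ⊆
                M.filter (fun p => p.1 ∈ A₁ ∧ p.2 ∉ B₁) := by
              intro p hp
              obtain ⟨a, ha, rfl⟩ := mem_image.mp hp
              have ha' := mem_filter.mp ha
              have ha'' := mem_filter.mp ha'.1
              exact mem_filter.mpr ⟨ha'.2, ha''.1, hf_maps a ha''.1⟩
            calc (S.filter (fun a => (a, f a) ∈ M)).card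
                = _ := hinj.symm
              _ ≤ (M.filter (fun p => p.1 ∈ A₁ ∧ p.2 ∉ B₁)).card := card_le_card hsub4
              _ ≤ m - 2 := hMsize
          have := card_le_card hsub3
          have := card_union_le NA₁ (S.filter (fun a => (a, f a) ∈ M))
          omega
        omega
      -- combine by cases on B₁'.card
      rcases Nat.lt_or_ge B₁'.card 1 with ht0 | ht1
      · -- t = 0
        have hk : B₂'.card = B'.card := by omega
        have h2 := hNA₂2 (by omega)
        omega
      rcases Nat.lt_or_ge B₁'.card 2 with ht1' | ht2
      · -- t = 1
        have h1 := hNA₁_t1 ht1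
        rcases Nat.lt_or_ge B₂'.card 3 with hk2 | hk3
        · omega
        · have h2 := hNA₂2 hk3
          omega
      · -- t ≥ 2
        have h1 := hNA₁_t2 ht2
        omega
    · -- large case: B'.card ≥ m + 2 , N = univ
      have huniv : (univ : Finset α) ⊆ N := by
        intro a _
        simp only [hN, mem_filter, mem_univ, true_and]
        by_contra h
        push_neg at h
        have hdisj : Disjoint B' (univ.filter (fun b => E a b ∧ (a, b) ∉ M)) := by
          rw [disjoint_left]
          intro b hb hb2
          simp only [mem_filter, mem_univ, true_and] at hb2
          exact hb2.2 (h b hb hb2.1)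
        have := card_union_of_disjoint hdisj
        have hle : (B' ∪ univ.filter (fun b => E a b ∧ (a, b) ∉ M)).card ≤ 2 * m := by
          calc _ ≤ (univ : Finset β).card := card_le_univ _
            _ = 2 * m := hcardβ
        have := degGMa a
        omega
      calc B'.card ≤ 2 * m := hcardB'
        _ = (univ : Finset α).card := hcardα.symm
        _ ≤ N.card := card_le_card huniv
  refine ⟨hall, ?_⟩
  obtain ⟨g, hg_inj, hg⟩ := (Fintype.all_card_le_filter_rel_iff_exists_injective
    (fun (b : β) (a : α) => E a b ∧ (a, b) ∉ M)).mp hall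
  exact ⟨g, (Fintype.bijective_iff_injective_and_card g).mpr ⟨hg_inj, by rw [hB, hA]⟩, hg⟩
end

section
/- For every n ≥ 2 and every 2-list-assignment L of the path Pₙ, there exists an L-packing of size 2, i.e., two proper L-colourings c₁, c₂ with c₁(v) ≠ c₂(v) for every vertex v. Hence the list packing number of Pₙ is 2. -/
private def pk10 (E : ℕ → ℕ × ℕ) : ℕ → ℕ × ℕ
  | 0 => E 0
  | i+1 =>
    if (E (i+1)).1 ≠ (pk10 E i).1 ∧ (E (i+1)).2 ≠ (pk10 E i).2 then E (i+1)
    else ((E (i+1)).2, (E (i+1)).1)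

private lemma pk10_succ (E : ℕ → ℕ × ℕ) (i : ℕ) :
    pk10 E (i+1) =
      if (E (i+1)).1 ≠ (pk10 E i).1 ∧ (E (i+1)).2 ≠ (pk10 E i).2 then E (i+1)
      else ((E (i+1)).2, (E (i+1)).1) := rfl

private lemma pk10_perm (E : ℕ → ℕ × ℕ) (i : ℕ) :
    pk10 E i = E i ∨ pk10 E i = ((E i).2, (E i).1) := by
  cases i with
  | zero => left; rfl
  | succ j =>
    rw [pk10_succ]
    split
    · left; rfl
    · right; rfl

private lemma pk10_step (E : ℕ → ℕ × ℕ) (i : ℕ)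
    (he : (E (i+1)).1 ≠ (E (i+1)).2) (hp : (pk10 E i).1 ≠ (pk10 E i).2) :
    (pk10 E (i+1)).1 ≠ (pk10 E i).1 ∧ (pk10 E (i+1)).2 ≠ (pk10 E i).2 := by
  rw [pk10_succ]
  by_cases h : (E (i+1)).1 ≠ (pk10 E i).1 ∧ (E (i+1)).2 ≠ (pk10 E i).2
  · rw [if_pos h]; exact h
  · rw [if_neg h]
    push_neg at h
    by_cases h1 : (E (i+1)).1 = (pk10 E i).1
    · refine ⟨?_, ?_⟩
      · show (E (i+1)).2 ≠ (pk10 E i).1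
        rw [← h1]; exact he.symm
      · show (E (i+1)).1 ≠ (pk10 E i).2
        rw [h1]; exact hp
    · have h2 := h h1
      refine ⟨?_, ?_⟩
      · show (E (i+1)).2 ≠ (pk10 E i).1
        rw [h2]; exact hp.symm
      · show (E (i+1)).1 ≠ (pk10 E i).2
        rw [← h2]; exact he

/-- For every `n ≥ 2` and every 2-list-assignment `L` of the path `Pₙ` (vertices
`Fin n`, edges between consecutive indices), there exist two proper `L`-colourings
disagreeing at every vertex: an `L`-packing of size 2. -/
theorem stmt10 (n : ℕ) (hn : 2 ≤ n) (L : Fin n → Finset ℕ)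
    (hL : ∀ i : Fin n, (L i).card = 2) :
    ∃ c₁ c₂ : Fin n → ℕ,
      (∀ i : Fin n, c₁ i ∈ L i) ∧ (∀ i : Fin n, c₂ i ∈ L i) ∧
      (∀ i : ℕ, ∀ h : i + 1 < n, c₁ ⟨i, by omega⟩ ≠ c₁ ⟨i + 1, h⟩) ∧
      (∀ i : ℕ, ∀ h : i + 1 < n, c₂ ⟨i, by omega⟩ ≠ c₂ ⟨i + 1, h⟩) ∧
      ∀ v : Fin n, c₁ v ≠ c₂ v := by
  have h2 : ∀ i : Fin n, ∃ p : ℕ × ℕ, p.1 ≠ p.2 ∧ L i = {p.1, p.2} := by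
    intro i
    obtain ⟨a, b, hab, hs⟩ := Finset.card_eq_two.mp (hL i)
    exact ⟨(a, b), hab, hs⟩
  choose P hP1 hP2 using h2
  set E : ℕ → ℕ × ℕ := fun j => if h : j < n then P ⟨j, h⟩ else (0, 1) with hE
  have hEeq : ∀ (j : ℕ) (h : j < n), E j = P ⟨j, h⟩ := by
    intro j h; simp [hE, h]
  have hEne : ∀ (j : ℕ), j < n → (E j).1 ≠ (E j).2 := by
    intro j h; rw [hEeq j h]; exact hP1 _
  have hperm : ∀ i : Fin n,
      pk10 E i.1 = P i ∨ pk10 E i.1 = ((P i).2, (P i).1) := by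
    intro i
    have := hEeq i.1 i.2
    have heq : P (⟨i.1, i.2⟩ : Fin n) = P i := by congr
    rcases pk10_perm E i.1 with hc | hc <;> rw [this, heq] at hc
    · exact Or.inl hc
    · exact Or.inr hc
  have hne : ∀ i : Fin n, (pk10 E i.1).1 ≠ (pk10 E i.1).2 := by
    intro i
    rcases hperm i with hc | hc <;> rw [hc]
    · exact hP1 _
    · exact (hP1 _).symm
  refine ⟨fun i => (pk10 E i.1).1, fun i => (pk10 E i.1).2, ?_, ?_, ?_, ?_, ?_⟩
  · intro i
    show (pk10 E i.1).1 ∈ L i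
    rcases hperm i with hc | hc <;> rw [hc, hP2 i] <;> simp
  · intro i
    show (pk10 E i.1).2 ∈ L i
    rcases hperm i with hc | hc <;> rw [hc, hP2 i] <;> simp
  · intro i h
    exact fun hx =>
      (pk10_step E i (hEne (i+1) h) (hne ⟨i, by omega⟩)).1 hx.symm
  · intro i h
    exact fun hx =>
      (pk10_step E i (hEne (i+1) h) (hne ⟨i, by omega⟩)).2 hx.symm
  · intro v
    exact hne v
end

section
/- For every n ≥ 3 and every 3-list-assignment L of the cycle Cₙ, there exists an L-packing of size 3 (three pairwise-disjoint proper L-colourings). Combined with the lower bound, the list packing number of Cₙ is exactly 3. -/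
namespace Stmt11Aux

abbrev P3 := Equiv.Perm (Fin 3)

def cyc : P3 := finRotate 3

abbrev avoids (ρ : P3) (p : Fin 3 → Option (Fin 3)) : Prop :=
  ∀ m j, p m = some j → ρ m ≠ j

lemma fpf : ∀ d : P3, (d = cyc ∨ d = cyc ^ 2) → ∀ x, d x ≠ x := by decide

lemma L4 : ∀ B : P3, B.sign = 1 →
    ∃ u v : P3, (u = cyc ∨ u = cyc ^ 2) ∧ (v = cyc ∨ v = cyc ^ 2) ∧ u * v = B := by decide

lemma L5 : ∀ σ v : P3, (v = cyc ∨ v = cyc ^ 2) →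
    (σ⁻¹ * v * σ = cyc ∨ σ⁻¹ * v * σ = cyc ^ 2) := by decide

lemma sign_cyc : (cyc).sign = 1 := by decide

lemma L1 : ∀ p : Fin 3 → Option (Fin 3),
    (∀ m m' j, p m = some j → p m' = some j → m = m') →
    ∃ g : P3, ∀ m j, p m = some j → g m = j := by decide

set_option synthInstance.maxHeartbeats 400000 in
set_option synthInstance.maxSize 1024 in
lemma L2 : ∀ p : Fin 3 → Option (Fin 3), (∃ m₀, p m₀ = none) →
    ∃ s₀ s₁ : P3, ((Equiv.Perm.sign s₀ : ℤ) ≠ (Equiv.Perm.sign s₁ : ℤ)) ∧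
      avoids s₀ p ∧ avoids s₁ p := by decide

lemma uinv : ∀ u : ℤˣ, u⁻¹ = u := fun u => by
  rcases Int.units_eq_one_or u with h | h <;> simp [h]

def Qfun (ρl : ℕ → P3) (t : ℕ) : P3 := ((List.range t).reverse.map ρl).prod

lemma Qfun_zero (ρl : ℕ → P3) : Qfun ρl 0 = 1 := rfl

lemma Qfun_succ (ρl : ℕ → P3) (t : ℕ) : Qfun ρl (t + 1) = ρl t * Qfun ρl t := by
  have hr : (List.range (t + 1)).reverse = t :: (List.range t).reverse := by
    rw [List.range_succ, List.reverse_append]; rfl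
  simp only [Qfun, hr, List.map_cons, List.prod_cons]

lemma prodlem (g : ℕ → P3) : ∀ k, 2 ≤ k → ∀ T : P3,
    T.sign = (Qfun g k).sign →
    ∃ d : ℕ → P3, (∀ i, d i = cyc ∨ d i = cyc ^ 2) ∧
      Qfun (fun i => d i * g i) k = T := by
  intro k hk
  induction k, hk using Nat.le_induction with
  | base =>
    intro T hT
    have hq : Qfun g 2 = g 1 * g 0 := by
      rw [show (2:ℕ) = 1 + 1 from rfl, Qfun_succ, Qfun_succ, Qfun_zero, mul_one]
    rw [hq] at hT
    have hB : (T * (g 0)⁻¹ * (g 1)⁻¹).sign = 1 := by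
      simp only [map_mul, map_inv, hT]
      group
    obtain ⟨u, v, hu, hv, huv⟩ := L4 _ hB
    refine ⟨fun i => if i = 1 then u else if i = 0 then (g 1)⁻¹ * v * (g 1) else cyc, ?_, ?_⟩
    · intro i
      by_cases h1 : i = 1
      · simp [h1, hu]
      · by_cases h0 : i = 0
        · simp [h1, h0]; exact L5 _ _ hv
        · simp [h1, h0]
    · rw [show (2:ℕ) = 1 + 1 from rfl, Qfun_succ, Qfun_succ, Qfun_zero, mul_one]
      simp only [if_pos rfl, if_neg one_ne_zero, if_neg (by norm_num : (0:ℕ) ≠ 1)]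
      calc (u * g 1) * ((g 1)⁻¹ * v * g 1 * g 0)
          = (u * v) * ((g 1)⁻¹ * g 1) * g 1 * g 0 := by group
        _ = T := by rw [inv_mul_cancel, mul_one, huv]; group
  | succ k hk ih =>
    intro T hT
    rw [Qfun_succ] at hT
    have hT' : ((cyc * g k)⁻¹ * T).sign = (Qfun g k).sign := by
      simp only [map_mul, map_inv, hT, sign_cyc, mul_inv_rev, inv_one, one_mul]
      group
    obtain ⟨d', hd', hp'⟩ := ih _ hT'
    refine ⟨fun i => if i = k then cyc else d' i, ?_, ?_⟩
    · intro i; by_cases h : i = k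
      · simp [h]
      · simp [h, hd' i]
    · rw [Qfun_succ]
      have hcong : Qfun (fun i => (if i = k then cyc else d' i) * g i) k
          = Qfun (fun i => d' i * g i) k := by
        simp only [Qfun]
        refine congrArg List.prod (List.map_congr_left ?_)
        intro a ha
        have halt : a < k := by
          have := List.mem_reverse.mp ha
          simpa using List.mem_range.mp this
        simp [Nat.ne_of_lt halt]
      rw [hcong, hp']
      show (if k = k then cyc else d' k) * g k * ((cyc * g k)⁻¹ * T) = T
      rw [if_pos rfl]
      group

end Stmt11Aux

open Stmt11Aux in
/-- For every `n ≥ 3` and every 3-list-assignment `L` of the cycle `Cₙ` (vertices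
`Fin n`, adjacency `i ~ i+1` cyclically), there exists an `L`-packing of size 3:
three proper `L`-colourings that pairwise disagree at every vertex. -/
theorem stmt11 (n : ℕ) (hn : 3 ≤ n) (L : Fin n → Finset ℕ)
    (hL : ∀ i : Fin n, (L i).card = 3) :
    ∃ c : Fin 3 → Fin n → ℕ,
      (∀ k : Fin 3, (∀ i : Fin n, c k i ∈ L i) ∧ ∀ i : Fin n, c k i ≠ c k (i + ⟨1, by omega⟩)) ∧
      ∀ k k' : Fin 3, k ≠ k' → ∀ v : Fin n, c k v ≠ c k' v := by
  classical
  have hn0 : 0 < n := by omega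
  set one : Fin n := ⟨1, by omega⟩ with hone
  -- the canonical bijections τ i : Fin 3 → L i
  obtain ⟨τ, hmem, hinj, hsurj, hτcong⟩ :
      ∃ τ : Fin n → Fin 3 → ℕ, (∀ i m, τ i m ∈ L i) ∧
        (∀ i m m', τ i m = τ i m' → m = m') ∧
        (∀ i x, x ∈ L i → ∃ m, τ i m = x) ∧
        (∀ i i', L i = L i' → τ i = τ i') := by
    have key : ∀ (s t : Finset ℕ) (hs : s.card = 3) (ht : t.card = 3), s = t →
        ∀ m : Fin 3, ((s.orderIsoOfFin hs m : ℕ)) = ((t.orderIsoOfFin ht m : ℕ)) := by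
      rintro s t hs ht rfl m; rfl
    refine ⟨fun i m => ((L i).orderIsoOfFin (hL i) m : ℕ), fun i m => ?_, fun i m m' h => ?_,
      fun i x hx => ?_, fun i i' h => ?_⟩
    · exact ((L i).orderIsoOfFin (hL i) m).2
    · exact ((L i).orderIsoOfFin (hL i)).injective (Subtype.coe_injective h)
    · exact ⟨((L i).orderIsoOfFin (hL i)).symm ⟨x, hx⟩,
        congrArg Subtype.val (((L i).orderIsoOfFin (hL i)).apply_symm_apply ⟨x, hx⟩)⟩
    · funext m; exact key _ _ _ _ h m
  -- the partial matchings p e between colours of consecutive lists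
  obtain ⟨p, hp⟩ : ∃ p : Fin n → Fin 3 → Option (Fin 3),
      ∀ e m m', p e m = some m' ↔ τ (e + one) m' = τ e m := by
    refine ⟨fun e m => if h : ∃ m', τ (e + one) m' = τ e m then some h.choose else none,
      fun e m m' => ?_⟩
    constructor
    · intro h
      replace h : (if h : ∃ m', τ (e + one) m' = τ e m then some h.choose else none) = some m' := h
      by_cases hex : ∃ m', τ (e + one) m' = τ e m
      · rw [dif_pos hex] at h
        obtain rfl := Option.some_injective _ h
        exact hex.choose_spec
      · rw [dif_neg hex] at h; cases h
    · intro h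
      have hex : ∃ m'', τ (e + one) m'' = τ e m := ⟨m', h⟩
      show (if h : ∃ m', τ (e + one) m' = τ e m then some h.choose else none) = some m'
      rw [dif_pos hex]
      congr 1
      exact hinj (e + one) _ _ (hex.choose_spec.trans h.symm)
  have hpinj : ∀ e m m' j, p e m = some j → p e m' = some j → m = m' := by
    intro e m m' j h h'
    exact hinj e _ _ (((hp e m j).mp h).symm.trans ((hp e m' j).mp h'))
  have havoid : ∀ e (ρ : P3), avoids ρ (p e) → ∀ m, τ (e + one) (ρ m) ≠ τ e m := by
    intro e ρ hav m hEq
    exact hav m (ρ m) ((hp e m (ρ m)).mpr hEq) rfl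
  -- the extension permutations g e
  obtain ⟨g, hg⟩ : ∃ g : Fin n → P3, ∀ e m j, p e m = some j → g e m = j := by
    have := fun e => L1 (p e) (hpinj e)
    exact ⟨fun e => (this e).choose, fun e => (this e).choose_spec⟩
  have hgav : ∀ (e : Fin n) (d : P3), (d = cyc ∨ d = cyc ^ 2) →
      avoids (d * g e) (p e) := by
    intro e d hd m j hmj
    have h1 : (d * g e) m = d j := by
      simp only [Equiv.Perm.mul_apply, hg e m j hmj]
    rw [h1]
    exact fpf d hd j
  -- pick the special edge j
  obtain ⟨j, hj⟩ : ∃ j : Fin n, L j ≠ L (j + one) ∨ ∀ e : Fin n, L e = L (e + one) := by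
    by_cases h : ∃ jj : Fin n, L jj ≠ L (jj + one)
    · exact ⟨h.choose, Or.inl h.choose_spec⟩
    · push_neg at h
      exact ⟨⟨0, hn0⟩, Or.inr h⟩
  set glist : ℕ → P3 := fun t => g ⟨((j.val + 1) % n + t) % n, Nat.mod_lt _ hn0⟩ with hglist
  -- pick s for the special edge, with the right sign
  obtain ⟨s, hsav, hsign⟩ : ∃ s : P3, avoids s (p j) ∧ s.sign = (Qfun glist (n - 1)).sign := by
    rcases hj with hj | hall
    · -- some colour of L j is missing from L (j+1)
      have hnsub : ¬ L j ⊆ L (j + one) := by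
        intro hsub
        exact hj (Finset.eq_of_subset_of_card_le hsub (by rw [hL, hL]))
      obtain ⟨x, hx, hnx⟩ := Finset.not_subset.mp hnsub
      obtain ⟨m₀, hm₀⟩ := hsurj j x hx
      have hnone : p j m₀ = none := by
        rcases h : p j m₀ with _ | m'
        · rfl
        · exfalso
          apply hnx
          rw [← hm₀, ← (hp j m₀ m').mp h]
          exact hmem (j + one) m'
      obtain ⟨s₀, s₁, hne, hav₀, hav₁⟩ := L2 (p j) ⟨m₀, hnone⟩
      by_cases hcase : s₀.sign = (Qfun glist (n - 1)).sign
      · exact ⟨s₀, hav₀, hcase⟩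
      · refine ⟨s₁, hav₁, ?_⟩
        have hne' : s₀.sign ≠ s₁.sign := fun hEq => hne (by rw [hEq])
        rcases Int.units_eq_one_or s₀.sign with h0 | h0 <;>
          rcases Int.units_eq_one_or s₁.sign with h1 | h1 <;>
          rcases Int.units_eq_one_or (Qfun glist (n - 1)).sign with h2 | h2 <;>
          first
            | exact h1.trans h2.symm
            | exact absurd (h0.trans h2.symm) hcase
            | exact absurd (h0.trans h1.symm) hne'
    · -- all lists equal: all g e = 1
      have hg1 : ∀ e : Fin n, g e = 1 := by
        intro e
        apply Equiv.ext
        intro m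
        have hEq : τ (e + one) m = τ e m := by rw [hτcong e (e + one) (hall e)]
        exact hg e m m ((hp e m m).mpr hEq)
      have hPl : Qfun glist (n - 1) = 1 := by
        apply List.prod_eq_one
        intro x hx
        simp only [List.mem_map] at hx
        obtain ⟨t, _, rfl⟩ := hx
        exact hg1 _
      refine ⟨cyc, ?_, ?_⟩
      · intro m m' hmm'
        have hτeq : τ (j + one) = τ j := (hτcong j (j + one) (hall j)).symm
        have h2 := (hp j m m').mp hmm'
        rw [hτeq] at h2
        have : m' = m := hinj j m' m h2
        rw [this]
        exact fpf cyc (Or.inl rfl) m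
      · rw [hPl, map_one, sign_cyc]
  -- apply the product lemma
  have hk2 : 2 ≤ n - 1 := by omega
  have hTs : (s⁻¹ : P3).sign = (Qfun glist (n - 1)).sign := by
    rw [map_inv, hsign, uinv]
  obtain ⟨d, hd, hdprod⟩ := prodlem glist (n - 1) hk2 s⁻¹ hTs
  -- assemble the colourings
  set a : ℕ := (j.val + 1) % n with hadef
  have ha : a < n := Nat.mod_lt _ hn0
  set ρl : ℕ → P3 := fun t => d t * glist t with hρl
  set π : Fin n → P3 := fun v => Qfun ρl ((v.val + (n - a)) % n) with hπ
  -- basic modular arithmetic facts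
  have hval : ∀ v : Fin n, v.val = (a + (v.val + (n - a)) % n) % n := by
    intro v
    rw [Nat.add_mod_mod]
    have h1 : a + (v.val + (n - a)) = v.val + n := by omega
    rw [h1, Nat.add_mod_right, Nat.mod_eq_of_lt v.isLt]
  have hnext : ∀ v : Fin n, ((v + one).val + (n - a)) % n = ((v.val + (n - a)) % n + 1) % n := by
    intro v
    rw [Fin.val_add]
    show ((v.val + 1) % n + (n - a)) % n = _
    rw [Nat.mod_add_mod, Nat.mod_add_mod]
    congr 1
    omega
  have hjval : j.val = (a + (n - 1)) % n := by
    rw [hadef, Nat.mod_add_mod]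
    have h1 : j.val + 1 + (n - 1) = j.val + n := by omega
    rw [h1, Nat.add_mod_right, Nat.mod_eq_of_lt j.isLt]
  -- the edge lemma
  have hedge : ∀ i : Fin n, ∃ ρ : P3, avoids ρ (p i) ∧ ∀ k, π (i + one) k = ρ (π i k) := by
    intro i
    set t : ℕ := (i.val + (n - a)) % n with htdef
    have htn : t < n := Nat.mod_lt _ hn0
    by_cases hlt : t < n - 1
    · refine ⟨ρl t, ?_, ?_⟩
      · have hi : (⟨(a + t) % n, Nat.mod_lt _ hn0⟩ : Fin n) = i := by
          apply Fin.ext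
          exact (hval i).symm
        have hgl : glist t = g i := congrArg g hi
        have h2 : ρl t = d t * g i := by
          rw [show ρl t = d t * glist t from rfl, hgl]
        rw [h2]
        exact hgav i (d t) (hd t)
      · intro k
        have h1 : π (i + one) = Qfun ρl (t + 1) := by
          rw [hπ]
          simp only
          rw [hnext i, ← htdef, Nat.mod_eq_of_lt (by omega : t + 1 < n)]
        rw [h1, Qfun_succ]
        rfl
    · have ht' : t = n - 1 := by omega
      have hij : i = j := by
        apply Fin.ext
        rw [hval i, ← htdef, ht', ← hjval]
      refine ⟨s, ?_, ?_⟩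
      · rw [hij]; exact hsav
      · intro k
        have h1 : π (i + one) = 1 := by
          rw [hπ]
          simp only
          rw [hnext i, ← htdef, ht']
          have : (n - 1 + 1) % n = 0 := by
            have : n - 1 + 1 = n := by omega
            rw [this, Nat.mod_self]
          rw [this, Qfun_zero]
        have h2 : π i = s⁻¹ := by
          rw [hπ]
          simp only
          rw [← htdef, ht']
          exact hdprod
        rw [h1, h2]
        simp
  -- conclude
  refine ⟨fun k v => τ v (π v k), fun k => ⟨fun i => hmem i (π i k), fun i => ?_⟩,
    fun k k' hkk' v h => ?_⟩
  · show τ i (π i k) ≠ τ (i + one) (π (i + one) k)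
    obtain ⟨ρ, hav, hπρ⟩ := hedge i
    rw [hπρ k]
    intro hEq
    exact havoid i ρ hav (π i k) hEq.symm
  · exact hkk' ((π v).injective (hinj v _ _ h))
end

section
/- Let G be a graph of degeneracy d. Then the correspondence packing number of G is at most 2d, i.e., for every 2d-fold correspondence-cover (L,H) of G, the cover graph H has chromatic number 2d (admits a partition into 2d independent transversals). -/
/-- A correspondence-cover `(L, H)` of a graph `G`: the sets `L v` partition `V(H)`,
each `L v` induces a clique in `H`, there are no edges of `H` between lists of
non-adjacent vertices, and the edges of `H` between lists of adjacent vertices of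
`G` form a matching. -/
structure CorrCover {V W : Type*} (G : SimpleGraph V) (H : SimpleGraph W)
    (L : V → Finset W) : Prop where
  partition : ∀ w : W, ∃! v : V, w ∈ L v
  clique : ∀ v : V, ∀ x ∈ L v, ∀ y ∈ L v, x ≠ y → H.Adj x y
  nonadj : ∀ u v : V, u ≠ v → ¬ G.Adj u v → ∀ x ∈ L u, ∀ y ∈ L v, ¬ H.Adj x y
  matching : ∀ u v : V, G.Adj u v → ∀ x ∈ L u, ∀ y ∈ L v, ∀ y2 ∈ L v,
      H.Adj x y → H.Adj x y2 → y = y2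

/-- If `G` has degeneracy at most `d` then every `2d`-fold correspondence-cover
`(L,H)` of `G` has chromatic number `2d`: its cover graph admits a proper colouring
with `2d` colours (a partition into `2d` independent transversals). -/
theorem stmt13 {V W : Type*} [Fintype V] [DecidableEq V] (G : SimpleGraph V)
    [DecidableRel G.Adj] (d : ℕ)
    (hdegen : ∀ S : Finset V, S.Nonempty →
      ∃ v ∈ S, (S.filter (fun u => G.Adj v u)).card ≤ d)
    (H : SimpleGraph W) (L : V → Finset W)
    (hcover : CorrCover G H L) (hfold : ∀ v : V, (L v).card = 2 * d) :
    ∃ f : W → Fin (2 * d), ∀ x y : W, H.Adj x y → f x ≠ f y := by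
  classical
  have huniq : ∀ (w : W) (a b : V), w ∈ L a → w ∈ L b → a = b := by
    intro w a b ha hb
    obtain ⟨c, _, hc⟩ := hcover.partition w
    rw [hc a ha, hc b hb]
  have hpos : ∀ _ : W, 0 < 2 * d := by
    intro w
    obtain ⟨v, hv, _⟩ := hcover.partition w
    have h1 : 0 < (L v).card := Finset.card_pos.mpr ⟨w, hv⟩
    rwa [hfold v] at h1
  have key : ∀ S : Finset V, ∃ f : W → Fin (2 * d),
      ∀ u ∈ S, ∀ v ∈ S, ∀ x ∈ L u, ∀ y ∈ L v, H.Adj x y → f x ≠ f y := by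
    intro S
    induction S using Finset.strongInduction with
    | _ S ih =>
    rcases S.eq_empty_or_nonempty with rfl | hSne
    · exact ⟨fun w => ⟨0, hpos w⟩, by simp⟩
    obtain ⟨v, hvS, hdeg⟩ := hdegen S hSne
    obtain ⟨f, hf⟩ := ih (S.erase v) (Finset.erase_ssubset hvS)
    set N : Finset V := (S.erase v).filter (fun u => G.Adj v u) with hN
    have hNcard : N.card ≤ d := by
      refine le_trans (Finset.card_le_card ?_) hdeg
      intro u hu
      simp only [hN, Finset.mem_filter, Finset.mem_erase] at hu ⊢
      exact ⟨hu.1.2, hu.2⟩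
    have hNS' : ∀ u ∈ N, u ∈ S.erase v := fun u hu => (Finset.mem_filter.mp hu).1
    have hNadj : ∀ u ∈ N, G.Adj v u := fun u hu => (Finset.mem_filter.mp hu).2
    have hinj : ∀ u ∈ S.erase v, ∀ y1 ∈ L u, ∀ y2 ∈ L u, f y1 = f y2 → y1 = y2 := by
      intro u hu y1 h1 y2 h2 he
      by_contra hne
      exact hf u hu u hu y1 h1 y2 h2 (hcover.clique u y1 h1 y2 h2 hne) he
    set F : W → Finset (Fin (2 * d)) :=
      fun x => N.biUnion (fun u => ((L u).filter (fun y => H.Adj x y)).image f) with hF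
    have hFcard : ∀ x ∈ L v, (F x).card ≤ d := by
      intro x hx
      calc (F x).card ≤ ∑ u ∈ N, (((L u).filter (fun y => H.Adj x y)).image f).card :=
            Finset.card_biUnion_le
        _ ≤ ∑ _u ∈ N, 1 := by
            refine Finset.sum_le_sum ?_
            intro u hu
            refine le_trans Finset.card_image_le (Finset.card_le_one.mpr ?_)
            intro y1 h1 y2 h2
            simp only [Finset.mem_filter] at h1 h2
            exact hcover.matching v u (hNadj u hu) x hx y1 h1.1 y2 h2.1 h1.2 h2.2
        _ = N.card := by simp
        _ ≤ d := hNcard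
    set t : {x // x ∈ L v} → Finset (Fin (2 * d)) := fun x => Finset.univ \ F x.1 with ht
    have htcard : ∀ x : {x // x ∈ L v}, d ≤ (t x).card := by
      intro x
      simp only [ht]
      have h1 := Finset.le_card_sdiff (F x.1) Finset.univ
      have h2 : (F x.1).card ≤ d := hFcard x.1 x.2
      simp only [Finset.card_univ, Fintype.card_fin] at h1
      omega
    have hall : ∀ A : Finset {x // x ∈ L v}, A.card ≤ (A.biUnion t).card := by
      intro A
      rcases A.eq_empty_or_nonempty with rfl | ⟨x0, hx0⟩
      · simp
      rcases le_or_gt A.card d with hle | hlt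
      · calc A.card ≤ d := hle
          _ ≤ (t x0).card := htcard x0
          _ ≤ (A.biUnion t).card :=
            Finset.card_le_card (fun c hc => Finset.mem_biUnion.mpr ⟨x0, hx0, hc⟩)
      · have huniv : A.biUnion t = Finset.univ := by
          refine Finset.eq_univ_of_forall ?_
          intro c
          by_contra hc
          have hall' : ∀ x ∈ A, c ∈ F x.1 := by
            intro x hx
            by_contra hcx
            exact hc (Finset.mem_biUnion.mpr
              ⟨x, hx, Finset.mem_sdiff.mpr ⟨Finset.mem_univ c, hcx⟩⟩)
          set Xu : V → Finset W := fun u =>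
            (L v).filter (fun x => ∃ y ∈ L u, H.Adj x y ∧ f y = c) with hXu
          have hXcard : ∀ u ∈ N, (Xu u).card ≤ 1 := by
            intro u hu
            refine Finset.card_le_one.mpr ?_
            intro x1 h1 x2 h2
            simp only [hXu, Finset.mem_filter] at h1 h2
            obtain ⟨hx1, y1, hy1, ha1, hc1⟩ := h1
            obtain ⟨hx2, y2, hy2, ha2, hc2⟩ := h2
            have hyy : y1 = y2 := hinj u (hNS' u hu) y1 hy1 y2 hy2 (hc1.trans hc2.symm)
            subst hyy
            exact hcover.matching u v (hNadj u hu).symm y1 hy1 x1 hx1 x2 hx2 ha1.symm ha2.symm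
          have hsub : A.image Subtype.val ⊆ N.biUnion Xu := by
            intro x hx
            obtain ⟨x', hx', rfl⟩ := Finset.mem_image.mp hx
            have hm := hall' x' hx'
            simp only [hF, Finset.mem_biUnion, Finset.mem_image, Finset.mem_filter] at hm
            obtain ⟨u, hu, y, ⟨hy, hadj⟩, hyc⟩ := hm
            refine Finset.mem_biUnion.mpr ⟨u, hu, ?_⟩
            simp only [hXu, Finset.mem_filter]
            exact ⟨x'.2, y, hy, hadj, hyc⟩
          have hAd : A.card ≤ d := by
            calc A.card = (A.image Subtype.val).card :=
                  (Finset.card_image_of_injective A Subtype.val_injective).symm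
              _ ≤ (N.biUnion Xu).card := Finset.card_le_card hsub
              _ ≤ ∑ u ∈ N, (Xu u).card := Finset.card_biUnion_le
              _ ≤ ∑ _u ∈ N, 1 := Finset.sum_le_sum hXcard
              _ = N.card := by simp
              _ ≤ d := hNcard
          omega
        rw [huniv]
        calc A.card ≤ Finset.univ.card := Finset.card_le_univ A
          _ = (L v).card := by simp [Finset.card_univ, Fintype.card_coe]
          _ = 2 * d := hfold v
          _ = (Finset.univ : Finset (Fin (2 * d))).card := by simp
    obtain ⟨g, hginj, hgmem⟩ := (Finset.all_card_le_biUnion_card_iff_exists_injective t).mp hall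
    have hgF : ∀ (x : {x // x ∈ L v}), g x ∉ F x.1 := by
      intro x
      have := hgmem x
      rw [ht] at this
      exact (Finset.mem_sdiff.mp this).2
    refine ⟨fun w => if h : w ∈ L v then g ⟨w, h⟩ else f w, ?_⟩
    intro u1 hu1 u2 hu2 x hx y hy hadj
    have hmemF : ∀ u ∈ N, ∀ x ∈ L v, ∀ y ∈ L u, H.Adj x y → f y ∈ F x := by
      intro u hu x hxv y hyu hxy
      refine Finset.mem_biUnion.mpr ⟨u, hu, Finset.mem_image.mpr ⟨y, ?_, rfl⟩⟩
      exact Finset.mem_filter.mpr ⟨hyu, hxy⟩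
    by_cases h1 : x ∈ L v <;> by_cases h2 : y ∈ L v
    · simp only [dif_pos h1, dif_pos h2]
      intro he
      exact hadj.ne (congrArg Subtype.val (hginj he))
    · -- x in L v, y not
      have hu2v : u2 ≠ v := by intro h; exact h2 (h ▸ hy)
      have hu2' : u2 ∈ S.erase v := Finset.mem_erase.mpr ⟨hu2v, hu2⟩
      by_cases hGa : G.Adj v u2
      · have huN : u2 ∈ N := Finset.mem_filter.mpr ⟨hu2', hGa⟩
        simp only [dif_pos h1, dif_neg h2]
        intro he
        exact hgF ⟨x, h1⟩ (he ▸ hmemF u2 huN x h1 y hy hadj)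
      · exact absurd hadj (hcover.nonadj v u2 (Ne.symm hu2v) hGa x h1 y hy)
    · -- y in L v, x not
      have hu1v : u1 ≠ v := by intro h; exact h1 (h ▸ hx)
      have hu1' : u1 ∈ S.erase v := Finset.mem_erase.mpr ⟨hu1v, hu1⟩
      by_cases hGa : G.Adj v u1
      · have huN : u1 ∈ N := Finset.mem_filter.mpr ⟨hu1', hGa⟩
        simp only [dif_neg h1, dif_pos h2]
        intro he
        exact hgF ⟨y, h2⟩ (he ▸ hmemF u1 huN y h2 x hx hadj.symm)
      · exact absurd hadj.symm (hcover.nonadj v u1 (Ne.symm hu1v) hGa y h2 x hx)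
    · have hu1v : u1 ≠ v := by intro h; exact h1 (h ▸ hx)
      have hu2v : u2 ≠ v := by intro h; exact h2 (h ▸ hy)
      simp only [dif_neg h1, dif_neg h2]
      exact hf u1 (Finset.mem_erase.mpr ⟨hu1v, hu1⟩) u2 (Finset.mem_erase.mpr ⟨hu2v, hu2⟩)
        x hx y hy hadj
  obtain ⟨f, hf⟩ := key Finset.univ
  refine ⟨f, ?_⟩
  intro x y hadj
  obtain ⟨u, hu, _⟩ := hcover.partition x
  obtain ⟨v, hv, _⟩ := hcover.partition y
  exact hf u (Finset.mem_univ u) v (Finset.mem_univ v) x hu y hv hadj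
end

section
/- Let G be a graph and let (L,H) be a correspondence-cover of G such that |L(v)| ≥ deg(v) + 1 for each vertex v. Then there exists a probability distribution on independent sets I of H such that for every vertex v of G and every x ∈ L(v), Pr(x ∈ I) ≥ 1/|L(v)|. In particular, χ_f(H) ≤ Δ(G)+1 when all lists have size Δ(G)+1. -/
open Finset
set_option linter.unusedSectionVars false
set_option maxHeartbeats 1000000

section Helpers
variable {W : Type*} [DecidableEq W] [Fintype W]

lemma aux_exists_inj (A B : Finset W) (h : A.card ≤ B.card) :
    ∃ g : W → W, Set.InjOn g A ∧ ∀ a ∈ A, g a ∈ B := by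
  classical
  obtain ⟨t, htB, htc⟩ := B.exists_subset_card_eq h
  have e : (A : Finset W) ≃ t := Finset.equivOfCardEq htc.symm
  refine ⟨fun w => if hw : w ∈ A then (e ⟨w, hw⟩ : W) else w, ?_, ?_⟩
  · intro a ha b hb hab
    simp only [Finset.mem_coe] at ha hb
    simp only [dif_pos ha, dif_pos hb] at hab
    exact congrArg Subtype.val (e.injective (Subtype.ext hab))
  · intro a ha
    simp only [dif_pos ha]
    exact htB (e ⟨a, ha⟩).2

lemma aux_sum_erase (x : W) (f : Finset W → ℝ) (Q : Finset W → Prop) [DecidablePred Q]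
    (hQ : ∀ S : Finset W, x ∉ S → (Q (insert x S) ↔ Q S)) :
    ∑ S ∈ univ.filter (fun S => x ∈ S ∧ Q S), f (S.erase x)
      = ∑ T ∈ univ.filter (fun T => x ∉ T ∧ Q T), f T := by
  refine Finset.sum_nbij' (fun S => S.erase x) (fun T => insert x T) ?_ ?_ ?_ ?_ ?_
  · intro S hS
    simp only [mem_filter, mem_univ, true_and] at hS ⊢
    refine ⟨notMem_erase _ _, ?_⟩
    rw [← hQ _ (notMem_erase x S), insert_erase hS.1]
    exact hS.2
  · intro S hS
    simp only [mem_filter, mem_univ, true_and] at hS ⊢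
    exact ⟨mem_insert_self _ _, by rw [hQ _ hS.1]; exact hS.2⟩
  · intro S hS
    simp only [mem_filter, mem_univ, true_and] at hS
    exact insert_erase hS.1
  · intro S hS
    simp only [mem_filter, mem_univ, true_and] at hS
    exact erase_insert hS.1
  · intro S hS
    rfl

lemma aux_sum_ite_erase (x : W) (f : Finset W → ℝ) (hf : ∀ T, x ∈ T → f T = 0) :
    ∑ S : Finset W, (if x ∈ S then f (S.erase x) else 0) = ∑ T : Finset W, f T := by
  rw [← Finset.sum_filter]
  have h1 : (univ.filter (fun S : Finset W => x ∈ S))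
      = univ.filter (fun S : Finset W => x ∈ S ∧ True) := by simp
  rw [h1, aux_sum_erase x f (fun _ => True) (fun _ _ => Iff.rfl)]
  refine Finset.sum_subset (filter_subset _ _) ?_
  intro T _ hT
  simp only [mem_filter, mem_univ, true_and, and_true, not_not] at hT
  exact hf T hT

lemma aux_marginal_eq (x y : W) (hxy : y ≠ x) (f : Finset W → ℝ)
    (hf : ∀ T, x ∈ T → f T = 0) :
    ∑ S ∈ univ.filter (fun S : Finset W => y ∈ S), (if x ∈ S then f (S.erase x) else 0)
      = ∑ T ∈ univ.filter (fun T : Finset W => y ∈ T), f T := by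
  rw [← Finset.sum_filter, Finset.filter_filter]
  have h1 : (univ.filter (fun S : Finset W => y ∈ S ∧ x ∈ S))
      = univ.filter (fun S : Finset W => x ∈ S ∧ y ∈ S) := by
    apply Finset.filter_congr; intro S _; exact and_comm
  rw [h1, aux_sum_erase x f (fun S => y ∈ S)
    (fun S _ => by simp [Finset.mem_insert, hxy])]
  refine Finset.sum_subset ?_ ?_
  · intro T hT; simp only [mem_filter, mem_univ, true_and] at hT ⊢; exact hT.2
  · intro T hT hT2
    simp only [mem_filter, mem_univ, true_and] at hT hT2
    apply hf T
    by_contra hx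
    exact hT2 ⟨hx, hT⟩

lemma aux_marginal_self (x : W) (f : Finset W → ℝ) (hf : ∀ T, x ∈ T → f T = 0) :
    ∑ S ∈ univ.filter (fun S : Finset W => x ∈ S), (if x ∈ S then f (S.erase x) else 0)
      = ∑ T : Finset W, f T := by
  rw [← aux_sum_ite_erase x f hf]
  refine Finset.sum_subset (filter_subset _ _) ?_
  intro T _ hT
  simp only [mem_filter, mem_univ, true_and] at hT
  simp [hT]

lemma aux_sigma (H : SimpleGraph W) (A B : Finset W)
    (hcard : B.card ≤ A.card)
    (h1 : ∀ x ∈ A, ∀ y ∈ B, ∀ y2 ∈ B, H.Adj x y → H.Adj x y2 → y = y2)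
    (h2 : ∀ y ∈ B, ∀ x ∈ A, ∀ x2 ∈ A, H.Adj y x → H.Adj y x2 → x = x2) :
    ∃ g : W → W, Set.InjOn g B ∧ (∀ y ∈ B, g y ∈ A) ∧
      (∀ y ∈ B, ∀ x ∈ A, H.Adj x y → g y = x) := by
  classical
  set π : W → W := fun y => if h : ∃ x ∈ A, H.Adj x y then h.choose else y with hπdef
  have hπ : ∀ y, (∃ x ∈ A, H.Adj x y) → π y ∈ A ∧ H.Adj (π y) y := by
    intro y h
    simp only [hπdef, dif_pos h]
    exact ⟨h.choose_spec.1, h.choose_spec.2⟩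
  set M : Finset W := B.filter (fun y => ∃ x ∈ A, H.Adj x y) with hMdef
  have hMmem : ∀ y ∈ M, (∃ x ∈ A, H.Adj x y) := by
    intro y hy; exact (Finset.mem_filter.1 hy).2
  have hMB : M ⊆ B := Finset.filter_subset _ _
  have hMinj : Set.InjOn π M := by
    intro y1 hy1 y2 hy2 he
    simp only [Finset.mem_coe] at hy1 hy2
    obtain ⟨hA1, hadj1⟩ := hπ y1 (hMmem y1 hy1)
    obtain ⟨hA2, hadj2⟩ := hπ y2 (hMmem y2 hy2)
    rw [he] at hadj1
    exact h1 (π y2) hA2 y1 (hMB hy1) y2 (hMB hy2) hadj1 hadj2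
  set R : Finset W := M.image π with hRdef
  have hRA : R ⊆ A := by
    intro a ha
    obtain ⟨y, hy, rfl⟩ := Finset.mem_image.1 ha
    exact (hπ y (hMmem y hy)).1
  have hRcard : R.card = M.card := Finset.card_image_of_injOn hMinj
  have hUB : (B \ M).card ≤ (A \ R).card := by
    rw [Finset.card_sdiff_of_subset hMB, Finset.card_sdiff_of_subset hRA, hRcard]
    exact Nat.sub_le_sub_right hcard _
  obtain ⟨g0, hg0inj, hg0mem⟩ := aux_exists_inj (B \ M) (A \ R) hUB
  refine ⟨fun y => if y ∈ M then π y else g0 y, ?_, ?_, ?_⟩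
  · intro y1 hy1 y2 hy2 he
    simp only [Finset.mem_coe] at hy1 hy2
    by_cases hm1 : y1 ∈ M <;> by_cases hm2 : y2 ∈ M
    · simp only [if_pos hm1, if_pos hm2] at he
      exact hMinj (Finset.mem_coe.2 hm1) (Finset.mem_coe.2 hm2) he
    · simp only [if_pos hm1, if_neg hm2] at he
      have h3 : π y1 ∈ R := Finset.mem_image_of_mem π hm1
      have h4 : g0 y2 ∈ A \ R := hg0mem y2 (Finset.mem_sdiff.2 ⟨hy2, hm2⟩)
      exact absurd (he ▸ h3) (Finset.mem_sdiff.1 h4).2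
    · simp only [if_neg hm1, if_pos hm2] at he
      have h3 : π y2 ∈ R := Finset.mem_image_of_mem π hm2
      have h4 : g0 y1 ∈ A \ R := hg0mem y1 (Finset.mem_sdiff.2 ⟨hy1, hm1⟩)
      exact absurd (he.symm ▸ h3) (Finset.mem_sdiff.1 h4).2
    · simp only [if_neg hm1, if_neg hm2] at he
      exact hg0inj (Finset.mem_coe.2 (Finset.mem_sdiff.2 ⟨hy1, hm1⟩))
        (Finset.mem_coe.2 (Finset.mem_sdiff.2 ⟨hy2, hm2⟩)) he
  · intro y hy
    by_cases hm : y ∈ M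
    · simp only [if_pos hm]
      exact (hπ y (hMmem y hm)).1
    · simp only [if_neg hm]
      exact (Finset.mem_sdiff.1 (hg0mem y (Finset.mem_sdiff.2 ⟨hy, hm⟩))).1
  · intro y hy x hx hadj
    have hm : y ∈ M := Finset.mem_filter.2 ⟨hy, ⟨x, hx, hadj⟩⟩
    simp only [if_pos hm]
    obtain ⟨hA, hadj'⟩ := hπ y (hMmem y hm)
    exact (h2 y hy x hx (π y) hA hadj.symm hadj'.symm).symm

lemma aux_empty {V : Type*} (H : SimpleGraph W) (L : V → Finset W)
    (hL : ∀ v, L v = ∅) :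
    ∃ p : Finset W → ℝ, (∀ S, 0 ≤ p S) ∧ (∑ S : Finset W, p S = 1) ∧
      (∀ S, 0 < p S → ∀ x ∈ S, ∀ y ∈ S, ¬ H.Adj x y) ∧
      (∀ S, 0 < p S → ∀ x ∈ S, ∃ v, x ∈ L v) ∧
      (∀ v : V, ∀ x ∈ L v, 1 / ((L v).card : ℝ) ≤
        ∑ S ∈ univ.filter (fun S : Finset W => x ∈ S), p S) := by
  classical
  refine ⟨fun S => if S = ∅ then 1 else 0, ?_, ?_, ?_, ?_, ?_⟩
  · intro S; dsimp only; split <;> norm_num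
  · simp
  · intro S hS x hx y hy
    have hSne : S = ∅ := by
      by_contra h; simp only [if_neg h] at hS; exact lt_irrefl 0 hS
    subst hSne; simp at hx
  · intro S hS x hx
    have hSne : S = ∅ := by
      by_contra h; simp only [if_neg h] at hS; exact lt_irrefl 0 hS
    subst hSne; simp at hx
  · intro v x hx; rw [hL v] at hx; simp at hx
end Helpers

section Key
variable {W : Type*} [DecidableEq W] [Fintype W]


lemma aux_key {V : Type*} [Fintype V] (H : SimpleGraph W) :
    ∀ (n : ℕ) (G : SimpleGraph V) (L : V → Finset W),
    (∑ v, (L v).card) ≤ n →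
    (∀ u v : V, u ≠ v → Disjoint (L u) (L v)) →
    (∀ v : V, ∀ x ∈ L v, ∀ y ∈ L v, x ≠ y → H.Adj x y) →
    (∀ u v : V, u ≠ v → ¬ G.Adj u v → ∀ x ∈ L u, ∀ y ∈ L v, ¬ H.Adj x y) →
    (∀ u v : V, G.Adj u v → ∀ x ∈ L u, ∀ y ∈ L v, ∀ y2 ∈ L v,
        H.Adj x y → H.Adj x y2 → y = y2) →
    (∀ v : V, (L v).Nonempty → {u | G.Adj v u}.ncard + 1 ≤ (L v).card) →
    ∃ p : Finset W → ℝ,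
      (∀ S, 0 ≤ p S) ∧ (∑ S : Finset W, p S = 1) ∧
      (∀ S, 0 < p S → ∀ x ∈ S, ∀ y ∈ S, ¬ H.Adj x y) ∧
      (∀ S, 0 < p S → ∀ x ∈ S, ∃ v, x ∈ L v) ∧
      (∀ v : V, ∀ x ∈ L v, 1 / ((L v).card : ℝ) ≤
        ∑ S ∈ univ.filter (fun S : Finset W => x ∈ S), p S) := by
  intro n
  induction n with
  | zero =>
    intro G L hsum _ _ _ _ _
    refine aux_empty H L ?_
    intro v
    have h1 : (L v).card = 0 := by
      have h2 : (L v).card ≤ ∑ u, (L u).card :=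
        Finset.single_le_sum (f := fun u => (L u).card) (fun u _ => Nat.zero_le _) (mem_univ v)
      omega
    exact Finset.card_eq_zero.1 h1
  | succ n ih =>
    intro G L hsum hdisj hclique hnonadj hmatch hdeg
    classical
    by_cases hall : ∀ v, L v = ∅
    · exact aux_empty H L hall
    push_neg at hall
    obtain ⟨v0, hv0⟩ := hall
    obtain ⟨v, -, hvmax⟩ := Finset.exists_max_image (univ : Finset V)
      (fun v => (L v).card) ⟨v0, mem_univ v0⟩
    have hvne : (L v).Nonempty := by
      rw [← Finset.card_pos]
      have h0 : 0 < (L v0).card :=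
        Finset.card_pos.2 hv0
      have := hvmax v0 (mem_univ v0)
      omega
    set ℓ := (L v).card with hℓ
    have hℓpos : 0 < ℓ := Finset.card_pos.2 hvne
    set G' : SimpleGraph V :=
      { Adj := fun a b => G.Adj a b ∧ a ≠ v ∧ b ≠ v,
        symm := ⟨by intro a b h; exact ⟨h.1.symm, h.2.2, h.2.1⟩⟩,
        loopless := ⟨fun a h => G.loopless.irrefl a h.1⟩ } with hG'def
    have hG'adj : ∀ a b, G'.Adj a b ↔ (G.Adj a b ∧ a ≠ v ∧ b ≠ v) := fun a b => Iff.rfl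
    have hσex : ∀ u : V, G.Adj v u → ∃ g : W → W, Set.InjOn g (L u) ∧
        (∀ y ∈ L u, g y ∈ L v) ∧ (∀ y ∈ L u, ∀ x ∈ L v, H.Adj x y → g y = x) := by
      intro u hu
      exact aux_sigma H (L v) (L u) (hvmax u (mem_univ u)) (hmatch v u hu) (hmatch u v hu.symm)
    choose σ hσinj hσmem hσmatch using hσex
    set L' : W → V → Finset W := fun x u =>
      if u = v then ∅ else
        if h : G.Adj v u then (L u).filter (fun y => σ u h y ≠ x) else L u with hL'def
    have hL'v : ∀ x, L' x v = ∅ := fun x => by simp [hL'def]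
    have hL'adj : ∀ (x : W) (u : V) (h : G.Adj v u),
        L' x u = (L u).filter (fun y => σ u h y ≠ x) := by
      intro x u h
      have huv : u ≠ v := fun e => G.loopless.irrefl v (e ▸ h)
      simp [hL'def, huv, h]
    have hL'nadj : ∀ (x : W) (u : V), u ≠ v → ¬ G.Adj v u → L' x u = L u := by
      intro x u huv h
      simp [hL'def, huv, h]
    have hL'sub : ∀ x u, L' x u ⊆ L u := by
      intro x u
      by_cases h : u = v
      · subst h; rw [hL'v]; exact Finset.empty_subset _
      by_cases h2 : G.Adj v u
      · rw [hL'adj x u h2]; exact filter_subset _ _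
      · rw [hL'nadj x u h h2]
    -- apply induction hypothesis
    have main : ∀ x, x ∈ L v → ∃ q : Finset W → ℝ,
        (∀ S, 0 ≤ q S) ∧ (∑ S : Finset W, q S = 1) ∧
        (∀ S, 0 < q S → ∀ a ∈ S, ∀ b ∈ S, ¬ H.Adj a b) ∧
        (∀ S, 0 < q S → ∀ a ∈ S, ∃ u, a ∈ L' x u) ∧
        (∀ u : V, ∀ y ∈ L' x u, 1 / ((L' x u).card : ℝ) ≤
          ∑ S ∈ univ.filter (fun S : Finset W => y ∈ S), q S) := by
      intro x hx
      apply ih G' (L' x)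
      · -- measure
        have e1 := Finset.sum_erase_add univ (fun u => (L' x u).card) (mem_univ v)
        have e2 := Finset.sum_erase_add univ (fun u => (L u).card) (mem_univ v)
        have e3 : ∑ u ∈ univ.erase v, (L' x u).card ≤ ∑ u ∈ univ.erase v, (L u).card :=
          Finset.sum_le_sum (fun u _ => Finset.card_le_card (hL'sub x u))
        have e4 : (L' x v).card = 0 := by rw [hL'v]; rfl
        omega
      · intro u1 u2 hne
        exact (hdisj u1 u2 hne).mono (hL'sub x u1) (hL'sub x u2)
      · intro u a ha b hb
        exact hclique u a (hL'sub x u ha) b (hL'sub x u hb)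
      · intro u1 u2 hne hnadj a ha b hb
        by_cases h : G.Adj u1 u2
        · have hcase : u1 = v ∨ u2 = v := by
            by_contra hc
            push_neg at hc
            exact hnadj ((hG'adj u1 u2).2 ⟨h, hc.1, hc.2⟩)
          rcases hcase with rfl | rfl
          · rw [hL'v] at ha; exact absurd ha (Finset.notMem_empty a)
          · rw [hL'v] at hb; exact absurd hb (Finset.notMem_empty b)
        · exact hnonadj u1 u2 hne h a (hL'sub x u1 ha) b (hL'sub x u2 hb)
      · intro u1 u2 hadj a ha b hb b2 hb2 h1 h2
        exact hmatch u1 u2 ((hG'adj u1 u2).1 hadj).1 a (hL'sub x u1 ha)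
          b (hL'sub x u2 hb) b2 (hL'sub x u2 hb2) h1 h2
      · -- degrees
        intro u hne
        have huv : u ≠ v := by
          rintro rfl
          rw [hL'v] at hne
          exact absurd hne (by simp)
        have hLune : (L u).Nonempty := hne.mono (hL'sub x u)
        have hdegu := hdeg u hLune
        by_cases h : G.Adj v u
        · have hset : {b | G'.Adj u b} = {b | G.Adj u b} \ {v} := by
            ext b
            simp only [Set.mem_setOf_eq, Set.mem_diff, Set.mem_singleton_iff, hG'adj]
            constructor
            · rintro ⟨hb, -, hbv⟩; exact ⟨hb, hbv⟩
            · rintro ⟨hb, hbv⟩; exact ⟨hb, huv, hbv⟩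
          have hvmem : v ∈ {b | G.Adj u b} := h.symm
          have hncard : {b | G'.Adj u b}.ncard = {b | G.Adj u b}.ncard - 1 := by
            rw [hset]
            exact Set.ncard_diff_singleton_of_mem hvmem
          have hpos : 0 < {b | G.Adj u b}.ncard :=
            (Set.ncard_pos (Set.toFinite _)).2 ⟨v, hvmem⟩
          have hcard : (L u).card - 1 ≤ (L' x u).card := by
            rw [hL'adj x u h]
            have hsplit := Finset.card_filter_add_card_filter_not
              (s := L u) (p := fun y => σ u h y ≠ x)
            have hle1 : ((L u).filter (fun y => ¬ (σ u h y ≠ x))).card ≤ 1 := by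
              refine Finset.card_le_one.2 ?_
              intro a ha b hb
              simp only [mem_filter, not_not] at ha hb
              exact hσinj u h (Finset.mem_coe.2 ha.1) (Finset.mem_coe.2 hb.1)
                (ha.2.trans hb.2.symm)
            omega
          omega
        · have hset : {b | G'.Adj u b} ⊆ {b | G.Adj u b} := fun b hb => hb.1
          have hle : {b | G'.Adj u b}.ncard ≤ {b | G.Adj u b}.ncard :=
            Set.ncard_le_ncard hset (Set.toFinite _)
          rw [hL'nadj x u huv h]
          omega
    choose! q hq1 hq2 hq3 hq4 hq5 using main
    have hzero : ∀ x ∈ L v, ∀ T, x ∈ T → q x T = 0 := by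
      intro x hx T hxT
      refine le_antisymm ?_ (hq1 x hx T)
      by_contra hlt
      push_neg at hlt
      obtain ⟨u, hu⟩ := hq4 x hx T hlt x hxT
      have huv : u ≠ v := by
        rintro rfl
        rw [hL'v] at hu
        exact absurd hu (Finset.notMem_empty x)
      exact (Finset.disjoint_left.1 (hdisj u v huv)) (hL'sub x u hu) hx
    set F : W → Finset W → ℝ := fun x S => if x ∈ S then q x (S.erase x) else 0 with hF
    set p : Finset W → ℝ := fun S => (∑ x ∈ L v, F x S) / ℓ with hp
    have hFnn : ∀ x ∈ L v, ∀ S, 0 ≤ F x S := by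
      intro x hx S
      simp only [hF]
      split
      · exact hq1 x hx _
      · exact le_refl _
    have hpnn : ∀ S, 0 ≤ p S := by
      intro S
      exact div_nonneg (Finset.sum_nonneg fun x hx => hFnn x hx S) (Nat.cast_nonneg ℓ)
    have hℓR : (0:ℝ) < (ℓ:ℝ) := by exact_mod_cast hℓpos
    refine ⟨p, hpnn, ?_, ?_, ?_, ?_⟩
    · -- total sum
      simp only [hp]
      rw [← Finset.sum_div, Finset.sum_comm]
      have he : ∀ x ∈ L v, ∑ S : Finset W, F x S = 1 := by
        intro x hx
        simp only [hF]
        rw [aux_sum_ite_erase x (q x) (hzero x hx)]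
        exact hq2 x hx
      rw [Finset.sum_congr rfl he, Finset.sum_const, nsmul_eq_mul, mul_one]
      exact div_self (ne_of_gt hℓR)
    · -- independence
      intro S hS a ha b hb
      have hex : ∃ x ∈ L v, 0 < F x S := by
        by_contra hc
        push_neg at hc
        have h1 : ∑ x ∈ L v, F x S ≤ 0 := Finset.sum_nonpos hc
        have h2 : p S ≤ 0 := div_nonpos_of_nonpos_of_nonneg h1 (Nat.cast_nonneg ℓ)
        linarith
      obtain ⟨x, hx, hFx⟩ := hex
      have hxS : x ∈ S := by
        by_contra h
        simp only [hF, if_neg h] at hFx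
        exact lt_irrefl 0 hFx
      have hqpos : 0 < q x (S.erase x) := by
        simpa only [hF, if_pos hxS] using hFx
      have hT3 := hq3 x hx _ hqpos
      have hT4 := hq4 x hx _ hqpos
      have key2 : ∀ c ∈ S, c ≠ x → ¬ H.Adj x c := by
        intro c hc hcx hHxc
        obtain ⟨u, hu⟩ := hT4 c (Finset.mem_erase.2 ⟨hcx, hc⟩)
        have huv : u ≠ v := by
          rintro rfl
          rw [hL'v] at hu
          exact absurd hu (Finset.notMem_empty c)
        by_cases hadj : G.Adj v u
        · rw [hL'adj x u hadj] at hu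
          simp only [mem_filter] at hu
          exact hu.2 (hσmatch u hadj c hu.1 x hx hHxc)
        · rw [hL'nadj x u huv hadj] at hu
          exact hnonadj v u (Ne.symm huv) hadj x hx c hu hHxc
      by_cases hax : a = x
      · by_cases hbx : b = x
        · rw [hax, hbx]; exact fun h => H.loopless.irrefl _ h
        · rw [hax]; exact key2 b hb hbx
      · by_cases hbx : b = x
        · rw [hbx]; exact fun h => key2 a ha hax h.symm
        · exact hT3 a (Finset.mem_erase.2 ⟨hax, ha⟩) b (Finset.mem_erase.2 ⟨hbx, hb⟩)
    · -- support
      intro S hS a ha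
      have hex : ∃ x ∈ L v, 0 < F x S := by
        by_contra hc
        push_neg at hc
        have h1 : ∑ x ∈ L v, F x S ≤ 0 := Finset.sum_nonpos hc
        have h2 : p S ≤ 0 := div_nonpos_of_nonpos_of_nonneg h1 (Nat.cast_nonneg ℓ)
        linarith
      obtain ⟨x, hx, hFx⟩ := hex
      have hxS : x ∈ S := by
        by_contra h
        simp only [hF, if_neg h] at hFx
        exact lt_irrefl 0 hFx
      have hqpos : 0 < q x (S.erase x) := by
        simpa only [hF, if_pos hxS] using hFx
      by_cases hax : a = x
      · rw [hax]; exact ⟨v, hx⟩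
      · obtain ⟨u, hu⟩ := hq4 x hx _ hqpos a (Finset.mem_erase.2 ⟨hax, ha⟩)
        exact ⟨u, hL'sub x u hu⟩
    · -- marginals
      intro u y hy
      have hrw : ∑ S ∈ univ.filter (fun S : Finset W => y ∈ S), p S
          = (∑ x ∈ L v, ∑ S ∈ univ.filter (fun S : Finset W => y ∈ S), F x S) / ℓ := by
        simp only [hp]
        rw [← Finset.sum_div, Finset.sum_comm]
      rw [hrw]
      rcases eq_or_ne u v with rfl | huv
      · have h1 : ∑ S ∈ univ.filter (fun S : Finset W => y ∈ S), F y S = 1 := by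
          simp only [hF]
          rw [aux_marginal_self y (q y) (hzero y hy)]
          exact hq2 y hy
        have h2 : 1 ≤ ∑ x ∈ L u, ∑ S ∈ univ.filter (fun S : Finset W => y ∈ S), F x S := by
          rw [← h1]
          exact Finset.single_le_sum
            (fun x hx => Finset.sum_nonneg fun S _ => hFnn x hx S) hy
        rw [div_le_div_iff₀ (by positivity) hℓR]
        calc (1:ℝ) * ℓ = ℓ := one_mul _
        _ ≤ (∑ x ∈ L u, ∑ S ∈ univ.filter (fun S : Finset W => y ∈ S), F x S) * (L u).card := by
            nlinarith [h2, hℓR]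
      · -- u ≠ v
        have hyx : ∀ x ∈ L v, y ≠ x := fun x hx e =>
          (Finset.disjoint_left.1 (hdisj u v huv)) hy (e ▸ hx)
        have hterm : ∀ x ∈ L v, ∑ S ∈ univ.filter (fun S : Finset W => y ∈ S), F x S
            = ∑ T ∈ univ.filter (fun T : Finset W => y ∈ T), q x T := by
          intro x hx
          simp only [hF]
          exact aux_marginal_eq x y (hyx x hx) (q x) (hzero x hx)
        have hterm2 : ∀ x ∈ L v, y ∈ L' x u →
            1 / ((L' x u).card : ℝ) ≤
              ∑ S ∈ univ.filter (fun S : Finset W => y ∈ S), F x S := by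
          intro x hx hy'
          rw [hterm x hx]
          exact hq5 x hx u y hy'
        set k := (L u).card with hk
        have hk1 : 1 ≤ k := Finset.card_pos.2 ⟨y, hy⟩
        have hkl : k ≤ ℓ := hvmax u (mem_univ u)
        have hkR : (0:ℝ) < (k:ℝ) := by exact_mod_cast hk1
        by_cases hadj : G.Adj v u
        · have hk2 : 2 ≤ k := by
            have h1 := hdeg u ⟨y, hy⟩
            have h2 : 0 < {b | G.Adj u b}.ncard :=
              (Set.ncard_pos (Set.toFinite _)).2 ⟨v, hadj.symm⟩
            omega
          have hk1R : (0:ℝ) < (k:ℝ) - 1 := by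
            have h3 : (2:ℝ) ≤ (k:ℝ) := by exact_mod_cast hk2
            linarith
          set R := (L u).image (σ u hadj) with hRdef
          have hRsub : R ⊆ L v := by
            intro a ha
            obtain ⟨y0, hy0, rfl⟩ := Finset.mem_image.1 ha
            exact hσmem u hadj y0 hy0
          have hRcard : R.card = k := Finset.card_image_of_injOn (hσinj u hadj)
          have hσyR : σ u hadj y ∈ R := Finset.mem_image_of_mem _ hy
          set B : W → ℝ := fun x =>
            if x ∈ R then (if x = σ u hadj y then 0 else 1 / ((k:ℝ) - 1)) else 1 / (k:ℝ)
            with hBdef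
          have hclaim1 : ∀ x ∈ L v,
              B x ≤ ∑ S ∈ univ.filter (fun S : Finset W => y ∈ S), F x S := by
            intro x hx
            by_cases hxR : x ∈ R
            · by_cases hxy : x = σ u hadj y
              · simp only [hBdef, if_pos hxR, if_pos hxy]
                exact Finset.sum_nonneg fun S _ => hFnn x hx S
              · obtain ⟨y0, hy0, hσy0⟩ := Finset.mem_image.1 hxR
                have hy0y : y0 ≠ y := by
                  rintro rfl
                  exact hxy hσy0.symm
                have hLeq : L' x u = (L u).erase y0 := by
                  rw [hL'adj x u hadj]
                  ext z
                  simp only [Finset.mem_filter, Finset.mem_erase]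
                  constructor
                  · rintro ⟨hz, hne2⟩
                    refine ⟨?_, hz⟩
                    rintro rfl
                    exact hne2 hσy0
                  · rintro ⟨hne2, hz⟩
                    refine ⟨hz, fun he => hne2 ?_⟩
                    exact hσinj u hadj (Finset.mem_coe.2 hz) (Finset.mem_coe.2 hy0)
                      (he.trans hσy0.symm)
                have hycard : (L' x u).card = k - 1 := by
                  rw [hLeq, Finset.card_erase_of_mem hy0]
                have hyL' : y ∈ L' x u := by
                  rw [hLeq]
                  exact Finset.mem_erase.2 ⟨Ne.symm hy0y, hy⟩
                have h5 := hterm2 x hx hyL'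
                rw [hycard] at h5
                simp only [hBdef, if_pos hxR, if_neg hxy]
                calc 1 / ((k:ℝ) - 1) = 1 / (((k - 1 : ℕ)) : ℝ) := by
                      rw [Nat.cast_sub hk1]
                      norm_num
                _ ≤ _ := h5
            · have hLeq : L' x u = L u := by
                rw [hL'adj x u hadj]
                refine Finset.filter_true_of_mem ?_
                intro z hz he
                exact hxR (he ▸ Finset.mem_image_of_mem _ hz)
              have hyL' : y ∈ L' x u := by rw [hLeq]; exact hy
              have h5 := hterm2 x hx hyL'
              rw [hLeq] at h5
              simp only [hBdef, if_neg hxR]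
              exact h5
          have hclaim2 : (ℓ:ℝ) / k ≤ ∑ x ∈ L v, B x := by
            rw [← Finset.sum_sdiff hRsub]
            have hs1 : ∑ x ∈ L v \ R, B x = ((ℓ - k : ℕ) : ℝ) * (1 / (k:ℝ)) := by
              have he1 : ∀ x ∈ L v \ R, B x = 1 / (k:ℝ) := by
                intro x hx
                simp only [hBdef, if_neg (Finset.mem_sdiff.1 hx).2]
              rw [Finset.sum_congr rfl he1, Finset.sum_const, Finset.card_sdiff_of_subset hRsub, hRcard,
                nsmul_eq_mul]
            have hs2 : ∑ x ∈ R, B x = 1 := by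
              have he : ∀ x ∈ R, B x
                  = 1 / ((k:ℝ)-1) - (if x = σ u hadj y then 1 / ((k:ℝ)-1) else 0) := by
                intro x hx
                simp only [hBdef, if_pos hx]
                split <;> simp
              rw [Finset.sum_congr rfl he, Finset.sum_sub_distrib, Finset.sum_const,
                Finset.sum_ite_eq' R (σ u hadj y) (fun _ => 1 / ((k:ℝ)-1)), if_pos hσyR,
                hRcard, nsmul_eq_mul]
              field_simp
            rw [hs1, hs2, Nat.cast_sub hkl]
            have : ((ℓ:ℝ) - k) * (1 / k) + 1 = (ℓ:ℝ)/k := by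
              field_simp
              ring
            rw [this]
          have hsum2 : (ℓ:ℝ)/k ≤
              ∑ x ∈ L v, ∑ S ∈ univ.filter (fun S : Finset W => y ∈ S), F x S :=
            le_trans hclaim2 (Finset.sum_le_sum hclaim1)
          rw [div_le_div_iff₀ hkR hℓR]
          calc (1:ℝ) * ℓ = ℓ := one_mul _
          _ ≤ (∑ x ∈ L v, ∑ S ∈ univ.filter (fun S : Finset W => y ∈ S), F x S) * k :=
            (div_le_iff₀ hkR).1 hsum2
        · have hterm3 : ∀ x ∈ L v,
              1/(k:ℝ) ≤ ∑ S ∈ univ.filter (fun S : Finset W => y ∈ S), F x S := by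
            intro x hx
            have hLeq : L' x u = L u := hL'nadj x u huv hadj
            have hyL' : y ∈ L' x u := by rw [hLeq]; exact hy
            have h5 := hterm2 x hx hyL'
            rw [hLeq] at h5
            exact h5
          have hsum2 : (ℓ:ℝ)/k ≤
              ∑ x ∈ L v, ∑ S ∈ univ.filter (fun S : Finset W => y ∈ S), F x S := by
            calc (ℓ:ℝ)/k = ∑ x ∈ L v, 1/(k:ℝ) := by
                  rw [Finset.sum_const, nsmul_eq_mul, mul_one_div]
            _ ≤ _ := Finset.sum_le_sum hterm3
          rw [div_le_div_iff₀ hkR hℓR]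
          calc (1:ℝ) * ℓ = ℓ := one_mul _
          _ ≤ (∑ x ∈ L v, ∑ S ∈ univ.filter (fun S : Finset W => y ∈ S), F x S) * k :=
            (div_le_iff₀ hkR).1 hsum2
end Key

/-- If `(L,H)` is a correspondence-cover of `G` with `|L v| ≥ deg v + 1` for all `v`,
then there is a probability distribution on independent sets `I` of `H` such that
`Pr(x ∈ I) ≥ 1/|L v|` for each `v` and each `x ∈ L v`. -/
theorem stmt15 {V W : Type*} [Fintype V] [Fintype W] [DecidableEq W]
    (G : SimpleGraph V) [DecidableRel G.Adj]
    (H : SimpleGraph W) (L : V → Finset W) (hcover : CorrCover G H L)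
    (hsize : ∀ v : V, G.degree v + 1 ≤ (L v).card) :
    ∃ p : Finset W → ℝ,
      (∀ S : Finset W, 0 ≤ p S) ∧ (∑ S : Finset W, p S = 1) ∧
      (∀ S : Finset W, 0 < p S → ∀ x ∈ S, ∀ y ∈ S, ¬ H.Adj x y) ∧
      (∀ v : V, ∀ x ∈ L v, 1 / ((L v).card : ℝ) ≤
        ∑ S ∈ univ.filter (fun S : Finset W => x ∈ S), p S) := by
  classical
  have hdisj : ∀ u v : V, u ≠ v → Disjoint (L u) (L v) := by
    intro u v huv
    rw [Finset.disjoint_left]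
    intro a hau hav
    obtain ⟨w, hw, huniq⟩ := hcover.partition a
    exact huv ((huniq u hau).trans (huniq v hav).symm)
  have hdeg : ∀ v : V, (L v).Nonempty → {u | G.Adj v u}.ncard + 1 ≤ (L v).card := by
    intro v _
    have h1 : {u | G.Adj v u}.ncard = G.degree v := by
      have h2 : {u | G.Adj v u} = (G.neighborSet v) := rfl
      rw [h2, ← Nat.card_coe_set_eq, Nat.card_eq_fintype_card,
        SimpleGraph.card_neighborSet_eq_degree]
    rw [h1]
    exact hsize v
  obtain ⟨p, h1, h2, h3, -, h5⟩ := aux_key H (∑ v, (L v).card) G L le_rfl hdisj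
    hcover.clique hcover.nonadj hcover.matching hdeg
  exact ⟨p, h1, h2, h3, h5⟩
end

section
/- For any graph G, the fractional correspondence packing number satisfies χ•_c(G) ≤ Δ(G) + 1, where Δ(G) is the maximum degree. -/
open Finset

lemma arith1 (sv su T D : ℝ) (h2 : 2 ≤ su) (hD : D ≤ sv * (T / su)) :
    sv * (T / su) * (su - 1) ≤ sv * T - D := by
  have hsu0 : (0:ℝ) < su := by linarith
  have e : sv * (T / su) * su = sv * T := by
    field_simp
  have e2 : sv * (T / su) * (su - 1) = sv * (T / su) * su - sv * (T / su) := by ring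
  rw [e] at e2
  linarith

open scoped Classical in
lemma pack {V W : Type*} [DecidableEq V] [DecidableEq W] [Inhabited W]
    (R : W → W → Prop) (hsym : ∀ x y, R x y → R y x)
    (w : W → ℝ) (hw : ∀ x, 0 ≤ w x) :
    ∀ (n : ℕ) (A : Finset V) (L : V → Finset W), A.card = n →
    (∀ u ∈ A, ∀ v ∈ A, u ≠ v → ∀ x ∈ L v, ((L u).filter (fun y => R x y)).card ≤ 1) →
    (∀ v ∈ A, (A.filter (fun u => u ≠ v ∧ ∃ x ∈ L v, ∃ y ∈ L u, R x y)).card < (L v).card) →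
    ∃ f : V → W, (∀ v ∈ A, f v ∈ L v) ∧
      (∀ u ∈ A, ∀ v ∈ A, u ≠ v → ¬ R (f u) (f v)) ∧
      ∑ v ∈ A, (∑ y ∈ L v, w y) / ((L v).card : ℝ) ≤ ∑ v ∈ A, w (f v) := by
  intro n
  induction n with
  | zero =>
      intro A L hA _ _
      rw [Finset.card_eq_zero] at hA
      subst hA
      exact ⟨fun _ => default, by simp, by simp, by simp⟩
  | succ n ih =>
      intro A L hA hmatch hdeg
      have hAne : A.Nonempty := by
        rw [← Finset.card_pos, hA]; omega
      obtain ⟨v, hvA, hvmax⟩ := A.exists_max_image (fun u => (L u).card) hAne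
      have hsv : 0 < (L v).card := lt_of_le_of_lt (Nat.zero_le _) (hdeg v hvA)
      have hLvne : (L v).Nonempty := Finset.card_pos.mp hsv
      set nbrs : Finset V := A.filter (fun u => u ≠ v ∧ ∃ x ∈ L v, ∃ y ∈ L u, R x y) with hnbrs
      -- basic facts about neighbours
      have hnbrA : ∀ u ∈ nbrs, u ∈ A := fun u hu => (Finset.mem_filter.mp hu).1
      have hnbrne : ∀ u ∈ nbrs, u ≠ v := fun u hu => (Finset.mem_filter.mp hu).2.1
      have hnbr2 : ∀ u ∈ nbrs, 2 ≤ (L u).card := by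
        intro u hu
        have hvmem : v ∈ A.filter (fun u' => u' ≠ u ∧ ∃ x ∈ L u, ∃ y ∈ L u', R x y) := by
          obtain ⟨x, hx, y, hy, hR⟩ := (Finset.mem_filter.mp hu).2.2
          exact Finset.mem_filter.mpr ⟨hvA, (hnbrne u hu).symm, y, hy, x, hx, hsym _ _ hR⟩
        have h1 : 1 ≤ (A.filter (fun u' => u' ≠ u ∧ ∃ x ∈ L u, ∃ y ∈ L u', R x y)).card :=
          Finset.card_pos.mpr ⟨v, hvmem⟩
        have := hdeg u (hnbrA u hu)
        omega
      have hLune : ∀ u ∈ A, (L u).Nonempty := by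
        intro u hu
        exact Finset.card_pos.mp (lt_of_le_of_lt (Nat.zero_le _) (hdeg u hu))
      -- minimum-weight elements
      set m : V → W := fun u =>
        if h : (L u).Nonempty then (Finset.exists_min_image (L u) w h).choose else default
        with hm
      have hmmem : ∀ u ∈ A, m u ∈ L u := by
        intro u hu
        simp only [hm, dif_pos (hLune u hu)]
        exact (Finset.exists_min_image (L u) w (hLune u hu)).choose_spec.1
      have hmmin : ∀ u ∈ A, ∀ y ∈ L u, w (m u) ≤ w y := by
        intro u hu
        simp only [hm, dif_pos (hLune u hu)]
        exact (Finset.exists_min_image (L u) w (hLune u hu)).choose_spec.2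
      -- the deleted sets
      set fR : V → W → Finset W := fun u x => (L u).filter (fun y => R x y) with hfR
      set del : V → W → Finset W := fun u x => if (fR u x).Nonempty then fR u x else {m u}
        with hdel
      have hdelsub : ∀ u ∈ A, ∀ x, del u x ⊆ L u := by
        intro u hu x
        simp only [hdel]
        split
        · exact Finset.filter_subset _ _
        · simpa using hmmem u hu
      have hdelcard : ∀ u ∈ nbrs, ∀ x ∈ L v, (del u x).card = 1 := by
        intro u hu x hx
        simp only [hdel]
        split
        · next h =>
            have h2 : (fR u x).card ≤ 1 := by
              simp only [hfR]; exact hmatch u (hnbrA u hu) v hvA (hnbrne u hu) x hx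
            have h1 : 1 ≤ (fR u x).card := Finset.card_pos.mpr h
            omega
        · simp
      -- summed weight of deletions is controlled
      have SU : ∀ u ∈ nbrs, ∑ x ∈ L v, ∑ y ∈ del u x, w y ≤
          ((L v).card : ℝ) * ((∑ y ∈ L u, w y) / ((L u).card : ℝ)) := by
        intro u hu
        have huA := hnbrA u hu
        set matchd := (L v).filter (fun x => (fR u x).Nonempty) with hmd
        have hmdsub : matchd ⊆ L v := Finset.filter_subset _ _
        have hmdcard : matchd.card ≤ (L v).card := Finset.card_le_card hmdsub
        have hsu2 : 2 ≤ (L u).card := hnbr2 u hu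
        have hsuv : (L u).card ≤ (L v).card := hvmax u huA
        have hT0 : (0:ℝ) ≤ ∑ y ∈ L u, w y := Finset.sum_nonneg (fun y _ => hw y)
        have hm0 : (0:ℝ) ≤ w (m u) := hw _
        have hmT : ((L u).card : ℝ) * w (m u) ≤ ∑ y ∈ L u, w y := by
          have := Finset.card_nsmul_le_sum (L u) w (w (m u)) (fun y hy => hmmin u huA y hy)
          simpa [nsmul_eq_mul] using this
        -- count function
        have hcnt1 : ∀ y ∈ L u, ((matchd.filter (fun x => R x y)).card : ℝ) ≤ 1 := by
          intro y hy
          have hsub : matchd.filter (fun x => R x y) ⊆ (L v).filter (fun z => R y z) := by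
            intro x hx
            rw [Finset.mem_filter] at hx ⊢
            exact ⟨hmdsub hx.1, hsym _ _ hx.2⟩
          have : ((L v).filter (fun z => R y z)).card ≤ 1 :=
            hmatch v hvA u huA (fun h => (hnbrne u hu) h.symm) y hy
          exact_mod_cast le_trans (Finset.card_le_card hsub) this
        have hcntsum : ∑ y ∈ L u, ((matchd.filter (fun x => R x y)).card : ℝ)
            = (matchd.card : ℝ) := by
          have : ∑ y ∈ L u, (matchd.filter (fun x => R x y)).card
              = ∑ x ∈ matchd, ((L u).filter (fun y => R x y)).card := by
            simp only [Finset.card_filter]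
            rw [Finset.sum_comm]
          rw_mod_cast [this]
          have : ∀ x ∈ matchd, ((L u).filter (fun y => R x y)).card = 1 := by
            intro x hx
            have hx' := Finset.mem_filter.mp hx
            have := hdelcard u hu x hx'.1
            simp only [hdel, if_pos hx'.2] at this
            simpa [hfR] using this
          rw [Finset.sum_congr rfl this]
          simp
        -- part 1 : the matched part
        have hpart1 : ∑ x ∈ matchd, ∑ y ∈ del u x, w y ≤
            (∑ y ∈ L u, w y) - ((L u).card : ℝ) * w (m u) + (matchd.card : ℝ) * w (m u) := by
          have e1 : ∑ x ∈ matchd, ∑ y ∈ del u x, w y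
              = ∑ y ∈ L u, ((matchd.filter (fun x => R x y)).card : ℝ) * w y := by
            have e0 : ∀ x ∈ matchd, ∑ y ∈ del u x, w y
                = ∑ y ∈ L u, if R x y then w y else 0 := by
              intro x hx
              have hx' := Finset.mem_filter.mp hx
              simp only [hdel, if_pos hx'.2, hfR]
              rw [if_pos (show (Finset.filter (fun y => R x y) (L u)).Nonempty from hx'.2),
                Finset.sum_filter]
            rw [Finset.sum_congr rfl e0, Finset.sum_comm]
            refine Finset.sum_congr rfl (fun y hy => ?_)
            rw [← Finset.sum_filter, Finset.sum_const, nsmul_eq_mul]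
          rw [e1]
          have e2 : ∀ y ∈ L u, ((matchd.filter (fun x => R x y)).card : ℝ) * w y ≤
              (w y - w (m u)) + ((matchd.filter (fun x => R x y)).card : ℝ) * w (m u) := by
            intro y hy
            have h1 := hcnt1 y hy
            have h2 : w (m u) ≤ w y := hmmin u huA y hy
            have h3 : (0:ℝ) ≤ ((matchd.filter (fun x => R x y)).card : ℝ) := Nat.cast_nonneg _
            nlinarith
          calc ∑ y ∈ L u, ((matchd.filter (fun x => R x y)).card : ℝ) * w y
              ≤ ∑ y ∈ L u, ((w y - w (m u)) + ((matchd.filter (fun x => R x y)).card : ℝ) * w (m u)) :=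
                Finset.sum_le_sum e2
            _ = (∑ y ∈ L u, w y) - ((L u).card : ℝ) * w (m u) + (matchd.card : ℝ) * w (m u) := by
                rw [Finset.sum_add_distrib, Finset.sum_sub_distrib, Finset.sum_const,
                  nsmul_eq_mul, ← Finset.sum_mul, hcntsum]
        -- part 2 : the unmatched part
        have hpart2 : ∑ x ∈ (L v).filter (fun x => ¬ (fR u x).Nonempty), ∑ y ∈ del u x, w y
            = (((L v).card : ℝ) - (matchd.card : ℝ)) * w (m u) := by
          have e0 : ∀ x ∈ (L v).filter (fun x => ¬ (fR u x).Nonempty),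
              ∑ y ∈ del u x, w y = w (m u) := by
            intro x hx
            have hnx := (Finset.mem_filter.mp hx).2
            simp only [hdel, if_neg hnx, Finset.sum_singleton]
          rw [Finset.sum_congr rfl e0, Finset.sum_const, nsmul_eq_mul]
          congr 1
          rw [Finset.filter_not, Finset.card_sdiff_of_subset (Finset.filter_subset _ _)]
          rw [Nat.cast_sub (Finset.card_le_card (Finset.filter_subset _ _))]
        have hsplit : ∑ x ∈ L v, ∑ y ∈ del u x, w y
            = (∑ x ∈ matchd, ∑ y ∈ del u x, w y)
              + ∑ x ∈ (L v).filter (fun x => ¬ (fR u x).Nonempty), ∑ y ∈ del u x, w y := by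
          rw [hmd, Finset.sum_filter_add_sum_filter_not]
        rw [hsplit, hpart2]
        have hfinal : (∑ y ∈ L u, w y) - ((L u).card : ℝ) * w (m u) + (matchd.card : ℝ) * w (m u)
            + (((L v).card : ℝ) - (matchd.card : ℝ)) * w (m u)
            ≤ ((L v).card : ℝ) * ((∑ y ∈ L u, w y) / ((L u).card : ℝ)) := by
          have hsu0 : (0:ℝ) < ((L u).card : ℝ) := by exact_mod_cast lt_of_lt_of_le (by norm_num) hsu2
          have hsuv' : ((L u).card : ℝ) ≤ ((L v).card : ℝ) := by exact_mod_cast hsuv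
          have h1 : w (m u) ≤ (∑ y ∈ L u, w y) / ((L u).card : ℝ) := by
            rw [le_div_iff₀ hsu0]
            linarith [hmT]
          have e : ((L v).card : ℝ) * ((∑ y ∈ L u, w y) / ((L u).card : ℝ))
              = (∑ y ∈ L u, w y) + (((L v).card : ℝ) - ((L u).card : ℝ))
                * ((∑ y ∈ L u, w y) / ((L u).card : ℝ)) := by
            field_simp
            ring
          have h2 : (((L v).card : ℝ) - ((L u).card : ℝ)) * w (m u)
              ≤ (((L v).card : ℝ) - ((L u).card : ℝ))
                * ((∑ y ∈ L u, w y) / ((L u).card : ℝ)) :=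
            mul_le_mul_of_nonneg_left h1 (sub_nonneg.mpr hsuv')
          linarith
        calc (∑ x ∈ matchd, ∑ y ∈ del u x, w y)
              + (((L v).card : ℝ) - (matchd.card : ℝ)) * w (m u)
            ≤ (∑ y ∈ L u, w y) - ((L u).card : ℝ) * w (m u) + (matchd.card : ℝ) * w (m u)
              + (((L v).card : ℝ) - (matchd.card : ℝ)) * w (m u) := by linarith [hpart1]
          _ ≤ _ := hfinal
      -- the reduced lists
      set L2 : W → V → Finset W := fun x u => if u ∈ nbrs then L u \ del u x else L u with hL2
      have hL2sub : ∀ x u, L2 x u ⊆ L u := by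
        intro x u
        simp only [hL2]
        split
        · exact Finset.sdiff_subset
        · exact subset_rfl
      have hL2card : ∀ u ∈ nbrs, ∀ x ∈ L v, (L2 x u).card = (L u).card - 1 := by
        intro u hu x hx
        simp only [hL2, if_pos hu]
        rw [Finset.card_sdiff_of_subset (hdelsub u (hnbrA u hu) x), hdelcard u hu x hx]
      have hL2eq : ∀ x u, u ∉ nbrs → L2 x u = L u := by
        intro x u hu
        simp only [hL2, if_neg hu]
      set target : ℝ := ∑ v' ∈ A, (∑ y ∈ L v', w y) / ((L v').card : ℝ) with htarget
      -- the key averaging inequality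
      have key : ((L v).card : ℝ) * target ≤
          ∑ x ∈ L v, (w x + ∑ u ∈ A.erase v, (∑ y ∈ L2 x u, w y) / ((L2 x u).card : ℝ)) := by
        rw [Finset.sum_add_distrib, Finset.sum_comm]
        have hterm : ∀ u ∈ A.erase v,
            ((L v).card : ℝ) * ((∑ y ∈ L u, w y) / ((L u).card : ℝ)) ≤
            ∑ x ∈ L v, (∑ y ∈ L2 x u, w y) / ((L2 x u).card : ℝ) := by
          intro u hu
          have huA : u ∈ A := Finset.mem_of_mem_erase hu
          by_cases hnb : u ∈ nbrs
          · have hsu2 : 2 ≤ (L u).card := hnbr2 u hnb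
            have hsu1 : (0:ℝ) < ((L u).card : ℝ) - 1 := by
              have : (2:ℝ) ≤ ((L u).card : ℝ) := by exact_mod_cast hsu2
              linarith
            have hsu0 : (0:ℝ) < ((L u).card : ℝ) := by linarith
            have e1 : ∀ x ∈ L v, (∑ y ∈ L2 x u, w y) / ((L2 x u).card : ℝ)
                = ((∑ y ∈ L u, w y) - ∑ y ∈ del u x, w y) / (((L u).card : ℝ) - 1) := by
              intro x hx
              have hcard : ((L2 x u).card : ℝ) = ((L u).card : ℝ) - 1 := by
                rw [hL2card u hnb x hx, Nat.cast_sub (by omega)]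
                norm_num
              have hsum : ∑ y ∈ L2 x u, w y = (∑ y ∈ L u, w y) - ∑ y ∈ del u x, w y := by
                have : L2 x u = L u \ del u x := by simp only [hL2, if_pos hnb]
                rw [this, Finset.sum_sdiff_eq_sub (hdelsub u huA x)]
              rw [hcard, hsum]
            rw [Finset.sum_congr rfl e1]
            have hSU := SU u hnb
            have hsum : ∑ x ∈ L v, ((∑ y ∈ L u, w y) - ∑ y ∈ del u x, w y) / (((L u).card : ℝ) - 1)
                = (((L v).card:ℝ) * (∑ y ∈ L u, w y) - ∑ x ∈ L v, ∑ y ∈ del u x, w y)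
                  / (((L u).card : ℝ) - 1) := by
              rw [← Finset.sum_div, Finset.sum_sub_distrib, Finset.sum_const, nsmul_eq_mul]
            rw [hsum, le_div_iff₀ hsu1]
            exact arith1 _ _ _ _ (by exact_mod_cast hsu2) hSU
          · have e1 : ∀ x ∈ L v, (∑ y ∈ L2 x u, w y) / ((L2 x u).card : ℝ)
                = (∑ y ∈ L u, w y) / ((L u).card : ℝ) := by
              intro x hx
              rw [hL2eq x u hnb]
            rw [Finset.sum_congr rfl e1, Finset.sum_const, nsmul_eq_mul]
        have hsvne : ((L v).card : ℝ) ≠ 0 := Nat.cast_ne_zero.mpr hsv.ne'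
        have htv : ((L v).card:ℝ) * ((∑ y ∈ L v, w y) / ((L v).card:ℝ)) = ∑ x ∈ L v, w x := by
          rw [mul_comm, div_mul_cancel₀ _ hsvne]
        calc ((L v).card:ℝ) * target
            = ((L v).card:ℝ) * ((∑ y ∈ L v, w y) / ((L v).card:ℝ))
              + ∑ u ∈ A.erase v, ((L v).card:ℝ) * ((∑ y ∈ L u, w y) / ((L u).card:ℝ)) := by
              rw [htarget, ← Finset.add_sum_erase A _ hvA, mul_add, Finset.mul_sum]
          _ ≤ (∑ x ∈ L v, w x)
              + ∑ u ∈ A.erase v, ∑ x ∈ L v, (∑ y ∈ L2 x u, w y) / ((L2 x u).card : ℝ) :=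
              add_le_add (le_of_eq htv) (Finset.sum_le_sum hterm)
      -- choose a good element x₀ of L v
      have hex : ∃ x₀ ∈ L v, target ≤
          w x₀ + ∑ u ∈ A.erase v, (∑ y ∈ L2 x₀ u, w y) / ((L2 x₀ u).card : ℝ) := by
        by_contra hc
        push_neg at hc
        have hlt := Finset.sum_lt_sum_of_nonempty hLvne hc
        rw [Finset.sum_const, nsmul_eq_mul] at hlt
        exact absurd key (not_le.mpr hlt)
      obtain ⟨x₀, hx₀mem, hx₀⟩ := hex
      -- apply the induction hypothesis to the reduced instance
      have hcard' : (A.erase v).card = n := by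
        rw [Finset.card_erase_of_mem hvA, hA]
        omega
      have hmatch' : ∀ u ∈ A.erase v, ∀ v' ∈ A.erase v, u ≠ v' →
          ∀ x ∈ L2 x₀ v', ((L2 x₀ u).filter (fun y => R x y)).card ≤ 1 := by
        intro u hu v' hv' hne x hx
        refine le_trans (Finset.card_le_card (Finset.filter_subset_filter _ (hL2sub x₀ u))) ?_
        exact hmatch u (Finset.mem_of_mem_erase hu) v' (Finset.mem_of_mem_erase hv') hne x
          (hL2sub x₀ v' hx)
      have hdeg' : ∀ u ∈ A.erase v,
          ((A.erase v).filter (fun u' => u' ≠ u ∧ ∃ x ∈ L2 x₀ u, ∃ y ∈ L2 x₀ u', R x y)).card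
            < (L2 x₀ u).card := by
        intro u hu
        have huA : u ∈ A := Finset.mem_of_mem_erase hu
        have hFF : (A.erase v).filter (fun u' => u' ≠ u ∧ ∃ x ∈ L2 x₀ u, ∃ y ∈ L2 x₀ u', R x y)
            ⊆ (A.filter (fun u' => u' ≠ u ∧ ∃ x ∈ L u, ∃ y ∈ L u', R x y)).erase v := by
          intro u' hu'
          rw [Finset.mem_filter] at hu'
          obtain ⟨hu'e, hne, x, hxm, y, hym, hR⟩ := hu'
          refine Finset.mem_erase.mpr ⟨Finset.ne_of_mem_erase hu'e, Finset.mem_filter.mpr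
            ⟨Finset.mem_of_mem_erase hu'e, hne, x, hL2sub x₀ u hxm, y, hL2sub x₀ u' hym, hR⟩⟩
        by_cases hnb : u ∈ nbrs
        · have hvF : v ∈ A.filter (fun u' => u' ≠ u ∧ ∃ x ∈ L u, ∃ y ∈ L u', R x y) := by
            obtain ⟨x, hxm, y, hym, hR⟩ := (Finset.mem_filter.mp hnb).2.2
            exact Finset.mem_filter.mpr ⟨hvA, fun h => (hnbrne u hnb) h.symm,
              y, hym, x, hxm, hsym _ _ hR⟩
          have h1 : ((A.filter (fun u' => u' ≠ u ∧ ∃ x ∈ L u, ∃ y ∈ L u', R x y)).erase v).card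
              = (A.filter (fun u' => u' ≠ u ∧ ∃ x ∈ L u, ∃ y ∈ L u', R x y)).card - 1 :=
            Finset.card_erase_of_mem hvF
          have h2 := hdeg u huA
          have h4 := hL2card u hnb x₀ hx₀mem
          have h5 := hnbr2 u hnb
          refine lt_of_le_of_lt (Finset.card_le_card hFF) ?_
          rw [h1, h4]
          omega
        · have h4 : L2 x₀ u = L u := hL2eq x₀ u hnb
          have h2 := hdeg u huA
          refine lt_of_le_of_lt (Finset.card_le_card hFF) ?_
          refine lt_of_le_of_lt Finset.card_erase_le ?_
          rw [h4]
          exact h2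
      obtain ⟨f', hf'mem, hf'conf, hf'sum⟩ := ih (A.erase v) (L2 x₀) hcard' hmatch' hdeg'
      -- no conflicts between x₀ and the rest
      have hnoR : ∀ u' ∈ A.erase v, ¬ R x₀ (f' u') := by
        intro u' hu' hR
        by_cases hnb : u' ∈ nbrs
        · have hf := hf'mem u' hu'
          have hmemfR : f' u' ∈ fR u' x₀ := by
            simp only [hfR]
            exact Finset.mem_filter.mpr ⟨hL2sub x₀ u' hf, hR⟩
          have hdel_eq : del u' x₀ = fR u' x₀ := by
            simp only [hdel, if_pos (Finset.nonempty_of_ne_empty (Finset.ne_empty_of_mem hmemfR))]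
          have hf2 : f' u' ∈ L u' \ del u' x₀ := by
            have he : L2 x₀ u' = L u' \ del u' x₀ := by simp only [hL2, if_pos hnb]
            rw [← he]; exact hf
          rw [hdel_eq] at hf2
          exact (Finset.mem_sdiff.mp hf2).2 hmemfR
        · apply hnb
          rw [hnbrs]
          exact Finset.mem_filter.mpr ⟨Finset.mem_of_mem_erase hu', Finset.ne_of_mem_erase hu',
            x₀, hx₀mem, f' u', hL2sub x₀ u' (hf'mem u' hu'), hR⟩
      refine ⟨Function.update f' v x₀, ?_, ?_, ?_⟩
      · intro v' hv'
        by_cases h : v' = v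
        · subst h; rw [Function.update_self]; exact hx₀mem
        · rw [Function.update_of_ne h]
          exact hL2sub x₀ v' (hf'mem v' (Finset.mem_erase.mpr ⟨h, hv'⟩))
      · intro u hu u' hu' hne
        by_cases h1 : u = v
        · subst h1
          have h2 : u' ≠ u := fun h => hne h.symm
          rw [Function.update_self, Function.update_of_ne h2]
          exact hnoR u' (Finset.mem_erase.mpr ⟨h2, hu'⟩)
        · by_cases h2 : u' = v
          · subst h2
            rw [Function.update_self, Function.update_of_ne h1]
            intro hR
            exact hnoR u (Finset.mem_erase.mpr ⟨h1, hu⟩) (hsym _ _ hR)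
          · rw [Function.update_of_ne h1, Function.update_of_ne h2]
            exact hf'conf u (Finset.mem_erase.mpr ⟨h1, hu⟩) u' (Finset.mem_erase.mpr ⟨h2, hu'⟩) hne
      · have hsum1 : ∑ v' ∈ A, w (Function.update f' v x₀ v')
            = w x₀ + ∑ v' ∈ A.erase v, w (f' v') := by
          rw [← Finset.add_sum_erase A _ hvA, Function.update_self]
          congr 1
          refine Finset.sum_congr rfl (fun v' hv' => ?_)
          rw [Function.update_of_ne (Finset.ne_of_mem_erase hv')]
        rw [hsum1]
        calc target ≤ w x₀ + ∑ u ∈ A.erase v, (∑ y ∈ L2 x₀ u, w y) / ((L2 x₀ u).card : ℝ) := hx₀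
          _ ≤ w x₀ + ∑ v' ∈ A.erase v, w (f' v') := by linarith [hf'sum]

/-- Fractional correspondence packing number is at most `Δ(G) + 1`: every
`(Δ(G)+1)`-fold correspondence-cover `(L,H)` of `G` has fractional chromatic
number `Δ(G)+1`, witnessed by a probability distribution on independent sets of
`H` covering each cover vertex with probability at least `1/(Δ(G)+1)`. -/
theorem stmt16 {V W : Type*} [Fintype V] [Fintype W] [DecidableEq W]
    (G : SimpleGraph V) [DecidableRel G.Adj]
    (H : SimpleGraph W) (L : V → Finset W) (hcover : CorrCover G H L)
    (hfold : ∀ v : V, (L v).card = G.maxDegree + 1) :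
    ∃ p : Finset W → ℝ,
      (∀ S : Finset W, 0 ≤ p S) ∧ (∑ S : Finset W, p S = 1) ∧
      (∀ S : Finset W, 0 < p S → ∀ x ∈ S, ∀ y ∈ S, ¬ H.Adj x y) ∧
      (∀ x : W, 1 / ((G.maxDegree : ℝ) + 1) ≤
        ∑ S ∈ univ.filter (fun S : Finset W => x ∈ S), p S) := by
  classical
  by_cases hWe : IsEmpty W
  · refine ⟨fun S => if S = ∅ then 1 else 0, ?_, ?_, ?_, ?_⟩
    · intro S; by_cases h : S = ∅ <;> simp [h]
    · have : (univ : Finset (Finset W)) = {∅} := by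
        apply Finset.eq_singleton_iff_unique_mem.mpr
        exact ⟨Finset.mem_univ _, fun S _ => Finset.eq_empty_of_isEmpty S⟩
      rw [this]
      simp
    · intro S hS x hx
      exact absurd hx (by rw [Finset.eq_empty_of_isEmpty S]; exact Finset.notMem_empty x)
    · intro x; exact hWe.elim x
  have hWne : Nonempty W := not_isEmpty_iff.mp hWe
  have _inst : Inhabited W := ⟨Classical.choice hWne⟩
  have _instV : DecidableEq V := Classical.decEq V
  set k : ℕ := G.maxDegree + 1 with hk
  have hk0 : 0 < k := Nat.succ_pos _
  have hkR : (0:ℝ) < (k:ℝ) := by exact_mod_cast hk0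
  -- every w belongs to exactly one list
  have hdisj : ∀ x : W, ∀ u v : V, x ∈ L u → x ∈ L v → u = v := by
    intro x u v hu hv
    obtain ⟨v₀, _, huniq⟩ := hcover.partition x
    rw [huniq u hu, huniq v hv]
  -- sums over W split along the partition
  have hsum_part : ∀ g : W → ℝ, ∑ x : W, g x = ∑ v : V, ∑ x ∈ L v, g x := by
    intro g
    have vOf : ∀ x : W, ∃ v : V, x ∈ L v := fun x => (hcover.partition x).exists
    classical
    set F : W → V := fun x => (vOf x).choose with hF
    have hFmem : ∀ x, x ∈ L (F x) := fun x => (vOf x).choose_spec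
    have : ∀ v : V, L v = univ.filter (fun x => F x = v) := by
      intro v
      ext x
      simp only [Finset.mem_filter, Finset.mem_univ, true_and]
      constructor
      · intro hx; exact hdisj x (F x) v (hFmem x) hx
      · intro hx; rw [← hx]; exact hFmem x
    calc ∑ x : W, g x = ∑ v : V, ∑ x ∈ univ.filter (fun x => F x = v), g x :=
          (Finset.sum_fiberwise_of_maps_to (fun x _ => Finset.mem_univ (F x)) g).symm
      _ = ∑ v : V, ∑ x ∈ L v, g x := by
          refine Finset.sum_congr rfl (fun v _ => ?_)
          rw [← this v]
  -- the key weighted independent-transversal statement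
  have KEY : ∀ c : W → ℝ, ∃ S : Finset W,
      (∀ x ∈ S, ∀ y ∈ S, ¬ H.Adj x y) ∧ (∑ x : W, c x) / (k:ℝ) ≤ ∑ x ∈ S, c x := by
    intro c
    set w : W → ℝ := fun x => max (c x) 0 with hw
    have hw0 : ∀ x, 0 ≤ w x := fun x => le_max_right _ _
    have hmatch : ∀ u ∈ (univ : Finset V), ∀ v ∈ (univ : Finset V), u ≠ v →
        ∀ x ∈ L v, ((L u).filter (fun y => H.Adj x y)).card ≤ 1 := by
      intro u _ v _ hne x hx
      by_cases hadj : G.Adj v u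
      · refine Finset.card_le_one.mpr ?_
        intro y hy y2 hy2
        rw [Finset.mem_filter] at hy hy2
        exact hcover.matching v u hadj x hx y hy.1 y2 hy2.1 hy.2 hy2.2
      · have : (L u).filter (fun y => H.Adj x y) = ∅ := by
          apply Finset.filter_eq_empty_iff.mpr
          intro y hy
          exact hcover.nonadj v u (fun h => hne h.symm) hadj x hx y hy
        rw [this]; simp
    have hdeg : ∀ v ∈ (univ : Finset V),
        ((univ : Finset V).filter
          (fun u => u ≠ v ∧ ∃ x ∈ L v, ∃ y ∈ L u, H.Adj x y)).card < (L v).card := by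
      intro v _
      have hsub : (univ : Finset V).filter
          (fun u => u ≠ v ∧ ∃ x ∈ L v, ∃ y ∈ L u, H.Adj x y) ⊆ G.neighborFinset v := by
        intro u hu
        rw [Finset.mem_filter] at hu
        obtain ⟨_, hne, x, hx, y, hy, hadj⟩ := hu
        by_cases h : G.Adj v u
        · exact (SimpleGraph.mem_neighborFinset G v u).mpr h
        · exact absurd hadj (hcover.nonadj v u (fun h' => hne h'.symm) h x hx y hy)
      have h1 := Finset.card_le_card hsub
      have h2 : (G.neighborFinset v).card = G.degree v := rfl
      have h3 := G.degree_le_maxDegree v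
      rw [hfold v]
      omega
    obtain ⟨f, hfmem, hfconf, hfsum⟩ := pack H.Adj (fun x y h => h.symm) w hw0
      (Fintype.card V) univ L rfl hmatch hdeg
    set T : Finset W := univ.image f with hT
    have hfing : Set.InjOn f (univ : Finset V) := by
      intro u _ v _ hfe
      exact hdisj (f u) u v (hfmem u (Finset.mem_univ u))
        (hfe ▸ hfmem v (Finset.mem_univ v))
    have hsumT : ∑ x ∈ T, w x = ∑ v : V, w (f v) := by
      rw [hT]
      exact Finset.sum_image (fun u hu v hv h => hfing hu hv h)
    refine ⟨T.filter (fun x => 0 ≤ c x), ?_, ?_⟩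
    · intro x hx y hy hadj
      rw [Finset.mem_filter, hT, Finset.mem_image] at hx hy
      obtain ⟨u, _, hu⟩ := hx.1
      obtain ⟨v, _, hv⟩ := hy.1
      by_cases h : u = v
      · subst h
        rw [← hu, ← hv] at hadj
        exact H.loopless.irrefl _ hadj
      · exact hfconf u (Finset.mem_univ u) v (Finset.mem_univ v) h (by rw [hu, hv]; exact hadj)
    · have e1 : ∑ x ∈ T.filter (fun x => 0 ≤ c x), c x = ∑ x ∈ T, w x := by
        rw [Finset.sum_filter]
        refine Finset.sum_congr rfl (fun x _ => ?_)
        by_cases h : 0 ≤ c x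
        · rw [if_pos h, hw]; simp [max_eq_left h]
        · rw [if_neg h, hw]; simp [max_eq_right (le_of_not_ge h)]
      rw [e1, hsumT]
      have e2 : (∑ x : W, c x) / (k:ℝ) ≤ (∑ x : W, w x) / (k:ℝ) :=
        div_le_div_of_nonneg_right (Finset.sum_le_sum (fun x _ => le_max_left (c x) 0)) hkR.le
      have e3 : (∑ x : W, w x) / (k:ℝ) = ∑ v : V, (∑ y ∈ L v, w y) / ((L v).card : ℝ) := by
        rw [hsum_part w, Finset.sum_div]
        refine Finset.sum_congr rfl (fun v _ => ?_)
        rw [hfold v, hk]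
      calc (∑ x : W, c x) / (k:ℝ) ≤ (∑ x : W, w x) / (k:ℝ) := e2
        _ = ∑ v : V, (∑ y ∈ L v, w y) / ((L v).card : ℝ) := e3
        _ ≤ ∑ v : V, w (f v) := hfsum
  -- convexity argument
  set SS : Finset (Finset W) := univ.filter (fun S => ∀ x ∈ S, ∀ y ∈ S, ¬ H.Adj x y) with hSS
  set ind : Finset W → (W → ℝ) := fun S x => if x ∈ S then 1 else 0 with hind
  set pts : Finset (W → ℝ) := SS.image ind with hpts
  have hindinj : ∀ S1 S2 : Finset W, ind S1 = ind S2 → S1 = S2 := by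
    intro S1 S2 h
    ext x
    have := congr_fun h x
    simp only [hind] at this
    by_cases h1 : x ∈ S1 <;> by_cases h2 : x ∈ S2 <;> simp [h1, h2] at this ⊢ <;> tauto
  have hindsum : ∀ S : Finset W, ind S = ∑ x ∈ S, Pi.single x (1:ℝ) := by
    intro S
    funext y
    rw [Finset.sum_apply]
    simp only [hind, Pi.single_apply]
    rw [Finset.sum_ite_eq S y (fun _ => (1:ℝ))]
  set uvec : W → ℝ := fun _ => ((k:ℝ))⁻¹ with huvec
  have hmem : uvec ∈ convexHull ℝ (pts : Set (W → ℝ)) := by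
    by_contra hmem
    obtain ⟨φ, r, hlt, hgt⟩ := geometric_hahn_banach_closed_point
      (convex_convexHull ℝ (pts : Set (W → ℝ)))
      ((pts.finite_toSet).isClosed_convexHull (𝕜 := ℝ)) hmem
    set c : W → ℝ := fun x => φ (Pi.single x 1) with hc
    obtain ⟨S, hSind, hSge⟩ := KEY c
    have hφind : ∀ S' : Finset W, φ (ind S') = ∑ x ∈ S', c x := by
      intro S'
      rw [hindsum S', map_sum]
    have huvec2 : uvec = (k:ℝ)⁻¹ • ind (univ : Finset W) := by
      funext y
      simp [huvec, hind]
    have hφu : φ uvec = (∑ x : W, c x) / (k:ℝ) := by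
      rw [huvec2, map_smul, hφind]
      rw [smul_eq_mul, div_eq_inv_mul]
    have hSmem : ind S ∈ (pts : Set (W → ℝ)) := by
      rw [hpts]
      exact Finset.mem_coe.mpr (Finset.mem_image_of_mem ind
        (Finset.mem_filter.mpr ⟨Finset.mem_univ S, hSind⟩))
    have h1 : φ (ind S) < r := hlt _ (subset_convexHull ℝ _ hSmem)
    rw [hφind] at h1
    rw [hφu] at hgt
    linarith
  rw [Finset.convexHull_eq] at hmem
  obtain ⟨wt, hwt0, hwt1, hwtcm⟩ := hmem
  have hcm : ∑ y ∈ pts, wt y • y = uvec := by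
    rw [← hwtcm, Finset.centerMass_eq_of_sum_1 _ id hwt1]
    rfl
  refine ⟨fun S => if S ∈ SS then wt (ind S) else 0, ?_, ?_, ?_, ?_⟩
  · intro S
    show 0 ≤ if S ∈ SS then wt (ind S) else 0
    by_cases h : S ∈ SS
    · rw [if_pos h]
      exact hwt0 (ind S) (Finset.mem_image_of_mem ind h)
    · rw [if_neg h]
  · show ∑ S : Finset W, (if S ∈ SS then wt (ind S) else 0) = 1
    calc ∑ S : Finset W, (if S ∈ SS then wt (ind S) else 0)
        = ∑ S ∈ SS, wt (ind S) := by
          rw [Finset.sum_ite_mem, Finset.univ_inter]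
      _ = ∑ y ∈ pts, wt y := by
          rw [hpts]
          exact (Finset.sum_image (fun S1 h1 S2 h2 h => hindinj S1 S2 h)).symm
      _ = 1 := hwt1
  · intro S hS x hx y hy
    change 0 < if S ∈ SS then wt (ind S) else 0 at hS
    by_cases h : S ∈ SS
    · have := (Finset.mem_filter.mp h).2
      exact this x hx y hy
    · rw [if_neg h] at hS; exact absurd hS (lt_irrefl 0)
  · intro x
    show 1 / ((G.maxDegree : ℝ) + 1) ≤
      ∑ S ∈ univ.filter (fun S : Finset W => x ∈ S), (if S ∈ SS then wt (ind S) else 0)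
    have hx := congr_fun hcm x
    rw [Finset.sum_apply] at hx
    have e1 : ∑ y ∈ pts, (wt y • y) x = ∑ S ∈ SS, wt (ind S) * ind S x := by
      rw [hpts]
      rw [Finset.sum_image (fun S1 h1 S2 h2 h => hindinj S1 S2 h)]
      refine Finset.sum_congr rfl (fun S _ => ?_)
      simp [Pi.smul_apply, smul_eq_mul]
    have e2 : ∑ S ∈ SS, wt (ind S) * ind S x
        = ∑ S ∈ SS, (if x ∈ S then wt (ind S) else 0) := by
      refine Finset.sum_congr rfl (fun S _ => ?_)
      simp only [hind]
      by_cases h : x ∈ S <;> simp [h]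
    have e3 : ∑ S ∈ univ.filter (fun S : Finset W => x ∈ S),
          (if S ∈ SS then wt (ind S) else 0)
        = ∑ S ∈ SS, (if x ∈ S then wt (ind S) else 0) := by
      rw [Finset.sum_filter]
      rw [show (SS : Finset (Finset W)) = univ.filter (fun S => S ∈ SS) by
        rw [Finset.filter_mem_eq_inter, Finset.univ_inter]]
      rw [Finset.sum_filter]
      refine Finset.sum_congr rfl (fun S _ => ?_)
      by_cases h1 : x ∈ S <;> by_cases h2 : S ∈ SS <;> simp [h1, h2]
    have e4 : uvec x = ((k:ℝ))⁻¹ := rfl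
    rw [e1, e2, ← e3] at hx
    rw [hx, e4]
    rw [hk]
    rw [one_div]
    push_cast
    norm_num
end

section
/- Let G = (A ∪ B, E) be a bipartite graph where every vertex of A has degree at most Δ_A. Let (L,H) be a (Δ_A+1)-fold correspondence-cover of G in which the matching between L(u) and L(v) is perfect for each edge uv. Choose independently for each b ∈ B a uniformly random x_b ∈ L(b), and then for each a ∈ A a uniformly random element of L(a) not adjacent in H to any chosen x_b (such an element exists). The resulting random set I is an independent set of H containing exactly one vertex of each list, and every vertex of H lies in I with probability exactly 1/(Δ_A+1). Consequently χ_f(H) ≤ Δ_A + 1. -/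
set_option linter.unusedSectionVars false
open Finset

section Aux

variable {A B W : Type*} [Fintype A] [Fintype B] [Fintype W]
    [DecidableEq A] [DecidableEq B] [DecidableEq W]
    (G : SimpleGraph (A ⊕ B)) [DecidableRel G.Adj]
    (H : SimpleGraph W) (L : A ⊕ B → Finset W)

open Classical in
/-- the partner of `w` in `L (inl a)` -/
noncomputable def mfun (a : A) (w : W) : W :=
  if h : ∃ y ∈ L (Sum.inl a), H.Adj w y then h.choose else w

open Classical in
/-- the partner of `z` in `L (inr b)` -/
noncomputable def minv (b : B) (z : W) : W :=
  if h : ∃ y ∈ L (Sum.inr b), H.Adj z y then h.choose else z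

def nbrs (a : A) : Finset B := univ.filter fun b => G.Adj (Sum.inl a) (Sum.inr b)

noncomputable def Fset (a : A) (c : B → W) : Finset W :=
  (nbrs G a).image fun b => mfun H L a (c b)

noncomputable def avail (a : A) (c : B → W) : Finset W :=
  L (Sum.inl a) \ Fset G H L a c

noncomputable def qwt (a : A) (c : B → W) (z : W) : ℝ :=
  if z ∈ avail G H L a c then ((avail G H L a c).card : ℝ)⁻¹ else 0

noncomputable def bwt (b : B) (w : W) : ℝ :=
  if w ∈ L (Sum.inr b) then ((L (Sum.inr b)).card : ℝ)⁻¹ else 0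

noncomputable def wt (f : A ⊕ B → W) : ℝ :=
  (∏ b, bwt L b (f (Sum.inr b))) *
    ∏ a, qwt G H L a (fun b => f (Sum.inr b)) (f (Sum.inl a))

noncomputable def pd (S : Finset W) : ℝ :=
  ∑ f : A ⊕ B → W, if S = univ.image f then wt G H L f else 0

variable {G H L}

section basic

variable (hcover : CorrCover G H L)
  (hperfect : ∀ u v : A ⊕ B, G.Adj u v → ∀ x ∈ L u, ∃ y ∈ L v, H.Adj x y)

include hperfect in
lemma mfun_spec {a : A} {b : B} {w : W} (hb : G.Adj (Sum.inl a) (Sum.inr b))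
    (hw : w ∈ L (Sum.inr b)) :
    mfun H L a w ∈ L (Sum.inl a) ∧ H.Adj w (mfun H L a w) := by
  have hex : ∃ y ∈ L (Sum.inl a), H.Adj w y := hperfect _ _ hb.symm w hw
  rw [mfun, dif_pos hex]
  exact ⟨hex.choose_spec.1, hex.choose_spec.2⟩

include hcover hperfect in
lemma mfun_unique {a : A} {b : B} {w y : W} (hb : G.Adj (Sum.inl a) (Sum.inr b))
    (hw : w ∈ L (Sum.inr b)) (hy : y ∈ L (Sum.inl a)) (hadj : H.Adj w y) :
    y = mfun H L a w := by
  have h := mfun_spec hperfect hb hw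
  exact hcover.matching _ _ hb.symm w hw y hy _ h.1 hadj h.2

include hperfect in
lemma minv_spec {a : A} {b : B} {z : W} (hb : G.Adj (Sum.inl a) (Sum.inr b))
    (hz : z ∈ L (Sum.inl a)) :
    minv H L b z ∈ L (Sum.inr b) ∧ H.Adj z (minv H L b z) := by
  have hex : ∃ y ∈ L (Sum.inr b), H.Adj z y := hperfect _ _ hb z hz
  rw [minv, dif_pos hex]
  exact ⟨hex.choose_spec.1, hex.choose_spec.2⟩

include hcover hperfect in
lemma minv_unique {a : A} {b : B} {z w : W} (hb : G.Adj (Sum.inl a) (Sum.inr b))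
    (hz : z ∈ L (Sum.inl a)) (hw : w ∈ L (Sum.inr b)) (hadj : H.Adj z w) :
    w = minv H L b z := by
  have h := minv_spec hperfect hb hz
  exact hcover.matching _ _ hb z hz w hw _ h.1 hadj h.2

include hcover hperfect in
lemma mfun_minv {a : A} {b : B} {z : W} (hb : G.Adj (Sum.inl a) (Sum.inr b))
    (hz : z ∈ L (Sum.inl a)) : mfun H L a (minv H L b z) = z := by
  have h := minv_spec hperfect hb hz
  exact (mfun_unique hcover hperfect hb h.1 hz h.2.symm).symm

include hcover hperfect in
lemma minv_mfun {a : A} {b : B} {w : W} (hb : G.Adj (Sum.inl a) (Sum.inr b))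
    (hw : w ∈ L (Sum.inr b)) : minv H L b (mfun H L a w) = w := by
  have h := mfun_spec hperfect hb hw
  exact (minv_unique hcover hperfect hb h.1 hw h.2.symm).symm

include hperfect in
lemma Fset_subset {a : A} {c : B → W} (hc : ∀ b, c b ∈ L (Sum.inr b)) :
    Fset G H L a c ⊆ L (Sum.inl a) := by
  intro z hz
  rw [Fset, mem_image] at hz
  obtain ⟨b, hb, rfl⟩ := hz
  rw [nbrs, mem_filter] at hb
  exact (mfun_spec hperfect hb.2 (hc b)).1

end basic

lemma card_nbrs_le {ΔA : ℕ} (hdeg : ∀ a : A, G.degree (Sum.inl a) ≤ ΔA) (a : A) :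
    (nbrs G a).card ≤ ΔA := by
  refine le_trans ?_ (hdeg a)
  rw [← SimpleGraph.card_neighborFinset_eq_degree]
  apply Finset.card_le_card_of_injOn (fun b => Sum.inr b)
  · intro b hb
    rw [nbrs, mem_coe, mem_filter] at hb
    rw [mem_coe, SimpleGraph.mem_neighborFinset]
    exact hb.2
  · intro b _ b' _ h
    exact Sum.inr.inj h

section counting

variable {ΔA : ℕ}
  (hcover : CorrCover G H L)
  (hperfect : ∀ u v : A ⊕ B, G.Adj u v → ∀ x ∈ L u, ∃ y ∈ L v, H.Adj x y)
  (hdeg : ∀ a : A, G.degree (Sum.inl a) ≤ ΔA)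
  (hfold : ∀ v : A ⊕ B, (L v).card = ΔA + 1)

include hperfect hfold in
lemma avail_card {a : A} {c : B → W} (hc : ∀ b, c b ∈ L (Sum.inr b)) :
    (avail G H L a c).card = ΔA + 1 - (Fset G H L a c).card := by
  rw [avail, card_sdiff_of_subset (Fset_subset hperfect hc), hfold]

include hperfect hdeg hfold in
lemma avail_card_pos {a : A} {c : B → W} (hc : ∀ b, c b ∈ L (Sum.inr b)) :
    0 < (avail G H L a c).card := by
  rw [avail_card hperfect hfold hc]
  have h1 : (Fset G H L a c).card ≤ ΔA :=
    le_trans card_image_le (card_nbrs_le hdeg a)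
  omega

lemma qwt_nonneg (a : A) (c : B → W) (z : W) : 0 ≤ qwt G H L a c z := by
  rw [qwt]; positivity

lemma bwt_nonneg (b : B) (w : W) : 0 ≤ bwt L b w := by
  rw [bwt]; positivity

lemma wt_nonneg (f : A ⊕ B → W) : 0 ≤ wt G H L f := by
  rw [wt]
  apply mul_nonneg
  · exact Finset.prod_nonneg fun b _ => bwt_nonneg _ _
  · exact Finset.prod_nonneg fun a _ => qwt_nonneg _ _ _

lemma pd_nonneg (S : Finset W) : 0 ≤ pd G H L S := by
  apply Finset.sum_nonneg
  intro f _
  split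
  · exact wt_nonneg f
  · exact le_refl 0

include hperfect hdeg hfold in
lemma qsum {a : A} {c : B → W} (hc : ∀ b, c b ∈ L (Sum.inr b)) :
    ∑ z : W, qwt G H L a c z = 1 := by
  rw [show (∑ z : W, qwt G H L a c z)
      = ∑ z : W, if z ∈ avail G H L a c then ((avail G H L a c).card : ℝ)⁻¹ else 0
      from rfl]
  rw [Finset.sum_ite_mem, univ_inter, Finset.sum_const, nsmul_eq_mul]
  rw [mul_inv_cancel₀]
  have := avail_card_pos hperfect hdeg hfold (a := a) hc
  positivity

include hfold in
lemma bsum (b : B) : ∑ w : W, bwt L b w = 1 := by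
  rw [show (∑ w : W, bwt L b w)
      = ∑ w : W, if w ∈ L (Sum.inr b) then ((L (Sum.inr b)).card : ℝ)⁻¹ else 0
      from rfl]
  rw [Finset.sum_ite_mem, univ_inter, Finset.sum_const, nsmul_eq_mul]
  rw [mul_inv_cancel₀]
  rw [hfold]
  positivity

include hperfect hdeg hfold in
lemma inner_sum_plain {c : B → W} (hc : ∀ b, c b ∈ L (Sum.inr b)) :
    ∑ d : A → W, ∏ a, qwt G H L a c (d a) = 1 := by
  rw [← Fintype.prod_sum]
  exact Finset.prod_eq_one fun a _ => qsum hperfect hdeg hfold hc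

include hperfect hdeg hfold in
lemma inner_sum' {a0 : A} {c : B → W} (hc : ∀ b, c b ∈ L (Sum.inr b))
    (g : A → W → ℝ) (hg : ∀ z, g a0 z = qwt G H L a0 c z)
    (hg' : ∀ a, a ≠ a0 → ∀ z, g a z = qwt G H L a c z) :
    ∑ d : A → W, ∏ a, g a (d a) = 1 := by
  rw [← Fintype.prod_sum]
  apply Finset.prod_eq_one
  intro a _
  by_cases ha : a = a0
  · subst ha
    rw [show (∑ z : W, g a z) = ∑ z : W, qwt G H L a c z from
      Finset.sum_congr rfl fun z _ => hg z]
    exact qsum hperfect hdeg hfold hc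
  · rw [show (∑ z : W, g a z) = ∑ z : W, qwt G H L a c z from
      Finset.sum_congr rfl fun z _ => hg' a ha z]
    exact qsum hperfect hdeg hfold hc

include hfold in
lemma csum : ∑ c : B → W, ∏ b, bwt L b (c b) = 1 := by
  rw [← Fintype.prod_sum]
  exact Finset.prod_eq_one fun b _ => bsum hfold b

lemma valid_of_ne_zero {c : B → W} (h : (∏ b, bwt L b (c b)) ≠ 0) :
    ∀ b, c b ∈ L (Sum.inr b) := by
  intro b
  have hb : bwt L b (c b) ≠ 0 := by
    intro h0
    exact h (Finset.prod_eq_zero (mem_univ b) h0)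
  rw [bwt] at hb
  by_contra hmem
  rw [if_neg hmem] at hb
  exact hb rfl

lemma invalid_zero {c : B → W} (h : ¬ ∀ b, c b ∈ L (Sum.inr b)) :
    (∏ b, bwt L b (c b)) = 0 := by
  by_contra h0
  exact h (valid_of_ne_zero h0)

end counting

section swapsec

variable (G H L) in
noncomputable def Phi (a0 : A) (x y : W) (c : B → W) : B → W := fun b =>
  if G.Adj (Sum.inl a0) (Sum.inr b) ∧ c b ∈ L (Sum.inr b)
  then minv H L b (Equiv.swap x y (mfun H L a0 (c b))) else c b

variable {ΔA : ℕ}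
  (hcover : CorrCover G H L)
  (hperfect : ∀ u v : A ⊕ B, G.Adj u v → ∀ x ∈ L u, ∃ y ∈ L v, H.Adj x y)
  (hdeg : ∀ a : A, G.degree (Sum.inl a) ≤ ΔA)
  (hfold : ∀ v : A ⊕ B, (L v).card = ΔA + 1)
  {a0 : A} {x y : W}
  (hx : x ∈ L (Sum.inl a0)) (hy : y ∈ L (Sum.inl a0))

include hx hy in
lemma swap_mem_list {z : W} (hz : z ∈ L (Sum.inl a0)) :
    Equiv.swap x y z ∈ L (Sum.inl a0) := by
  rcases eq_or_ne z x with rfl | hzx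
  · rwa [Equiv.swap_apply_left]
  rcases eq_or_ne z y with rfl | hzy
  · rwa [Equiv.swap_apply_right]
  · rwa [Equiv.swap_apply_of_ne_of_ne hzx hzy]

lemma phi_eq_of_not {c : B → W} {b : B}
    (h : ¬ (G.Adj (Sum.inl a0) (Sum.inr b) ∧ c b ∈ L (Sum.inr b))) :
    Phi G H L a0 x y c b = c b := by
  rw [Phi, if_neg h]

include hcover hperfect hx hy in
lemma phi_spec {c : B → W} {b : B} (hb : G.Adj (Sum.inl a0) (Sum.inr b))
    (hcb : c b ∈ L (Sum.inr b)) :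
    Phi G H L a0 x y c b ∈ L (Sum.inr b) ∧
      mfun H L a0 (Phi G H L a0 x y c b) = Equiv.swap x y (mfun H L a0 (c b)) := by
  have hm : mfun H L a0 (c b) ∈ L (Sum.inl a0) := (mfun_spec hperfect hb hcb).1
  have hσm : Equiv.swap x y (mfun H L a0 (c b)) ∈ L (Sum.inl a0) :=
    swap_mem_list hx hy hm
  have h1 : Phi G H L a0 x y c b = minv H L b (Equiv.swap x y (mfun H L a0 (c b))) := by
    rw [Phi, if_pos ⟨hb, hcb⟩]
  refine ⟨?_, ?_⟩
  · rw [h1]; exact (minv_spec hperfect hb hσm).1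
  · rw [h1, mfun_minv hcover hperfect hb hσm]

include hcover hperfect hx hy in
lemma phi_invol : Function.Involutive (Phi G H L a0 x y) := by
  intro c
  funext b
  by_cases hb : G.Adj (Sum.inl a0) (Sum.inr b) ∧ c b ∈ L (Sum.inr b)
  · have h1 := phi_spec hcover hperfect hx hy hb.1 hb.2
    have h2 : Phi G H L a0 x y (Phi G H L a0 x y c) b
        = minv H L b (Equiv.swap x y (mfun H L a0 (Phi G H L a0 x y c b))) := by
      rw [Phi, if_pos ⟨hb.1, h1.1⟩]
    rw [h2, h1.2, Equiv.swap_apply_self]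
    exact minv_mfun hcover hperfect hb.1 hb.2
  · have h1 : Phi G H L a0 x y c b = c b := phi_eq_of_not hb
    have hb2 : ¬ (G.Adj (Sum.inl a0) (Sum.inr b) ∧
        Phi G H L a0 x y c b ∈ L (Sum.inr b)) := by
      rw [h1]; exact hb
    rw [phi_eq_of_not hb2, h1]

include hcover hperfect hx hy in
lemma phi_valid {c : B → W} (hc : ∀ b, c b ∈ L (Sum.inr b)) (b : B) :
    Phi G H L a0 x y c b ∈ L (Sum.inr b) := by
  by_cases hb : G.Adj (Sum.inl a0) (Sum.inr b)
  · exact (phi_spec hcover hperfect hx hy hb (hc b)).1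
  · rw [phi_eq_of_not (fun h => hb h.1)]; exact hc b

include hcover hperfect hx hy in
lemma phi_bwt {c : B → W} (b : B) :
    bwt L b (Phi G H L a0 x y c b) = bwt L b (c b) := by
  by_cases hb : G.Adj (Sum.inl a0) (Sum.inr b) ∧ c b ∈ L (Sum.inr b)
  · have h1 := phi_spec hcover hperfect hx hy hb.1 hb.2
    rw [bwt, bwt, if_pos h1.1, if_pos hb.2]
  · rw [phi_eq_of_not hb]

include hcover hperfect hx hy in
lemma phi_Fset {c : B → W} (hc : ∀ b, c b ∈ L (Sum.inr b)) :
    Fset G H L a0 (Phi G H L a0 x y c)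
      = (Fset G H L a0 c).image (Equiv.swap x y) := by
  rw [Fset, Fset, image_image]
  apply image_congr
  intro b hb
  simp only [nbrs, coe_filter, Set.mem_setOf_eq] at hb
  exact (phi_spec hcover hperfect hx hy hb.2 (hc b)).2

include hcover hperfect hdeg hfold hx hy in
lemma phi_qwt {c : B → W} (hc : ∀ b, c b ∈ L (Sum.inr b)) :
    qwt G H L a0 (Phi G H L a0 x y c) x = qwt G H L a0 c y := by
  have hF := phi_Fset hcover hperfect hx hy (c := c) hc
  have hmemiff : x ∈ Fset G H L a0 (Phi G H L a0 x y c) ↔ y ∈ Fset G H L a0 c := by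
    rw [hF, mem_image]
    constructor
    · rintro ⟨z, hz, hzx⟩
      have hz' : z = y := by
        apply (Equiv.swap x y).injective
        rw [hzx, Equiv.swap_apply_right]
      rwa [hz'] at hz
    · intro hyF
      exact ⟨y, hyF, Equiv.swap_apply_right x y⟩
  have hcard : (Fset G H L a0 (Phi G H L a0 x y c)).card = (Fset G H L a0 c).card := by
    rw [hF, card_image_of_injective _ (Equiv.injective _)]
  have havail : (avail G H L a0 (Phi G H L a0 x y c)).card = (avail G H L a0 c).card := by
    rw [avail_card hperfect hfold (phi_valid hcover hperfect hx hy hc),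
      avail_card hperfect hfold hc, hcard]
  have hmem2 : x ∈ avail G H L a0 (Phi G H L a0 x y c) ↔ y ∈ avail G H L a0 c := by
    rw [avail, avail, mem_sdiff, mem_sdiff]
    constructor
    · rintro ⟨_, h2⟩; exact ⟨hy, fun h => h2 (hmemiff.2 h)⟩
    · rintro ⟨_, h2⟩; exact ⟨hx, fun h => h2 (hmemiff.1 h)⟩
  rw [qwt, qwt, havail]
  by_cases hxa : x ∈ avail G H L a0 (Phi G H L a0 x y c)
  · rw [if_pos hxa, if_pos (hmem2.1 hxa)]
  · rw [if_neg hxa, if_neg (fun h => hxa (hmem2.2 h))]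

include hcover hperfect hdeg hfold hx hy in
lemma swap_sum :
    ∑ c : B → W, (∏ b, bwt L b (c b)) * qwt G H L a0 c x
      = ∑ c : B → W, (∏ b, bwt L b (c b)) * qwt G H L a0 c y := by
  have h1 : ∑ c : B → W, (∏ b, bwt L b (Phi G H L a0 x y c b))
          * qwt G H L a0 (Phi G H L a0 x y c) x
      = ∑ c : B → W, (∏ b, bwt L b (c b)) * qwt G H L a0 c x :=
    Fintype.sum_equiv ((phi_invol hcover hperfect hx hy (a0 := a0)).toPerm) _ _
      (fun c => by rw [Function.Involutive.coe_toPerm])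
  rw [← h1]
  apply Finset.sum_congr rfl
  intro c _
  by_cases hc : ∀ b, c b ∈ L (Sum.inr b)
  · rw [phi_qwt hcover hperfect hdeg hfold hx hy hc]
    congr 1
    exact Finset.prod_congr rfl fun b _ => phi_bwt hcover hperfect hx hy b
  · rw [invalid_zero hc, show (∏ b, bwt L b (Phi G H L a0 x y c b)) = 0 from ?_]
    · ring
    · rw [show (∏ b, bwt L b (Phi G H L a0 x y c b)) = ∏ b, bwt L b (c b) from
        Finset.prod_congr rfl fun b _ => phi_bwt hcover hperfect hx hy b]
      exact invalid_zero hc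

end swapsec

section assemble

variable {ΔA : ℕ}
  (hcover : CorrCover G H L)
  (hperfect : ∀ u v : A ⊕ B, G.Adj u v → ∀ x ∈ L u, ∃ y ∈ L v, H.Adj x y)
  (hdeg : ∀ a : A, G.degree (Sum.inl a) ≤ ΔA)
  (hfold : ∀ v : A ⊕ B, (L v).card = ΔA + 1)

lemma qwt_eq_zero_of_not_mem {a : A} {c : B → W} {z : W}
    (hz : z ∉ L (Sum.inl a)) : qwt G H L a c z = 0 := by
  rw [qwt, if_neg]
  intro h
  exact hz (mem_sdiff.1 h).1

include hcover hperfect hdeg hfold in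
lemma rowsum (a0 : A) :
    ∑ z ∈ L (Sum.inl a0), ∑ c : B → W,
      (∏ b, bwt L b (c b)) * qwt G H L a0 c z = 1 := by
  rw [Finset.sum_comm]
  have key : ∀ c : B → W,
      ∑ z ∈ L (Sum.inl a0), (∏ b, bwt L b (c b)) * qwt G H L a0 c z
        = ∏ b, bwt L b (c b) := by
    intro c
    by_cases hc : ∀ b, c b ∈ L (Sum.inr b)
    · rw [← Finset.mul_sum]
      have h1 : ∑ z ∈ L (Sum.inl a0), qwt G H L a0 c z = 1 := by
        rw [← qsum hperfect hdeg hfold hc (a := a0)]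
        apply Finset.sum_subset (subset_univ _)
        intro z _ hz
        exact qwt_eq_zero_of_not_mem hz
      rw [h1, mul_one]
    · rw [invalid_zero hc]
      simp
  rw [Finset.sum_congr rfl fun c _ => key c]
  exact csum hfold

include hcover hperfect hdeg hfold in
lemma marg_inl {a0 : A} {x : W} (hx : x ∈ L (Sum.inl a0)) :
    ∑ c : B → W, (∏ b, bwt L b (c b)) * qwt G H L a0 c x
      = ((ΔA : ℝ) + 1)⁻¹ := by
  have hrow := rowsum hcover hperfect hdeg hfold a0
  have hconst : ∀ z ∈ L (Sum.inl a0),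
      (∑ c : B → W, (∏ b, bwt L b (c b)) * qwt G H L a0 c z)
        = ∑ c : B → W, (∏ b, bwt L b (c b)) * qwt G H L a0 c x := by
    intro z hz
    exact swap_sum hcover hperfect hdeg hfold hz hx
  rw [Finset.sum_congr rfl hconst, Finset.sum_const, hfold, nsmul_eq_mul] at hrow
  have hne : ((ΔA : ℝ) + 1) ≠ 0 := by positivity
  have hcast : ((ΔA + 1 : ℕ) : ℝ) = (ΔA : ℝ) + 1 := by push_cast; ring
  rw [hcast] at hrow
  field_simp at hrow ⊢
  linarith [hrow]

include hcover hperfect hdeg hfold in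
lemma sum_wt_total : ∑ f : A ⊕ B → W, wt G H L f = 1 := by
  rw [← Equiv.sum_comp (Equiv.sumArrowEquivProdArrow A B W).symm (wt G H L)]
  rw [Fintype.sum_prod_type]
  have h0 : ∀ (d : A → W) (c : B → W),
      wt G H L ((Equiv.sumArrowEquivProdArrow A B W).symm (d, c))
        = (∏ b, bwt L b (c b)) * ∏ a, qwt G H L a c (d a) := fun d c => rfl
  rw [show (∑ d : A → W, ∑ c : B → W,
        wt G H L ((Equiv.sumArrowEquivProdArrow A B W).symm (d, c)))
      = ∑ d : A → W, ∑ c : B → W,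
        (∏ b, bwt L b (c b)) * ∏ a, qwt G H L a c (d a) from
    Finset.sum_congr rfl fun d _ => Finset.sum_congr rfl fun c _ => h0 d c]
  rw [Finset.sum_comm]
  have key : ∀ c : B → W,
      (∑ d : A → W, (∏ b, bwt L b (c b)) * ∏ a, qwt G H L a c (d a))
        = ∏ b, bwt L b (c b) := by
    intro c
    rw [← Finset.mul_sum]
    by_cases hc : ∀ b, c b ∈ L (Sum.inr b)
    · rw [inner_sum_plain hperfect hdeg hfold hc, mul_one]
    · rw [invalid_zero hc, zero_mul]
  rw [Finset.sum_congr rfl fun c _ => key c]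
  exact csum hfold

include hperfect hdeg hfold in
lemma inner_total (c : B → W) :
    ∑ d : A → W, (∏ b, bwt L b (c b)) * ∏ a, qwt G H L a c (d a)
      = ∏ b, bwt L b (c b) := by
  rw [← Finset.mul_sum]
  by_cases hc : ∀ b, c b ∈ L (Sum.inr b)
  · rw [inner_sum_plain hperfect hdeg hfold hc, mul_one]
  · rw [invalid_zero hc, zero_mul]

include hcover hperfect hdeg hfold in
lemma sum_wt_inr (b0 : B) {x : W} (hx : x ∈ L (Sum.inr b0)) :
    ∑ f : A ⊕ B → W, (if f (Sum.inr b0) = x then wt G H L f else 0)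
      = ((ΔA : ℝ) + 1)⁻¹ := by
  rw [← Equiv.sum_comp (Equiv.sumArrowEquivProdArrow A B W).symm
    (fun f => if f (Sum.inr b0) = x then wt G H L f else 0)]
  rw [Fintype.sum_prod_type]
  have h0 : ∀ (d : A → W) (c : B → W),
      (fun f => if f (Sum.inr b0) = x then wt G H L f else 0)
          ((Equiv.sumArrowEquivProdArrow A B W).symm (d, c))
        = if c b0 = x then
            (∏ b, bwt L b (c b)) * ∏ a, qwt G H L a c (d a) else 0 :=
    fun d c => rfl
  rw [Finset.sum_congr rfl fun d _ => Finset.sum_congr rfl fun c _ => h0 d c]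
  rw [Finset.sum_comm]
  have key : ∀ c : B → W,
      (∑ d : A → W, if c b0 = x then
          (∏ b, bwt L b (c b)) * ∏ a, qwt G H L a c (d a) else 0)
        = if c b0 = x then ∏ b, bwt L b (c b) else 0 := by
    intro c
    by_cases hcb : c b0 = x
    · simp only [if_pos hcb]
      exact inner_total hperfect hdeg hfold c
    · simp only [if_neg hcb, Finset.sum_const_zero]
  rw [Finset.sum_congr rfl fun c _ => key c]
  have hsplit : ∀ c : B → W,
      (if c b0 = x then ∏ b, bwt L b (c b) else 0)
        = ∏ b, (if b = b0 then (if c b = x then bwt L b (c b) else 0)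
            else bwt L b (c b)) := by
    intro c
    by_cases hcb : c b0 = x
    · rw [if_pos hcb]
      apply Finset.prod_congr rfl
      intro b _
      by_cases hbb : b = b0
      · subst hbb; rw [if_pos rfl, if_pos hcb]
      · rw [if_neg hbb]
    · rw [if_neg hcb]
      symm
      apply Finset.prod_eq_zero (mem_univ b0)
      rw [if_pos rfl, if_neg hcb]
  rw [Finset.sum_congr rfl fun c _ => hsplit c]
  rw [← Fintype.prod_sum (fun (b : B) (w : W) =>
    if b = b0 then (if w = x then bwt L b w else 0) else bwt L b w)]
  rw [Finset.prod_eq_single b0 ?_ ?_]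
  · simp only [if_pos rfl, if_true]
    rw [Finset.sum_ite_eq' univ x (bwt L b0), if_pos (mem_univ x), bwt,
      if_pos hx, hfold]
    push_cast
    ring
  · intro b _ hbb
    simp only [if_neg hbb]
    exact bsum hfold b
  · intro h
    exact absurd (mem_univ b0) h

include hcover hperfect hdeg hfold in
lemma sum_wt_inl (a0 : A) {x : W} (hx : x ∈ L (Sum.inl a0)) :
    ∑ f : A ⊕ B → W, (if f (Sum.inl a0) = x then wt G H L f else 0)
      = ((ΔA : ℝ) + 1)⁻¹ := by
  rw [← Equiv.sum_comp (Equiv.sumArrowEquivProdArrow A B W).symm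
    (fun f => if f (Sum.inl a0) = x then wt G H L f else 0)]
  rw [Fintype.sum_prod_type]
  have h0 : ∀ (d : A → W) (c : B → W),
      (fun f => if f (Sum.inl a0) = x then wt G H L f else 0)
          ((Equiv.sumArrowEquivProdArrow A B W).symm (d, c))
        = if d a0 = x then
            (∏ b, bwt L b (c b)) * ∏ a, qwt G H L a c (d a) else 0 :=
    fun d c => rfl
  rw [Finset.sum_congr rfl fun d _ => Finset.sum_congr rfl fun c _ => h0 d c]
  rw [Finset.sum_comm]
  have key : ∀ c : B → W,
      (∑ d : A → W, if d a0 = x then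
          (∏ b, bwt L b (c b)) * ∏ a, qwt G H L a c (d a) else 0)
        = (∏ b, bwt L b (c b)) * qwt G H L a0 c x := by
    intro c
    by_cases hc : ∀ b, c b ∈ L (Sum.inr b)
    · have hsplit : ∀ d : A → W,
          (if d a0 = x then
            (∏ b, bwt L b (c b)) * ∏ a, qwt G H L a c (d a) else 0)
          = (∏ b, bwt L b (c b)) *
              ∏ a, (if a = a0 then (if d a = x then qwt G H L a c (d a) else 0)
                else qwt G H L a c (d a)) := by
        intro d
        by_cases hd : d a0 = x
        · rw [if_pos hd]
          congr 1
          apply Finset.prod_congr rfl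
          intro a _
          by_cases haa : a = a0
          · subst haa; rw [if_pos rfl, if_pos hd]
          · rw [if_neg haa]
        · rw [if_neg hd]
          symm
          rw [mul_eq_zero]
          right
          apply Finset.prod_eq_zero (mem_univ a0)
          rw [if_pos rfl, if_neg hd]
      rw [Finset.sum_congr rfl fun d _ => hsplit d, ← Finset.mul_sum]
      congr 1
      rw [← Fintype.prod_sum (fun (a : A) (z : W) =>
        if a = a0 then (if z = x then qwt G H L a c z else 0) else qwt G H L a c z)]
      rw [Finset.prod_eq_single a0 ?_ ?_]
      · simp only [if_pos rfl, if_true]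
        rw [Finset.sum_ite_eq' univ x (qwt G H L a0 c), if_pos (mem_univ x)]
      · intro a _ haa
        simp only [if_neg haa]
        exact qsum hperfect hdeg hfold hc
      · intro h
        exact absurd (mem_univ a0) h
    · rw [invalid_zero hc]
      simp
  rw [Finset.sum_congr rfl fun c _ => key c]
  exact marg_inl hcover hperfect hdeg hfold hx

variable (G H L) in
lemma pd_def (S : Finset W) :
    pd G H L S = ∑ f : A ⊕ B → W, if S = univ.image f then wt G H L f else 0 := rfl

include hcover hperfect hdeg hfold in
lemma pd_total : ∑ S : Finset W, pd G H L S = 1 := by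
  simp only [pd_def]
  rw [Finset.sum_comm]
  have h1 : ∀ f : A ⊕ B → W,
      (∑ S : Finset W, if S = univ.image f then wt G H L f else 0)
        = wt G H L f := by
    intro f
    rw [Finset.sum_ite_eq' univ (univ.image f) (fun _ => wt G H L f),
      if_pos (mem_univ _)]
  rw [Finset.sum_congr rfl fun f _ => h1 f]
  exact sum_wt_total hcover hperfect hdeg hfold

lemma wt_mem {f : A ⊕ B → W} (h : wt G H L f ≠ 0) :
    (∀ a, f (Sum.inl a) ∈ avail G H L a (fun b => f (Sum.inr b))) ∧
      ∀ b, f (Sum.inr b) ∈ L (Sum.inr b) := by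
  rw [wt, mul_ne_zero_iff] at h
  refine ⟨?_, valid_of_ne_zero h.1⟩
  intro a
  have h2 := Finset.prod_ne_zero_iff.1 h.2 a (mem_univ a)
  rw [qwt] at h2
  by_contra hmem
  rw [if_neg hmem] at h2
  exact h2 rfl

lemma wt_mem_list {f : A ⊕ B → W} (h : wt G H L f ≠ 0) :
    ∀ v, f v ∈ L v := by
  intro v
  cases v with
  | inl a => exact (mem_sdiff.1 ((wt_mem h).1 a)).1
  | inr b => exact (wt_mem h).2 b

include hcover hperfect hdeg hfold in
lemma pd_marg (x : W) :
    ∑ S ∈ univ.filter (fun S : Finset W => x ∈ S), pd G H L S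
      = ((ΔA : ℝ) + 1)⁻¹ := by
  obtain ⟨v, hv, hvu⟩ := hcover.partition x
  rw [Finset.sum_filter]
  have h1 : ∀ S : Finset W, (if x ∈ S then pd G H L S else 0)
      = ∑ f : A ⊕ B → W,
          if x ∈ S then (if S = univ.image f then wt G H L f else 0) else 0 := by
    intro S
    by_cases hS : x ∈ S
    · rw [if_pos hS, pd_def]
      exact Finset.sum_congr rfl fun f _ => (if_pos hS).symm
    · rw [if_neg hS]
      symm
      apply Finset.sum_eq_zero
      intro f _
      rw [if_neg hS]
  rw [Finset.sum_congr rfl fun S _ => h1 S, Finset.sum_comm]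
  have h2 : ∀ f : A ⊕ B → W,
      (∑ S : Finset W,
          if x ∈ S then (if S = univ.image f then wt G H L f else 0) else 0)
        = if x ∈ univ.image f then wt G H L f else 0 := by
    intro f
    have h2a : ∀ S : Finset W,
        (if x ∈ S then (if S = univ.image f then wt G H L f else 0) else 0)
          = if S = univ.image f then
              (if x ∈ univ.image f then wt G H L f else 0) else 0 := by
      intro S
      by_cases hSf : S = univ.image f
      · subst hSf; simp
      · simp [hSf]
    rw [Finset.sum_congr rfl fun S _ => h2a S]
    rw [Finset.sum_ite_eq' univ (univ.image f)
      (fun _ => if x ∈ univ.image f then wt G H L f else 0), if_pos (mem_univ _)]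
  rw [Finset.sum_congr rfl fun f _ => h2 f]
  have h3 : ∀ f : A ⊕ B → W, (if x ∈ univ.image f then wt G H L f else 0)
      = if f v = x then wt G H L f else 0 := by
    intro f
    by_cases hw : wt G H L f = 0
    · rw [hw]; simp
    · have hmem := wt_mem_list hw
      by_cases hxf : x ∈ univ.image f
      · rw [if_pos hxf]
        obtain ⟨u, _, hu⟩ := mem_image.1 hxf
        have huv : u = v := hvu u (hu ▸ hmem u)
        rw [if_pos (huv ▸ hu)]
      · rw [if_neg hxf, if_neg]
        intro hfv
        exact hxf (mem_image.2 ⟨v, mem_univ v, hfv⟩)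
  rw [Finset.sum_congr rfl fun f _ => h3 f]
  cases v with
  | inl a0 => exact sum_wt_inl hcover hperfect hdeg hfold a0 hv
  | inr b0 => exact sum_wt_inr hcover hperfect hdeg hfold b0 hv

include hcover hperfect in
lemma pd_support (hbipA : ∀ a a' : A, ¬ G.Adj (Sum.inl a) (Sum.inl a'))
    (hbipB : ∀ b b' : B, ¬ G.Adj (Sum.inr b) (Sum.inr b'))
    {S : Finset W} (h : pd G H L S ≠ 0) :
    (∀ x ∈ S, ∀ y ∈ S, ¬ H.Adj x y) ∧ ∀ v : A ⊕ B, (S ∩ L v).card = 1 := by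
  rw [pd_def] at h
  obtain ⟨f, _, hf⟩ := Finset.exists_ne_zero_of_sum_ne_zero h
  have hS : S = univ.image f := by
    by_contra hne
    rw [if_neg hne] at hf
    exact hf rfl
  rw [if_pos hS] at hf
  have hmemA := (wt_mem hf).1
  have hmemB := (wt_mem hf).2
  have hmem := wt_mem_list hf
  subst hS
  constructor
  · rintro x hx y hy hadj
    obtain ⟨u, _, rfl⟩ := mem_image.1 hx
    obtain ⟨u', _, rfl⟩ := mem_image.1 hy
    have hne : u ≠ u' := by
      rintro rfl
      exact hadj.ne rfl
    by_cases hG : G.Adj u u'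
    · cases u with
      | inl a =>
        cases u' with
        | inl a' => exact hbipA a a' hG
        | inr b =>
          have hfa := hmemA a
          rw [avail, mem_sdiff] at hfa
          apply hfa.2
          have heq : f (Sum.inl a) = mfun H L a (f (Sum.inr b)) :=
            mfun_unique hcover hperfect hG (hmemB b) hfa.1 hadj.symm
          rw [Fset, mem_image]
          refine ⟨b, ?_, heq.symm⟩
          rw [nbrs, mem_filter]
          exact ⟨mem_univ b, hG⟩
      | inr b =>
        cases u' with
        | inr b' => exact hbipB b b' hG
        | inl a =>
          have hfa := hmemA a
          rw [avail, mem_sdiff] at hfa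
          apply hfa.2
          have heq : f (Sum.inl a) = mfun H L a (f (Sum.inr b)) :=
            mfun_unique hcover hperfect hG.symm (hmemB b) hfa.1 hadj
          rw [Fset, mem_image]
          refine ⟨b, ?_, heq.symm⟩
          rw [nbrs, mem_filter]
          exact ⟨mem_univ b, hG.symm⟩
    · exact hcover.nonadj u u' hne hG (f u) (hmem u) (f u') (hmem u') hadj
  · intro v
    have hset : univ.image f ∩ L v = {f v} := by
      ext z
      rw [mem_inter, mem_singleton]
      constructor
      · rintro ⟨hz1, hz2⟩
        obtain ⟨u, _, rfl⟩ := mem_image.1 hz1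
        have huv : u = v := (hcover.partition (f u)).unique (hmem u) hz2
        rw [huv]
      · rintro rfl
        exact ⟨mem_image.2 ⟨v, mem_univ v, rfl⟩, hmem v⟩
    rw [hset, card_singleton]

end assemble

end Aux

/-- Bipartite fractional packing: let `G` be bipartite on `A ⊕ B` with every vertex
of `A` of degree at most `ΔA`, and let `(L,H)` be a `(ΔA+1)`-fold correspondence-cover
of `G` whose matchings between lists of adjacent vertices are perfect. Then there is a
probability distribution on independent sets of `H` meeting every list exactly once,
such that every vertex of `H` is covered with probability exactly `1/(ΔA+1)`.
Consequently `χ_f(H) ≤ ΔA + 1`. -/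
theorem stmt17 {A B W : Type*} [Fintype A] [Fintype B] [Fintype W]
    [DecidableEq A] [DecidableEq B] [DecidableEq W]
    (G : SimpleGraph (A ⊕ B)) [DecidableRel G.Adj]
    (hbipA : ∀ a a' : A, ¬ G.Adj (Sum.inl a) (Sum.inl a'))
    (hbipB : ∀ b b' : B, ¬ G.Adj (Sum.inr b) (Sum.inr b'))
    (ΔA : ℕ) (hdeg : ∀ a : A, G.degree (Sum.inl a) ≤ ΔA)
    (H : SimpleGraph W) (L : A ⊕ B → Finset W) (hcover : CorrCover G H L)
    (hfold : ∀ v : A ⊕ B, (L v).card = ΔA + 1)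
    (hperfect : ∀ u v : A ⊕ B, G.Adj u v → ∀ x ∈ L u, ∃ y ∈ L v, H.Adj x y) :
    ∃ p : Finset W → ℝ,
      (∀ S : Finset W, 0 ≤ p S) ∧ (∑ S : Finset W, p S = 1) ∧
      (∀ S : Finset W, 0 < p S →
        (∀ x ∈ S, ∀ y ∈ S, ¬ H.Adj x y) ∧ ∀ v : A ⊕ B, (S ∩ L v).card = 1) ∧
      (∀ x : W, ∑ S ∈ univ.filter (fun S : Finset W => x ∈ S), p S
        = 1 / ((ΔA : ℝ) + 1)) := by
  refine ⟨pd G H L, fun S => pd_nonneg S,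
    pd_total hcover hperfect hdeg hfold, ?_, ?_⟩
  · intro S hS
    exact pd_support hcover hperfect hbipA hbipB hS.ne'
  · intro x
    rw [one_div]
    exact pd_marg hcover hperfect hdeg hfold x
end

section
/- Let n ≥ 2 and consider the rook's graph Kₙ □ Kₙ on vertex set [n]×[n] (two cells adjacent iff they share a row or column) with the list-assignment L given by L((1,i)) = [n+1]\{1} for all i ∈ [n], L((j,1)) = [n+1]\{2} for all 2 ≤ j ≤ n, and L((j,i)) = [n] for all 2 ≤ i,j ≤ n. Then there is no proper L-colouring c with c((1,1)) = n+1. -/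
/-- Adjacency in the rook's graph \`Kₙ □ Kₙ\` on \`Fin n × Fin n\`: distinct cells
sharing a row or a column. -/
def rookAdj (n : ℕ) (u v : Fin n × Fin n) : Prop :=
  u ≠ v ∧ (u.1 = v.1 ∨ u.2 = v.2)

/-- The list-assignment on \`Kₙ □ Kₙ\` (with \`[k] = {1,…,k}\` and index \`0\` playing the
role of \`1\`): \`L((1,i)) = [n+1] \ {1}\`, \`L((j,1)) = [n+1] \ {2}\` for \`j ≥ 2\`, and
\`L((j,i)) = [n]\` otherwise. -/
def rookList (n : ℕ) (v : Fin n × Fin n) : Finset ℕ :=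
  if v.1.val = 0 then (Finset.Icc 1 (n + 1)).erase 1
  else if v.2.val = 0 then (Finset.Icc 1 (n + 1)).erase 2
  else Finset.Icc 1 n

/-- For `n ≥ 2`, there is no proper `L`-colouring `c` of the rook'\''s graph
`Kₙ □ Kₙ` with the above lists such that the corner cell `(1,1)` gets colour `n+1`. -/
theorem stmt18 (n : ℕ) (hn : 2 ≤ n) :
    ¬ ∃ c : Fin n × Fin n → ℕ,
      (∀ v : Fin n × Fin n, c v ∈ rookList n v) ∧
      (∀ u v : Fin n × Fin n, rookAdj n u v → c u ≠ c v) ∧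
      (∀ v : Fin n × Fin n, v.1.val = 0 → v.2.val = 0 → c v = n + 1) := by
  rintro ⟨c, hmem, hadj, hcorner⟩
  have hn0 : 0 < n := by omega
  set z : Fin n := ⟨0, hn0⟩ with hz
  have hzval : (z : Fin n).val = 0 := rfl
  have hc00 : c (z, z) = n + 1 := hcorner (z, z) rfl rfl
  have hne : ∀ u v : Fin n × Fin n, u ≠ v → (u.1 = v.1 ∨ u.2 = v.2) → c u ≠ c v :=
    fun u v h1 h2 => hadj u v ⟨h1, h2⟩
  -- colours of row-0 cells other than the corner lie in Icc 2 n
  have hrowmem : ∀ i : Fin n, i ≠ z → c (z, i) ∈ Finset.Icc 2 n := by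
    intro i hi
    have h1 := hmem (z, i)
    rw [rookList] at h1
    simp only [hzval, if_true] at h1
    rw [Finset.mem_erase, Finset.mem_Icc] at h1
    have h2 : c (z, i) ≠ n + 1 := by
      have := hne (z, i) (z, z) (by simp [hi]) (Or.inl rfl)
      rw [hc00] at this; exact this
    rw [Finset.mem_Icc]
    omega
  -- colours of column-0 cells other than the corner lie in (Icc 1 n).erase 2
  have hcolmem : ∀ j : Fin n, j ≠ z → c (j, z) ∈ (Finset.Icc 1 n).erase 2 := by
    intro j hj
    have h1 := hmem (j, z)
    rw [rookList] at h1
    have hjval : (j : Fin n).val ≠ 0 := by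
      intro h; exact hj (Fin.ext h)
    simp only [if_neg hjval, hzval, if_true] at h1
    rw [Finset.mem_erase, Finset.mem_Icc] at h1
    have h2 : c (j, z) ≠ n + 1 := by
      have := hne (j, z) (z, z) (by simp [hj]) (Or.inr rfl)
      rw [hc00] at this; exact this
    rw [Finset.mem_erase, Finset.mem_Icc]
    omega
  -- every colour in `Icc 2 n` appears on row 0
  have hrow : ∀ k, 2 ≤ k → k ≤ n → ∃ i : Fin n, i ≠ z ∧ c (z, i) = k := by
    intro k hk2 hkn
    have himg : (Finset.univ.erase z).image (fun i => c (z, i)) = Finset.Icc 2 n := by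
      apply Finset.eq_of_subset_of_card_le
      · intro x hx
        simp only [Finset.mem_image, Finset.mem_erase] at hx
        obtain ⟨i, ⟨hi, _⟩, rfl⟩ := hx
        exact hrowmem i hi
      · rw [Finset.card_image_of_injOn, Finset.card_erase_of_mem (Finset.mem_univ z),
          Finset.card_univ, Fintype.card_fin, Nat.card_Icc]
        · omega
        · intro a ha b hb hab
          by_contra h
          exact hne (z, a) (z, b) (by simp [h]) (Or.inl rfl) hab
    have hk : k ∈ (Finset.univ.erase z).image (fun i => c (z, i)) := by
      rw [himg]; exact Finset.mem_Icc.mpr ⟨hk2, hkn⟩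
    simp only [Finset.mem_image, Finset.mem_erase] at hk
    obtain ⟨i, ⟨hi, _⟩, hci⟩ := hk
    exact ⟨i, hi, hci⟩
  -- colour 1 appears on column 0
  have hcol1 : ∃ j : Fin n, j ≠ z ∧ c (j, z) = 1 := by
    have himg : (Finset.univ.erase z).image (fun j => c (j, z)) =
        (Finset.Icc 1 n).erase 2 := by
      apply Finset.eq_of_subset_of_card_le
      · intro x hx
        simp only [Finset.mem_image, Finset.mem_erase] at hx
        obtain ⟨j, ⟨hj, _⟩, rfl⟩ := hx
        exact hcolmem j hj
      · rw [Finset.card_image_of_injOn, Finset.card_erase_of_mem (Finset.mem_univ z),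
          Finset.card_univ, Fintype.card_fin,
          Finset.card_erase_of_mem (Finset.mem_Icc.mpr ⟨by omega, by omega⟩), Nat.card_Icc]
        · omega
        · intro a ha b hb hab
          by_contra h
          exact hne (a, z) (b, z) (by simp [h]) (Or.inr rfl) hab
    have h1 : (1 : ℕ) ∈ (Finset.univ.erase z).image (fun j => c (j, z)) := by
      rw [himg, Finset.mem_erase, Finset.mem_Icc]
      omega
    simp only [Finset.mem_image, Finset.mem_erase] at h1
    obtain ⟨j, ⟨hj, _⟩, hcj⟩ := h1
    exact ⟨j, hj, hcj⟩
  -- the subgrid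
  set S : Finset (Fin n × Fin n) := (Finset.univ.erase z) ×ˢ (Finset.univ.erase z) with hS
  have hSmem : ∀ v : Fin n × Fin n, v ∈ S ↔ v.1 ≠ z ∧ v.2 ≠ z := by
    intro v
    simp [hS, Finset.mem_product]
  have hSlist : ∀ v ∈ S, c v ∈ Finset.Icc 1 n := by
    intro v hv
    rw [hSmem] at hv
    have h1 := hmem v
    rw [rookList] at h1
    have h1v : v.1.val ≠ 0 := fun h => hv.1 (Fin.ext h)
    have h2v : v.2.val ≠ 0 := fun h => hv.2 (Fin.ext h)
    simpa only [if_neg h1v, if_neg h2v] using h1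
  have hScard : S.card = (n - 1) * (n - 1) := by
    rw [hS, Finset.card_product, Finset.card_erase_of_mem (Finset.mem_univ z),
      Finset.card_univ, Fintype.card_fin]
  have hsum : S.card = ∑ k ∈ Finset.Icc 1 n, (S.filter fun v => c v = k).card :=
    Finset.card_eq_sum_card_fiberwise hSlist
  -- each fibre has at most n - 2 elements
  have hfiber : ∀ k ∈ Finset.Icc 1 n, (S.filter fun v => c v = k).card ≤ n - 2 := by
    intro k hk
    rw [Finset.mem_Icc] at hk
    rcases Nat.lt_or_ge k 2 with h2 | h2
    · -- k = 1 : use the appearance of 1 in column 0, map by fst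
      have hk1 : k = 1 := by omega
      subst hk1
      obtain ⟨j0, hj0, hcj0⟩ := hcol1
      have hle : (S.filter fun v => c v = 1).card ≤
          ((Finset.univ.erase z).erase j0).card := by
        apply Finset.card_le_card_of_injOn Prod.fst
        · intro v hv
          rw [Finset.mem_coe, Finset.mem_filter] at hv
          obtain ⟨hvS, hck⟩ := hv
          rw [hSmem] at hvS
          refine Finset.mem_erase.mpr ⟨?_, Finset.mem_erase.mpr ⟨hvS.1, Finset.mem_univ _⟩⟩
          intro hcontra
          have hvne : v ≠ (j0, z) := by
            intro h; exact hvS.2 (by rw [h])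
          exact hne v (j0, z) hvne (Or.inl hcontra) (by rw [hck, hcj0])
        · intro u hu v hv huv
          simp only [Finset.mem_coe, Finset.mem_filter] at hu hv
          by_contra h
          exact hne u v h (Or.inl huv) (by rw [hu.2, hv.2])
      rw [Finset.card_erase_of_mem (Finset.mem_erase.mpr ⟨hj0, Finset.mem_univ _⟩),
        Finset.card_erase_of_mem (Finset.mem_univ z), Finset.card_univ,
        Fintype.card_fin] at hle
      omega
    · -- k ≥ 2 : use the appearance of k in row 0, map by snd
      obtain ⟨i0, hi0, hci0⟩ := hrow k h2 hk.2
      have hle : (S.filter fun v => c v = k).card ≤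
          ((Finset.univ.erase z).erase i0).card := by
        apply Finset.card_le_card_of_injOn Prod.snd
        · intro v hv
          rw [Finset.mem_coe, Finset.mem_filter] at hv
          obtain ⟨hvS, hck⟩ := hv
          rw [hSmem] at hvS
          refine Finset.mem_erase.mpr ⟨?_, Finset.mem_erase.mpr ⟨hvS.2, Finset.mem_univ _⟩⟩
          intro hcontra
          have hvne : v ≠ (z, i0) := by
            intro h; exact hvS.1 (by rw [h])
          exact hne v (z, i0) hvne (Or.inr hcontra) (by rw [hck, hci0])
        · intro u hu v hv huv
          simp only [Finset.mem_coe, Finset.mem_filter] at hu hv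
          by_contra h
          exact hne u v h (Or.inr huv) (by rw [hu.2, hv.2])
      rw [Finset.card_erase_of_mem (Finset.mem_erase.mpr ⟨hi0, Finset.mem_univ _⟩),
        Finset.card_erase_of_mem (Finset.mem_univ z), Finset.card_univ,
        Fintype.card_fin] at hle
      omega
  -- counting contradiction
  have htot : S.card ≤ n * (n - 2) := by
    calc S.card = ∑ k ∈ Finset.Icc 1 n, (S.filter fun v => c v = k).card := hsum
    _ ≤ ∑ k ∈ Finset.Icc 1 n, (n - 2) := Finset.sum_le_sum hfiber
    _ = n * (n - 2) := by
      have e : n + 1 - 1 = n := by omega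
      rw [Finset.sum_const, Nat.card_Icc, smul_eq_mul, e]
  rw [hScard] at htot
  obtain ⟨a, rfl⟩ : ∃ a, n = a + 2 := ⟨n - 2, by omega⟩
  have e1 : a + 2 - 1 = a + 1 := by omega
  have e2 : a + 2 - 2 = a := by omega
  rw [e1, e2] at htot
  nlinarith [htot]
end

section
/- For every n ≥ 1, the inequality (n−1)² > n(n−2) holds; more generally, for the rook's graph Kₙ □ Kₙ with the list-assignment L described (L((1,i)) = [n+1]\{1}, L((j,1)) = [n+1]\{2} for j ≥ 2, L((j,i)) = [n] otherwise), the graph Kₙ □ Kₙ does not admit an L-packing of size n, so its list packing number strictly exceeds n. -/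
/-- An injective map from `Fin n` into a finset of card `n` is surjective onto it. -/
lemma rook_surj_helper {n : ℕ} (g : Fin n → ℕ) (S : Finset ℕ)
    (hinj : Function.Injective g) (hmem : ∀ i, g i ∈ S) (hcard : S.card = n) :
    ∀ x ∈ S, ∃ i, g i = x := by
  intro x hx
  have h1 : Finset.univ.image g ⊆ S := by
    intro y hy
    obtain ⟨i, -, rfl⟩ := Finset.mem_image.mp hy
    exact hmem i
  have h2 : (Finset.univ.image g).card = n := by
    rw [Finset.card_image_of_injective _ hinj, Finset.card_univ, Fintype.card_fin]
  have heq := Finset.eq_of_subset_of_card_le h1 (by rw [h2, hcard])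
  rw [← heq] at hx
  obtain ⟨i, -, hi⟩ := Finset.mem_image.mp hx
  exact ⟨i, hi⟩

/-- For every `n ≥ 1` we have `(n-1)² > n(n-2)`; and (for `n ≥ 2`) the rook'\''s graph
`Kₙ □ Kₙ` with the list-assignment `rookList n` admits no `L`-packing of size `n`
(`n` pairwise-disjoint proper `L`-colourings), so its list packing number exceeds `n`. -/
theorem stmt19 (n : ℕ) (hn : 1 ≤ n) :
    ((n : ℤ) - 1) ^ 2 > (n : ℤ) * ((n : ℤ) - 2) ∧
    (2 ≤ n → ¬ ∃ c : Fin n → (Fin n × Fin n) → ℕ,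
      (∀ i : Fin n, (∀ v : Fin n × Fin n, c i v ∈ rookList n v) ∧
        ∀ u v : Fin n × Fin n, rookAdj n u v → c i u ≠ c i v) ∧
      ∀ i j : Fin n, i ≠ j → ∀ v : Fin n × Fin n, c i v ≠ c j v) := by
  constructor
  · nlinarith [sq_nonneg ((n : ℤ) - 1)]
  rintro hn2 ⟨c, hprop, hdisj⟩
  have h0 : (0 : ℕ) < n := by omega
  set z : Fin n := ⟨0, h0⟩ with hz
  set v0 : Fin n × Fin n := (z, z) with hv0
  have hL0 : rookList n v0 = (Finset.Icc 1 (n + 1)).erase 1 := by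
    simp [rookList, v0, z]
  have hcardL0 : (rookList n v0).card = n := by
    rw [hL0, Finset.card_erase_of_mem (by simp), Nat.card_Icc]; omega
  have hinj0 : Function.Injective (fun i => c i v0) := by
    intro i j h
    by_contra hne
    exact hdisj i j hne v0 h
  obtain ⟨i0, hi0⟩ := rook_surj_helper _ _ hinj0 (fun i => (hprop i).1 v0) hcardL0 (n + 1)
    (by rw [hL0]; simp [Finset.mem_erase]; omega)
  set f : Fin n × Fin n → ℕ := c i0 with hf
  have hfl : ∀ v, f v ∈ rookList n v := (hprop i0).1
  have hfp : ∀ u v, rookAdj n u v → f u ≠ f v := (hprop i0).2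
  have hfv0 : f v0 = n + 1 := hi0
  -- every row contains colour 2
  have hrow2 : ∀ j : Fin n, ∃ i : Fin n, f (j, i) = 2 := by
    intro j
    have hinjr : Function.Injective (fun i : Fin n => f (j, i)) := by
      intro a b h
      by_contra hab
      exact hfp (j, a) (j, b)
        ⟨fun h' => hab (congrArg Prod.snd h'), Or.inl rfl⟩ h
    by_cases hj : j.val = 0
    · refine rook_surj_helper _ ((Finset.Icc 1 (n + 1)).erase 1) hinjr (fun i => ?_) ?_ 2 ?_
      · have := hfl (j, i)
        rwa [rookList, if_pos hj] at this
      · rw [Finset.card_erase_of_mem (by simp), Nat.card_Icc]; omega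
      · simp [Finset.mem_erase]; omega
    · refine rook_surj_helper _ (Finset.Icc 1 n) hinjr (fun i => ?_) ?_ 2 ?_
      · by_cases hi : i.val = 0
        · have hmem := hfl (j, i)
          rw [rookList, if_neg hj, if_pos hi] at hmem
          have hne : f (j, i) ≠ n + 1 := by
            have hadj : rookAdj n (j, i) v0 := by
              refine ⟨?_, Or.inr (by exact Fin.ext hi)⟩
              intro h'
              exact hj (by simpa using congrArg (fun p => (Prod.fst p).val) h')
            have := hfp _ _ hadj
            rwa [hfv0] at this
          have h2 := Finset.mem_of_mem_erase hmem
          rw [Finset.mem_Icc] at h2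
          rw [Finset.mem_Icc]
          omega
        · have hmem := hfl (j, i)
          rwa [rookList, if_neg hj, if_neg hi] at hmem
      · rw [Nat.card_Icc]; omega
      · rw [Finset.mem_Icc]; omega
  choose φ hφ using hrow2
  have hφinj : Function.Injective φ := by
    intro j j' h
    by_contra hne
    exact hfp (j, φ j) (j', φ j')
      ⟨fun h' => hne (congrArg Prod.fst h'), Or.inr h⟩ ((hφ j).trans (hφ j').symm)
  have hφne : ∀ j, φ j ≠ z := by
    intro j h
    have h2 := hφ j
    rw [h] at h2
    by_cases hj : j.val = 0
    · have hjz : j = z := Fin.ext hj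
      rw [hjz] at h2
      have : f v0 = 2 := h2
      omega
    · have hmem := hfl (j, z)
      rw [rookList, if_neg hj, if_pos rfl] at hmem
      exact (Finset.notMem_erase 2 _) (h2 ▸ hmem)
  have himg : Finset.univ.image φ ⊆ Finset.univ.erase z := by
    intro y hy
    obtain ⟨j, -, rfl⟩ := Finset.mem_image.mp hy
    exact Finset.mem_erase.mpr ⟨hφne j, Finset.mem_univ _⟩
  have hle := Finset.card_le_card himg
  rw [Finset.card_image_of_injective _ hφinj, Finset.card_univ, Fintype.card_fin,
    Finset.card_erase_of_mem (Finset.mem_univ z), Finset.card_univ, Fintype.card_fin] at hle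
  omega
end
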